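/- arXiv:2005.13758 — 6 statements merged into one kernel-verified Lean document; each statement's English description precedes it below -/
import Mathlib

section
/- Let 0 < α < β and p ∈ [1,∞). Then for every x ∈ E one has (∫_E r_α(x,y)^p μ(dy))^{1/p} ≤ (β/α) · sup_{z∈E} (∫_E r_β(z,y)^p μ(dy))^{1/p}. -/
open MeasureTheory ENNReal Set Filter

/-- The α-order heatResolvent kernel of a heat kernel `P`. -/
noncomputable def heatResolvent {E : Type*} [MeasurableSpace E]
    (P : ℝ → E → E → ℝ≥0∞) (α : ℝ) (x y : E) : ℝ≥0∞ :=
  ∫⁻ t in Set.Ioi (0:ℝ), ENNReal.ofReal (Real.exp (-(α * t))) * P t x y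

lemma iSup_rpow_aux {ι : Sort*} [Nonempty ι] (f : ι → ℝ≥0∞) {p : ℝ} (hp : 0 < p) :
    (⨆ i, f i) ^ p = ⨆ i, f i ^ p := by
  have h := OrderIso.map_iSup (ENNReal.orderIsoRpow p hp) f
  simp only [ENNReal.orderIsoRpow_apply] at h
  exact h


lemma lp_norm_tsum_le {E : Type*} [MeasurableSpace E] {μ : Measure E} {p : ℝ} (hp : 1 ≤ p) (f : ℕ → E → ℝ≥0∞)
    (hf : ∀ n, Measurable (f n)) :
    (∫⁻ y, (∑' n, f n y) ^ p ∂μ) ^ (1/p) ≤ ∑' n, (∫⁻ y, f n y ^ p ∂μ) ^ (1/p) := by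
  have hp0 : 0 < p := lt_of_lt_of_le one_pos hp
  have hFmeas : ∀ N, Measurable (fun y => ∑ n ∈ Finset.range N, f n y) := fun N =>
    Finset.measurable_sum _ (fun n _ => hf n)
  -- finite Minkowski
  have hfin : ∀ N : ℕ, (∫⁻ y, (∑ n ∈ Finset.range N, f n y) ^ p ∂μ) ^ (1/p)
      ≤ ∑ n ∈ Finset.range N, (∫⁻ y, f n y ^ p ∂μ) ^ (1/p) := by
    intro N
    induction N with
    | zero =>
      simp only [Finset.range_zero, Finset.sum_empty]
      rw [ENNReal.zero_rpow_of_pos hp0, lintegral_zero,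
        ENNReal.zero_rpow_of_pos (by positivity : (0:ℝ) < 1/p)]
    | succ N ih =>
      simp only [Finset.sum_range_succ]
      calc (∫⁻ y, ((∑ n ∈ Finset.range N, f n y) + f N y) ^ p ∂μ) ^ (1/p)
          ≤ (∫⁻ y, (∑ n ∈ Finset.range N, f n y) ^ p ∂μ) ^ (1/p)
            + (∫⁻ y, f N y ^ p ∂μ) ^ (1/p) :=
            ENNReal.lintegral_Lp_add_le (hFmeas N).aemeasurable (hf N).aemeasurable hp
        _ ≤ _ := add_le_add ih le_rfl
  -- pass to the limit
  have hmono : Monotone (fun N => fun y => ∑ n ∈ Finset.range N, f n y) := by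
    intro a b hab y
    exact Finset.sum_le_sum_of_subset (Finset.range_subset_range.2 hab)
  have h1 : ∀ y, (∑' n, f n y) = ⨆ N, ∑ n ∈ Finset.range N, f n y := fun y =>
    ENNReal.tsum_eq_iSup_nat
  calc (∫⁻ y, (∑' n, f n y) ^ p ∂μ) ^ (1/p)
      = (∫⁻ y, ⨆ N, (∑ n ∈ Finset.range N, f n y) ^ p ∂μ) ^ (1/p) := by
        congr 1; apply lintegral_congr fun y => ?_
        rw [h1 y, iSup_rpow_aux _ hp0]
    _ = (⨆ N, ∫⁻ y, (∑ n ∈ Finset.range N, f n y) ^ p ∂μ) ^ (1/p) := by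
        rw [lintegral_iSup (fun N => (hFmeas N).pow_const p)
          (fun a b hab y => ENNReal.rpow_le_rpow (hmono hab y) hp0.le)]
    _ = ⨆ N, (∫⁻ y, (∑ n ∈ Finset.range N, f n y) ^ p ∂μ) ^ (1/p) := by
        rw [iSup_rpow_aux _ (by positivity : (0:ℝ) < 1/p)]
    _ ≤ ∑' n, (∫⁻ y, f n y ^ p ∂μ) ^ (1/p) := by
        refine iSup_le fun N => (hfin N).trans ?_
        exact ENNReal.sum_le_tsum _

lemma lp_norm_const_mul {E : Type*} [MeasurableSpace E] {μ : Measure E} {p : ℝ} (hp0 : 0 < p)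
    (c : ℝ≥0∞) (g : E → ℝ≥0∞) (hg : Measurable g) :
    (∫⁻ y, (c * g y) ^ p ∂μ) ^ (1/p) = c * (∫⁻ y, g y ^ p ∂μ) ^ (1/p) := by
  simp_rw [ENNReal.mul_rpow_of_nonneg _ _ hp0.le]
  rw [lintegral_const_mul _ (hg.pow_const p),
    ENNReal.mul_rpow_of_nonneg _ _ (by positivity : (0:ℝ) ≤ 1/p),
    ← ENNReal.rpow_mul, mul_one_div_cancel hp0.ne', ENNReal.rpow_one]

lemma jensen_mul {Ω : Type*} [MeasurableSpace Ω] (ν : Measure Ω) {p : ℝ} (hp : 1 ≤ p)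
    {W g : Ω → ℝ≥0∞} (hW : Measurable W) (hg : Measurable g) :
    (∫⁻ ω, W ω * g ω ∂ν) ^ p ≤ (∫⁻ ω, W ω ∂ν) ^ (p - 1) * ∫⁻ ω, W ω * g ω ^ p ∂ν := by
  rcases eq_or_lt_of_le hp with h1 | h1
  · simp only [← h1, ENNReal.rpow_one, sub_self, ENNReal.rpow_zero, one_mul, le_refl]
  · have hp0 : 0 < p := lt_trans one_pos h1
    have hpq := Real.HolderConjugate.conjExponent h1
    set q := Real.conjExponent p with hq
    have hq0 : 0 < q := hpq.symm.pos
    have hiq : 1/p + 1/q = 1 := by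
      have := hpq.inv_add_inv_eq_one
      simpa [one_div] using this
    have key := ENNReal.lintegral_mul_le_Lp_mul_Lq ν hpq
      (f := fun ω => W ω ^ (1/p) * g ω) (g := fun ω => W ω ^ (1/q))
      ((hW.pow_const _).mul hg).aemeasurable (hW.pow_const _).aemeasurable
    have e1 : ∀ ω, ((fun ω => W ω ^ (1/p) * g ω) * fun ω => W ω ^ (1/q)) ω = W ω * g ω := by
      intro ω
      simp only [Pi.mul_apply]
      rw [mul_right_comm, ← ENNReal.rpow_add_of_nonneg _ _ (by positivity) (by positivity), hiq,
        ENNReal.rpow_one]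
    have e2 : ∀ ω, (W ω ^ (1/p) * g ω) ^ p = W ω * g ω ^ p := by
      intro ω
      rw [ENNReal.mul_rpow_of_nonneg _ _ hp0.le, ← ENNReal.rpow_mul,
        one_div_mul_cancel hp0.ne', ENNReal.rpow_one]
    have e3 : ∀ ω, (W ω ^ (1/q)) ^ q = W ω := by
      intro ω
      rw [← ENNReal.rpow_mul, one_div_mul_cancel hq0.ne', ENNReal.rpow_one]
    simp only [e1, e2, e3] at key
    -- key : ∫⁻ W g ≤ (∫⁻ W g^p)^(1/p) * (∫⁻ W)^(1/q)
    calc (∫⁻ ω, W ω * g ω ∂ν) ^ p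
        ≤ ((∫⁻ ω, W ω * g ω ^ p ∂ν) ^ (1/p) * (∫⁻ ω, W ω ∂ν) ^ (1/q)) ^ p :=
          ENNReal.rpow_le_rpow key hp0.le
      _ = (∫⁻ ω, W ω ∂ν) ^ (p - 1) * ∫⁻ ω, W ω * g ω ^ p ∂ν := by
          rw [ENNReal.mul_rpow_of_nonneg _ _ hp0.le, ← ENNReal.rpow_mul, ← ENNReal.rpow_mul,
            one_div_mul_cancel hp0.ne', ENNReal.rpow_one]
          have : 1/q * p = p - 1 := by
            have h2 : 1/q = 1 - 1/p := by linarith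
            rw [h2, sub_mul, one_div_mul_cancel hp0.ne', one_mul]
          rw [this, mul_comm]

lemma kernel_Lp_bound {E Ω : Type*} [MeasurableSpace E] [MeasurableSpace Ω] (ν : Measure Ω) [SFinite ν]
    {μ : Measure E} [SFinite μ] {p : ℝ} (hp : 1 ≤ p)
    {W : Ω → ℝ≥0∞} {K : Ω → E → ℝ≥0∞} (hW : Measurable W)
    (hK : Measurable (Function.uncurry K)) {Sp C : ℝ≥0∞}
    (hKS : ∀ ω, ∫⁻ y, K ω y ^ p ∂μ ≤ Sp) (hWC : ∫⁻ ω, W ω ∂ν ≤ C) :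
    (∫⁻ y, (∫⁻ ω, W ω * K ω y ∂ν) ^ p ∂μ) ^ (1/p) ≤ C * Sp ^ (1/p) := by
  have hp0 : 0 < p := lt_of_lt_of_le one_pos hp
  have hKy : ∀ y, Measurable fun ω => K ω y := fun y =>
    hK.comp (measurable_id.prodMk measurable_const)
  have hKω : ∀ ω, Measurable (K ω) := fun ω =>
    hK.comp (measurable_const.prodMk measurable_id)
  have hswap : Measurable (Function.uncurry fun (y : E) (ω : Ω) => W ω * K ω y ^ p) := by
    apply Measurable.mul
    · exact hW.comp measurable_snd
    · exact ((hK.comp measurable_swap).pow_const p)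
  have step1 : ∫⁻ y, (∫⁻ ω, W ω * K ω y ∂ν) ^ p ∂μ
      ≤ (∫⁻ ω, W ω ∂ν) ^ (p - 1) * ∫⁻ ω, W ω * (∫⁻ y, K ω y ^ p ∂μ) ∂ν := by
    calc ∫⁻ y, (∫⁻ ω, W ω * K ω y ∂ν) ^ p ∂μ
        ≤ ∫⁻ y, (∫⁻ ω, W ω ∂ν) ^ (p - 1) * ∫⁻ ω, W ω * K ω y ^ p ∂ν ∂μ :=
          lintegral_mono fun y => jensen_mul ν hp hW (hKy y)
      _ = (∫⁻ ω, W ω ∂ν) ^ (p - 1) * ∫⁻ y, ∫⁻ ω, W ω * K ω y ^ p ∂ν ∂μ := by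
          rw [lintegral_const_mul]
          exact Measurable.lintegral_prod_right hswap
      _ = (∫⁻ ω, W ω ∂ν) ^ (p - 1) * ∫⁻ ω, ∫⁻ y, W ω * K ω y ^ p ∂μ ∂ν := by
          rw [lintegral_lintegral_swap hswap.aemeasurable]
      _ = (∫⁻ ω, W ω ∂ν) ^ (p - 1) * ∫⁻ ω, W ω * (∫⁻ y, K ω y ^ p ∂μ) ∂ν := by
          congr 1
          refine lintegral_congr fun ω => ?_
          rw [lintegral_const_mul _ ((hKω ω).pow_const p)]
  have step2 : ∫⁻ ω, W ω * (∫⁻ y, K ω y ^ p ∂μ) ∂ν ≤ C * Sp := by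
    calc ∫⁻ ω, W ω * (∫⁻ y, K ω y ^ p ∂μ) ∂ν ≤ ∫⁻ ω, W ω * Sp ∂ν :=
          lintegral_mono fun ω => mul_le_mul' le_rfl (hKS ω)
      _ = (∫⁻ ω, W ω ∂ν) * Sp := by rw [lintegral_mul_const _ hW]
      _ ≤ C * Sp := mul_le_mul' hWC le_rfl
  calc (∫⁻ y, (∫⁻ ω, W ω * K ω y ∂ν) ^ p ∂μ) ^ (1/p)
      ≤ ((∫⁻ ω, W ω ∂ν) ^ (p - 1) * (C * Sp)) ^ (1/p) := by
        apply ENNReal.rpow_le_rpow _ (by positivity)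
        exact step1.trans (mul_le_mul' le_rfl step2)
    _ ≤ (C ^ (p - 1) * (C * Sp)) ^ (1/p) :=
        ENNReal.rpow_le_rpow
          (mul_le_mul' (ENNReal.rpow_le_rpow hWC (by linarith)) le_rfl) (by positivity)
    _ = (C ^ p * Sp) ^ (1/p) := by
        congr 1
        have hC : C ^ (p - 1) * C ^ (1:ℝ) = C ^ p := by
          rw [← ENNReal.rpow_add_of_nonneg _ _ (by linarith) (by norm_num)]
          norm_num
        rw [← mul_assoc, ← hC, ENNReal.rpow_one]
    _ = C * Sp ^ (1/p) := by
        rw [ENNReal.mul_rpow_of_nonneg _ _ (by positivity), ← ENNReal.rpow_mul,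
          mul_one_div_cancel hp0.ne', ENNReal.rpow_one]

lemma gamma_lintegral (n : ℕ) {β : ℝ} (hβ : 0 < β) :
    ∫⁻ s in Ioi (0:ℝ), ENNReal.ofReal (s ^ n / n.factorial * Real.exp (-(β * s)))
      = ENNReal.ofReal ((1/β) ^ (n+1)) := by
  have hfac : (0:ℝ) < n.factorial := by positivity
  have hmeas : Measurable fun x : ℝ => ENNReal.ofReal (x ^ n * Real.exp (-(β * x))) :=
    ((measurable_id.pow_const n).mul ((measurable_id.const_mul β).neg.exp)).ennreal_ofReal
  have hone := ProbabilityTheory.lintegral_gammaPDF_eq_one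
    (a := (n:ℝ) + 1) (r := β) (by positivity) hβ
  set c : ℝ := β ^ ((n:ℝ)+1) / Real.Gamma ((n:ℝ)+1) with hc
  have hΓpos : 0 < Real.Gamma ((n:ℝ)+1) := Real.Gamma_pos_of_pos (by positivity)
  have hcpos : 0 < c := by
    rw [hc]
    have : (0:ℝ) < β ^ ((n:ℝ)+1) := Real.rpow_pos_of_pos hβ _
    positivity
  set I : ℝ≥0∞ := ∫⁻ x in Ioi (0:ℝ), ENNReal.ofReal (x ^ n * Real.exp (-(β * x))) with hI
  -- split the integral
  have hsplit : ∫⁻ x, ProbabilityTheory.gammaPDF ((n:ℝ)+1) β x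
      = ∫⁻ x in Ioi (0:ℝ), ProbabilityTheory.gammaPDF ((n:ℝ)+1) β x := by
    rw [← lintegral_add_compl (A := Ioi (0:ℝ)) _ measurableSet_Ioi, compl_Ioi,
      ← Measure.restrict_congr_set Iio_ae_eq_Iic]
    have : ∫⁻ x in Iio (0:ℝ), ProbabilityTheory.gammaPDF ((n:ℝ)+1) β x = 0 := by
      rw [setLIntegral_congr_fun measurableSet_Iio
        (fun x (hx : x < 0) => ProbabilityTheory.gammaPDF_of_neg hx), lintegral_zero]
    rw [this, add_zero]
  -- on Ioi 0, rewrite the pdf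
  have hpdf : ∫⁻ x in Ioi (0:ℝ), ProbabilityTheory.gammaPDF ((n:ℝ)+1) β x
      = ENNReal.ofReal c * I := by
    rw [hI, ← lintegral_const_mul _ hmeas]
    apply setLIntegral_congr_fun measurableSet_Ioi
    intro x hx
    beta_reduce
    rw [ProbabilityTheory.gammaPDF_of_nonneg (le_of_lt hx), ← ENNReal.ofReal_mul hcpos.le]
    congr 1
    have hxp : x ^ ((n:ℝ) + 1 - 1) = x ^ n := by
      rw [add_sub_cancel_right, Real.rpow_natCast]
    rw [hxp, hc]; ring
  have hIc : I = ENNReal.ofReal c⁻¹ := by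
    have h1 : ENNReal.ofReal c * I = 1 := by rw [← hpdf, ← hsplit, hone]
    have h2 : ENNReal.ofReal c ≠ 0 := by simp [hcpos]
    have h3 : ENNReal.ofReal c ≠ ⊤ := ENNReal.ofReal_ne_top
    calc I = (ENNReal.ofReal c)⁻¹ * (ENNReal.ofReal c * I) := by
            rw [← mul_assoc, ENNReal.inv_mul_cancel h2 h3, one_mul]
      _ = (ENNReal.ofReal c)⁻¹ := by rw [h1, mul_one]
      _ = ENNReal.ofReal c⁻¹ := (ENNReal.ofReal_inv_of_pos hcpos).symm
  -- conclude
  calc ∫⁻ s in Ioi (0:ℝ), ENNReal.ofReal (s ^ n / n.factorial * Real.exp (-(β * s)))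
      = ∫⁻ s in Ioi (0:ℝ),
          ENNReal.ofReal ((n.factorial:ℝ)⁻¹) * ENNReal.ofReal (s ^ n * Real.exp (-(β * s))) := by
        apply setLIntegral_congr_fun measurableSet_Ioi
        intro s _
        beta_reduce
        rw [← ENNReal.ofReal_mul (by positivity)]
        congr 1; ring
    _ = ENNReal.ofReal ((n.factorial:ℝ)⁻¹) * I := by rw [lintegral_const_mul _ hmeas, hI]
    _ = ENNReal.ofReal ((n.factorial:ℝ)⁻¹ * c⁻¹) := by
        rw [hIc, ← ENNReal.ofReal_mul (by positivity)]
    _ = ENNReal.ofReal ((1/β) ^ (n+1)) := by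
        congr 1
        have hβp : β ^ ((n:ℝ)+1) = β ^ (n+1) := by
          rw [show ((n:ℝ)+1) = ((n+1:ℕ):ℝ) by push_cast; ring, Real.rpow_natCast]
        have hΓ : Real.Gamma ((n:ℝ)+1) = n.factorial := Real.Gamma_nat_eq_factorial n
        rw [hc, hβp, hΓ]
        rw [div_pow, one_pow]
        field_simp

lemma pow_lintegral_Ioo (n : ℕ) {t : ℝ} (ht : 0 < t) :
    ∫⁻ s in Ioo (0:ℝ) t, ENNReal.ofReal (s ^ n / n.factorial)
      = ENNReal.ofReal (t ^ (n+1) / (n+1).factorial) := by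
  have hint : IntegrableOn (fun s : ℝ => s ^ n / n.factorial) (Ioo 0 t) := by
    apply IntegrableOn.mono_set (t := Icc 0 t) _ Ioo_subset_Icc_self
    exact (((continuous_pow n).div_const _).continuousOn).integrableOn_compact isCompact_Icc
  rw [← ofReal_integral_eq_lintegral_ofReal hint]
  · congr 1
    rw [show (Ioo (0:ℝ) t) = Ioo 0 t from rfl]
    rw [← MeasureTheory.integral_Ioc_eq_integral_Ioo,
      ← intervalIntegral.integral_of_le ht.le]
    rw [intervalIntegral.integral_div, integral_pow]
    simp only [zero_pow (Nat.succ_ne_zero n), sub_zero]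
    rw [Nat.factorial_succ]
    push_cast
    field_simp
  · filter_upwards [self_mem_ae_restrict measurableSet_Ioo] with s hs
    have : (0:ℝ) < s := hs.1
    positivity

lemma exp_series {α β : ℝ} (hαβ : α < β) (t : ℝ) :
    Real.exp (-(α * t)) = ∑' n : ℕ, (β - α) ^ n * (t ^ n / n.factorial) * Real.exp (-(β * t)) := by
  have h1 : Real.exp ((β - α) * t) = ∑' n : ℕ, ((β - α) * t) ^ n / n.factorial := by
    rw [Real.exp_eq_exp_ℝ, NormedSpace.exp_eq_tsum_div]
  have h2 : Real.exp (-(α * t)) = Real.exp ((β - α) * t) * Real.exp (-(β * t)) := by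
    rw [← Real.exp_add]; ring_nf
  rw [h2, h1, ← tsum_mul_right]
  congr 1; ext n
  rw [mul_pow]; ring

lemma resolvent_series {E : Type*} [MeasurableSpace E] (P : ℝ → E → E → ℝ≥0∞)
    (hmeas : Measurable (fun q : ℝ × E × E => P q.1 q.2.1 q.2.2))
    {α β : ℝ} (hα : 0 < α) (hαβ : α < β) (x y : E) :
    heatResolvent P α x y
      = ∑' n : ℕ, ENNReal.ofReal ((β - α)^n) *
          ∫⁻ t in Ioi (0:ℝ), ENNReal.ofReal (t ^ n / n.factorial * Real.exp (-(β * t))) * P t x y := by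
  have hPt : Measurable fun t : ℝ => P t x y := by
    have h : Measurable ((fun q : ℝ × E × E => P q.1 q.2.1 q.2.2) ∘ (fun t : ℝ => (t, x, y))) :=
      hmeas.comp (measurable_id.prodMk measurable_const)
    exact h
  have hsub : (0:ℝ) ≤ β - α := by linarith
  have hterm : ∀ n : ℕ, Measurable fun t : ℝ =>
      ENNReal.ofReal ((β - α) ^ n * (t ^ n / n.factorial) * Real.exp (-(β * t))) * P t x y := by
    intro n
    exact ((measurable_const.mul ((measurable_id.pow_const n).div_const _)).mul
      ((measurable_id.const_mul β).neg.exp)).ennreal_ofReal.mul hPt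
  calc heatResolvent P α x y
      = ∫⁻ t in Ioi (0:ℝ), ∑' n : ℕ,
          ENNReal.ofReal ((β - α) ^ n * (t ^ n / n.factorial) * Real.exp (-(β * t))) * P t x y := by
        unfold heatResolvent
        apply setLIntegral_congr_fun measurableSet_Ioi
        intro t ht
        beta_reduce
        rw [exp_series hαβ t, ENNReal.ofReal_tsum_of_nonneg, ENNReal.tsum_mul_right]
        · intro n
          have ht' : (0:ℝ) ≤ t := le_of_lt ht
          positivity
        · have hs : Summable fun n : ℕ => ((β - α) * t) ^ n / (n.factorial : ℝ) :=
            Real.summable_pow_div_factorial _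
          have := hs.mul_right (Real.exp (-(β * t)))
          apply this.congr
          intro n
          simp only [mul_pow]
          ring
    _ = ∑' n : ℕ, ∫⁻ t in Ioi (0:ℝ),
          ENNReal.ofReal ((β - α) ^ n * (t ^ n / n.factorial) * Real.exp (-(β * t))) * P t x y := by
        rw [lintegral_tsum fun n => (hterm n).aemeasurable]
    _ = _ := by
        congr 1; ext n
        have hw : Measurable fun t : ℝ =>
            ENNReal.ofReal (t ^ n / n.factorial * Real.exp (-(β * t))) * P t x y := by
          exact (((measurable_id.pow_const n).div_const _ |>.mul
            ((measurable_id.const_mul β).neg.exp)).ennreal_ofReal).mul hPt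
        rw [← lintegral_const_mul _ hw]
        apply setLIntegral_congr_fun measurableSet_Ioi
        intro t ht
        beta_reduce
        rw [← mul_assoc, ← ENNReal.ofReal_mul (by positivity)]
        congr 2
        ring

lemma lintegral_Ioi_shift {g : ℝ → ℝ≥0∞} (hg : Measurable g) (s : ℝ) :
    ∫⁻ t in Ioi s, g t = ∫⁻ u in Ioi (0:ℝ), g (s + u) := by
  have h2 : (fun u : ℝ => s + u) ⁻¹' (Ioi s) = Ioi 0 := by
    ext u; simp [lt_add_iff_pos_right]
  have h3 : (volume : Measure ℝ).restrict (Ioi s)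
      = Measure.map (fun u : ℝ => s + u) (volume.restrict (Ioi 0)) := by
    rw [← h2, ← Measure.restrict_map (measurable_const_add s) measurableSet_Ioi,
      MeasureTheory.Measure.IsAddLeftInvariant.map_add_left_eq_self (μ := volume) s]
  rw [h3, lintegral_map hg (measurable_const_add s)]

lemma A_succ_eq {E : Type*} [MeasurableSpace E] (m : Measure E) [SigmaFinite m] (P : ℝ → E → E → ℝ≥0∞)
    (hmeas : Measurable (fun q : ℝ × E × E => P q.1 q.2.1 q.2.2))
    (hck : ∀ s > (0:ℝ), ∀ t > (0:ℝ), ∀ x y : E,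
      P (t + s) x y = ∫⁻ z, P t x z * P s z y ∂m)
    {β : ℝ} (hβ : 0 < β) (n : ℕ) (x y : E) :
    ∫⁻ t in Ioi (0:ℝ),
        ENNReal.ofReal (t ^ (n+1) / (n+1).factorial * Real.exp (-(β*t))) * P t x y
      = ∫⁻ s in Ioi (0:ℝ), ∫⁻ z,
          (ENNReal.ofReal (s ^ n / n.factorial * Real.exp (-(β*s))) * P s x z)
            * heatResolvent P β z y ∂m := by
  have hPt : ∀ a b : E, Measurable fun t : ℝ => P t a b := by
    intro a b
    have h : Measurable ((fun q : ℝ × E × E => P q.1 q.2.1 q.2.2) ∘ (fun t : ℝ => (t, a, b))) :=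
      hmeas.comp (measurable_id.prodMk measurable_const)
    exact h
  have hPz : ∀ s : ℝ, Measurable fun z : E => P s x z := by
    intro s
    have h : Measurable ((fun q : ℝ × E × E => P q.1 q.2.1 q.2.2) ∘ (fun z : E => (s, x, z))) :=
      hmeas.comp (measurable_const.prodMk (measurable_const.prodMk measurable_id))
    exact h
  have hPzy : ∀ u : ℝ, Measurable fun z : E => P u z y := by
    intro u
    have h : Measurable ((fun q : ℝ × E × E => P q.1 q.2.1 q.2.2) ∘ (fun z : E => (u, z, y))) :=
      hmeas.comp (measurable_const.prodMk (measurable_id.prodMk measurable_const))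
    exact h
  have hq : Measurable fun q : E × ℝ => P q.2 q.1 y := by
    have h : Measurable ((fun q : ℝ × E × E => P q.1 q.2.1 q.2.2)
        ∘ (fun q : E × ℝ => (q.2, q.1, y))) :=
      hmeas.comp ((measurable_snd).prodMk ((measurable_fst).prodMk measurable_const))
    exact h
  set c : ℝ → ℝ≥0∞ := fun t => ENNReal.ofReal (Real.exp (-(β*t))) * P t x y with hc
  have hcm : Measurable c := ((measurable_id.const_mul β).neg.exp.ennreal_ofReal).mul (hPt x y)
  have hresm : Measurable fun z => heatResolvent P β z y := by
    have h : Measurable (Function.uncurry fun (z : E) (u : ℝ) =>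
        ENNReal.ofReal (Real.exp (-(β * u))) * P u z y) :=
      (((measurable_snd.const_mul β).neg.exp.ennreal_ofReal).mul hq)
    exact h.lintegral_prod_right
  -- main pointwise claim for s > 0
  have claim : ∀ s ∈ Ioi (0:ℝ),
      (∫⁻ z, (ENNReal.ofReal (s ^ n / n.factorial * Real.exp (-(β*s))) * P s x z)
          * heatResolvent P β z y ∂m)
      = ∫⁻ t in Ioi (0:ℝ),
          (Ioi s).indicator (fun t => ENNReal.ofReal (s ^ n / n.factorial) * c t) t := by
    intro s hs
    have hs' : (0:ℝ) < s := hs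
    have huncurry : Measurable (Function.uncurry fun (z : E) (u : ℝ) =>
        P s x z * (ENNReal.ofReal (Real.exp (-(β * u))) * P u z y)) :=
      ((hPz s).comp measurable_fst).mul
        (((measurable_snd.const_mul β).neg.exp.ennreal_ofReal).mul hq)
    calc ∫⁻ z, (ENNReal.ofReal (s ^ n / n.factorial * Real.exp (-(β*s))) * P s x z)
            * heatResolvent P β z y ∂m
        = ENNReal.ofReal (s ^ n / n.factorial * Real.exp (-(β*s)))
            * ∫⁻ z, P s x z * heatResolvent P β z y ∂m := by
          rw [← lintegral_const_mul _ (show Measurable fun z => P s x z * heatResolvent P β z y from (hPz s).mul hresm)]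
          congr 1; ext z; ring
      _ = ENNReal.ofReal (s ^ n / n.factorial * Real.exp (-(β*s)))
            * ∫⁻ u in Ioi (0:ℝ), ENNReal.ofReal (Real.exp (-(β*u))) * P (s+u) x y := by
          congr 1
          calc ∫⁻ z, P s x z * heatResolvent P β z y ∂m
              = ∫⁻ z, (∫⁻ u in Ioi (0:ℝ),
                  P s x z * (ENNReal.ofReal (Real.exp (-(β*u))) * P u z y)) ∂m := by
                apply lintegral_congr fun z => ?_
                unfold heatResolvent
                have hmz : Measurable fun u : ℝ =>
                    ENNReal.ofReal (Real.exp (-(β * u))) * P u z y := by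
                  exact ((measurable_id.const_mul β).neg.exp.ennreal_ofReal).mul (hPt z y)
                rw [lintegral_const_mul _ hmz]
            _ = ∫⁻ u in Ioi (0:ℝ), ∫⁻ z,
                  P s x z * (ENNReal.ofReal (Real.exp (-(β*u))) * P u z y) ∂m := by
                exact lintegral_lintegral_swap huncurry.aemeasurable
            _ = ∫⁻ u in Ioi (0:ℝ), ENNReal.ofReal (Real.exp (-(β*u))) * P (s+u) x y := by
                apply setLIntegral_congr_fun measurableSet_Ioi
                intro u hu
                beta_reduce
                rw [hck u hu s hs' x y,
                  ← lintegral_const_mul _ (show Measurable fun z => P s x z * P u z y from (hPz s).mul (hPzy u))]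
                congr 1; ext z; ring
      _ = ∫⁻ u in Ioi (0:ℝ), ENNReal.ofReal (s ^ n / n.factorial) * c (s+u) := by
          have hms : Measurable fun u : ℝ =>
              ENNReal.ofReal (Real.exp (-(β * u))) * P (s + u) x y := by
            exact ((measurable_id.const_mul β).neg.exp.ennreal_ofReal).mul
              ((hPt x y).comp (measurable_const_add s))
          rw [← lintegral_const_mul _ hms]
          apply setLIntegral_congr_fun measurableSet_Ioi
          intro u hu
          beta_reduce
          have hee : ENNReal.ofReal (Real.exp (-(β*s))) * ENNReal.ofReal (Real.exp (-(β*u)))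
              = ENNReal.ofReal (Real.exp (-(β*(s+u)))) := by
            rw [← ENNReal.ofReal_mul (Real.exp_nonneg _), ← Real.exp_add]
            congr 1; ring
          rw [hc]
          simp only
          rw [ENNReal.ofReal_mul (by positivity : (0:ℝ) ≤ s^n / n.factorial), ← hee]
          ring
      _ = ∫⁻ t in Ioi s, ENNReal.ofReal (s ^ n / n.factorial) * c t := by
          rw [lintegral_Ioi_shift (hcm.const_mul _) s]
      _ = ∫⁻ t in Ioi (0:ℝ),
            (Ioi s).indicator (fun t => ENNReal.ofReal (s ^ n / n.factorial) * c t) t := by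
          rw [lintegral_indicator measurableSet_Ioi, Measure.restrict_restrict measurableSet_Ioi,
            Ioi_inter_Ioi, max_eq_left hs'.le]
  -- swap (s,t)
  have hH : Measurable (Function.uncurry fun (s t : ℝ) =>
      (Ioi s).indicator (fun t' => ENNReal.ofReal (s ^ n / n.factorial) * c t') t) := by
    have heq : (Function.uncurry fun (s t : ℝ) =>
        (Ioi s).indicator (fun t' => ENNReal.ofReal (s ^ n / n.factorial) * c t') t)
        = Set.indicator {q : ℝ × ℝ | q.1 < q.2}
            (fun q : ℝ × ℝ => ENNReal.ofReal (q.1 ^ n / n.factorial) * c q.2) := by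
      ext q
      rw [Function.uncurry]
      simp only [indicator_apply, mem_Ioi, mem_setOf_eq]
    rw [heq]
    apply Measurable.indicator
    · exact ((measurable_fst.pow_const n).div_const _).ennreal_ofReal.mul (hcm.comp measurable_snd)
    · exact measurableSet_lt measurable_fst measurable_snd
  calc ∫⁻ t in Ioi (0:ℝ),
        ENNReal.ofReal (t ^ (n+1) / (n+1).factorial * Real.exp (-(β*t))) * P t x y
      = ∫⁻ t in Ioi (0:ℝ), ENNReal.ofReal (t ^ (n+1) / (n+1).factorial) * c t := by
        apply setLIntegral_congr_fun measurableSet_Ioi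
        intro t ht
        beta_reduce
        have ht' : (0:ℝ) ≤ t := le_of_lt ht
        rw [hc]
        simp only
        rw [ENNReal.ofReal_mul (by positivity : (0:ℝ) ≤ t^(n+1) / (n+1).factorial)]
        ring
    _ = ∫⁻ t in Ioi (0:ℝ), ∫⁻ s in Ioi (0:ℝ),
          (Ioi s).indicator (fun t' => ENNReal.ofReal (s ^ n / n.factorial) * c t') t := by
        apply setLIntegral_congr_fun measurableSet_Ioi
        intro t ht
        beta_reduce
        have h1 : ∀ s : ℝ, (Ioi s).indicator
              (fun t' => ENNReal.ofReal (s ^ n / n.factorial) * c t') t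
            = (Iio t).indicator (fun s' => ENNReal.ofReal (s' ^ n / n.factorial)) s * c t := by
          intro s
          simp only [indicator_apply, mem_Ioi, mem_Iio]
          split_ifs with h
          · rfl
          · rw [zero_mul]
        simp only [h1]
        have hind : Measurable fun s' : ℝ =>
            (Iio t).indicator (fun s'' => ENNReal.ofReal (s'' ^ n / n.factorial)) s' := by
          exact Measurable.indicator
            ((measurable_id.pow_const n).div_const _).ennreal_ofReal measurableSet_Iio
        rw [lintegral_mul_const _ hind,
          lintegral_indicator measurableSet_Iio, Measure.restrict_restrict measurableSet_Iio,
          Iio_inter_Ioi, pow_lintegral_Ioo n ht]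
    _ = ∫⁻ s in Ioi (0:ℝ), ∫⁻ t in Ioi (0:ℝ),
          (Ioi s).indicator (fun t' => ENNReal.ofReal (s ^ n / n.factorial) * c t') t := by
        exact (lintegral_lintegral_swap hH.aemeasurable).symm
    _ = _ := by
        apply (setLIntegral_congr_fun measurableSet_Ioi ?_).symm
        intro s hs
        exact claim s hs

lemma key_sigma_finite {E : Type*} [MeasurableSpace E] (m μ : Measure E) [SigmaFinite m] [SigmaFinite μ]
    (P : ℝ → E → E → ℝ≥0∞)
    (hmeas : Measurable (fun q : ℝ × E × E => P q.1 q.2.1 q.2.2))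
    (hck : ∀ s > (0:ℝ), ∀ t > (0:ℝ), ∀ x y : E,
      P (t + s) x y = ∫⁻ z, P t x z * P s z y ∂m)
    (hsub : ∀ t > (0:ℝ), ∀ x : E, ∫⁻ y, P t x y ∂m ≤ 1)
    {p : ℝ} (hp : 1 ≤ p) {α β : ℝ} (hα : 0 < α) (hαβ : α < β) (x : E) :
    (∫⁻ y, heatResolvent P α x y ^ p ∂μ) ^ (1/p)
      ≤ ENNReal.ofReal (β / α) *
        ⨆ z : E, (∫⁻ y, heatResolvent P β z y ^ p ∂μ) ^ (1/p) := by
  have hβ : 0 < β := hα.trans hαβ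
  have hp0 : 0 < p := lt_of_lt_of_le one_pos hp
  set S := ⨆ z : E, (∫⁻ y, heatResolvent P β z y ^ p ∂μ) ^ (1/p) with hS
  set A : ℕ → E → ℝ≥0∞ := fun n y => ∫⁻ t in Ioi (0:ℝ),
    ENNReal.ofReal (t ^ n / n.factorial * Real.exp (-(β * t))) * P t x y with hA
  have hPq : Measurable fun q : E × ℝ => P q.2 x q.1 := by
    have h : Measurable ((fun q : ℝ × E × E => P q.1 q.2.1 q.2.2)
        ∘ (fun q : E × ℝ => (q.2, x, q.1))) :=
      hmeas.comp (measurable_snd.prodMk (measurable_const.prodMk measurable_fst))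
    exact h
  have hAm : ∀ n, Measurable (A n) := by
    intro n
    have h : Measurable (Function.uncurry fun (y : E) (t : ℝ) =>
        ENNReal.ofReal (t ^ n / n.factorial * Real.exp (-(β * t))) * P t x y) := by
      apply Measurable.mul
      · exact (((measurable_snd.pow_const n).div_const _).mul
          ((measurable_snd.const_mul β).neg.exp)).ennreal_ofReal
      · have h2 : Measurable ((fun q : ℝ × E × E => P q.1 q.2.1 q.2.2)
            ∘ (fun q : E × ℝ => (q.2, x, q.1))) :=
          hmeas.comp (measurable_snd.prodMk (measurable_const.prodMk measurable_fst))
        exact h2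
    exact h.lintegral_prod_right
  have hres2 : Measurable fun w : E × E => heatResolvent P β w.1 w.2 := by
    have h : Measurable (Function.uncurry fun (w : E × E) (u : ℝ) =>
        ENNReal.ofReal (Real.exp (-(β * u))) * P u w.1 w.2) := by
      apply Measurable.mul
      · exact (measurable_snd.const_mul β).neg.exp.ennreal_ofReal
      · have h2 : Measurable ((fun q : ℝ × E × E => P q.1 q.2.1 q.2.2)
            ∘ (fun q : (E × E) × ℝ => (q.2, q.1.1, q.1.2))) :=
          hmeas.comp (measurable_snd.prodMk
            ((measurable_fst.comp measurable_fst).prodMk (measurable_snd.comp measurable_fst)))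
        exact h2
    exact h.lintegral_prod_right
  -- per-term bound
  have hAbound : ∀ n : ℕ, (∫⁻ y, A n y ^ p ∂μ) ^ (1/p) ≤ ENNReal.ofReal ((1/β)^n) * S := by
    intro n
    cases n with
    | zero =>
      have h0 : A 0 = fun y => heatResolvent P β x y := by
        funext y
        rw [hA]
        simp only
        unfold heatResolvent
        apply setLIntegral_congr_fun measurableSet_Ioi
        intro t ht
        norm_num
      rw [h0]
      simp only [pow_zero, ENNReal.ofReal_one, one_mul, hS]
      exact le_iSup (fun z => (∫⁻ y, heatResolvent P β z y ^ p ∂μ) ^ (1/p)) x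
    | succ n =>
      set ν : Measure (ℝ × E) := (volume.restrict (Ioi (0:ℝ))).prod m with hν
      set W : ℝ × E → ℝ≥0∞ := fun q =>
        ENNReal.ofReal (q.1 ^ n / n.factorial * Real.exp (-(β * q.1))) * P q.1 x q.2 with hW
      set K : ℝ × E → E → ℝ≥0∞ := fun q y => heatResolvent P β q.2 y with hK
      have hWm : Measurable W := by
        apply Measurable.mul
        · exact (((measurable_fst.pow_const n).div_const _).mul
            ((measurable_fst.const_mul β).neg.exp)).ennreal_ofReal
        · have h2 : Measurable ((fun q : ℝ × E × E => P q.1 q.2.1 q.2.2)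
              ∘ (fun q : ℝ × E => (q.1, x, q.2))) :=
            hmeas.comp (measurable_fst.prodMk (measurable_const.prodMk measurable_snd))
          exact h2
      have hKm : Measurable (Function.uncurry K) := by
        have h : Measurable ((fun w : E × E => heatResolvent P β w.1 w.2)
            ∘ (fun w : (ℝ × E) × E => (w.1.2, w.2))) :=
          hres2.comp ((measurable_snd.comp measurable_fst).prodMk measurable_snd)
        exact h
      have hrepr : ∀ y, A (n+1) y = ∫⁻ q, W q * K q y ∂ν := by
        intro y
        have hfm : AEMeasurable (fun q : ℝ × E => W q * K q y) ν := by
          apply AEMeasurable.mul hWm.aemeasurable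
          have h : Measurable ((fun w : E × E => heatResolvent P β w.1 w.2)
              ∘ (fun q : ℝ × E => (q.2, y))) :=
            hres2.comp (measurable_snd.prodMk measurable_const)
          exact h.aemeasurable
        rw [hA]
        simp only
        rw [A_succ_eq m P hmeas hck hβ n x y]
        rw [show (∫⁻ q, W q * K q y ∂ν)
            = ∫⁻ s in Ioi (0:ℝ), ∫⁻ z, W (s, z) * K (s, z) y ∂m from lintegral_prod _ hfm]
      have hKS : ∀ q : ℝ × E, ∫⁻ y, K q y ^ p ∂μ ≤ S ^ p := by
        intro q
        have h1 : (∫⁻ y, heatResolvent P β q.2 y ^ p ∂μ) ^ (1/p) ≤ S :=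
          le_iSup (fun z => (∫⁻ y, heatResolvent P β z y ^ p ∂μ) ^ (1/p)) q.2
        calc ∫⁻ y, K q y ^ p ∂μ
            = ((∫⁻ y, heatResolvent P β q.2 y ^ p ∂μ) ^ (1/p)) ^ p := by
              rw [← ENNReal.rpow_mul, one_div_mul_cancel hp0.ne', ENNReal.rpow_one]
          _ ≤ S ^ p := ENNReal.rpow_le_rpow h1 hp0.le
      have hWC : ∫⁻ q, W q ∂ν ≤ ENNReal.ofReal ((1/β)^(n+1)) := by
        rw [hν, lintegral_prod _ hWm.aemeasurable]
        calc ∫⁻ s in Ioi (0:ℝ), ∫⁻ z, W (s, z) ∂m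
            ≤ ∫⁻ s in Ioi (0:ℝ),
                ENNReal.ofReal (s ^ n / n.factorial * Real.exp (-(β * s))) := by
              apply setLIntegral_mono
                ((((measurable_id.pow_const n).div_const _).mul
                  ((measurable_id.const_mul β).neg.exp)).ennreal_ofReal)
              intro s hs
              have hsm : Measurable fun z : E => P s x z := by
                have h : Measurable ((fun q : ℝ × E × E => P q.1 q.2.1 q.2.2)
                    ∘ (fun z : E => (s, x, z))) :=
                  hmeas.comp (measurable_const.prodMk (measurable_const.prodMk measurable_id))
                exact h
              calc ∫⁻ z, W (s, z) ∂m
                  = ENNReal.ofReal (s ^ n / n.factorial * Real.exp (-(β * s)))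
                      * ∫⁻ z, P s x z ∂m := by
                    rw [hW]
                    simp only
                    rw [lintegral_const_mul _ hsm]
                _ ≤ ENNReal.ofReal (s ^ n / n.factorial * Real.exp (-(β * s))) * 1 :=
                    mul_le_mul' le_rfl (hsub s hs x)
                _ = _ := mul_one _
          _ = ENNReal.ofReal ((1/β)^(n+1)) := gamma_lintegral n hβ
      calc (∫⁻ y, A (n+1) y ^ p ∂μ) ^ (1/p)
          = (∫⁻ y, (∫⁻ q, W q * K q y ∂ν) ^ p ∂μ) ^ (1/p) := by
            congr 1
            apply lintegral_congr fun y => ?_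
            rw [hrepr y]
        _ ≤ ENNReal.ofReal ((1/β)^(n+1)) * (S ^ p) ^ (1/p) :=
            kernel_Lp_bound ν hp hWm hKm hKS hWC
        _ = ENNReal.ofReal ((1/β)^(n+1)) * S := by
            rw [← ENNReal.rpow_mul, mul_one_div_cancel hp0.ne', ENNReal.rpow_one]
  -- series + Minkowski
  have hge : (β - α) ≥ 0 := by linarith
  calc (∫⁻ y, heatResolvent P α x y ^ p ∂μ) ^ (1/p)
      = (∫⁻ y, (∑' n : ℕ, ENNReal.ofReal ((β - α)^n) * A n y) ^ p ∂μ) ^ (1/p) := by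
        congr 1
        apply lintegral_congr fun y => ?_
        rw [resolvent_series P hmeas hα hαβ x y]
    _ ≤ ∑' n : ℕ, (∫⁻ y, (ENNReal.ofReal ((β - α)^n) * A n y) ^ p ∂μ) ^ (1/p) :=
        lp_norm_tsum_le hp _ (fun n => (hAm n).const_mul _)
    _ = ∑' n : ℕ, ENNReal.ofReal ((β - α)^n) * (∫⁻ y, A n y ^ p ∂μ) ^ (1/p) := by
        congr 1
        funext n
        exact lp_norm_const_mul hp0 _ _ (hAm n)
    _ ≤ ∑' n : ℕ, ENNReal.ofReal ((β - α)^n) * (ENNReal.ofReal ((1/β)^n) * S) :=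
        ENNReal.tsum_le_tsum fun n => mul_le_mul' le_rfl (hAbound n)
    _ = ∑' n : ℕ, (ENNReal.ofReal ((β - α)/β))^n * S := by
        congr 1
        funext n
        rw [← mul_assoc, ← ENNReal.ofReal_mul (by positivity), ← mul_pow, mul_one_div,
          ENNReal.ofReal_pow (by positivity)]
    _ = (∑' n : ℕ, (ENNReal.ofReal ((β - α)/β))^n) * S := ENNReal.tsum_mul_right
    _ = (1 - ENNReal.ofReal ((β - α)/β))⁻¹ * S := by rw [ENNReal.tsum_geometric]
    _ = ENNReal.ofReal (β / α) * S := by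
        congr 1
        have h1 : (1:ℝ≥0∞) - ENNReal.ofReal ((β - α)/β) = ENNReal.ofReal (α/β) := by
          rw [← ENNReal.ofReal_one, ← ENNReal.ofReal_sub _ (by positivity)]
          congr 1
          rw [sub_div, div_self hβ.ne']; ring
        rw [h1, ← ENNReal.ofReal_inv_of_pos (div_pos hα hβ), inv_div]

theorem stmt_0 {E : Type*} [MeasurableSpace E] (m μ : Measure E) [SigmaFinite m]
    (P : ℝ → E → E → ℝ≥0∞)
    (hmeas : Measurable (fun q : ℝ × E × E => P q.1 q.2.1 q.2.2))
    (hsymm : ∀ t > (0:ℝ), ∀ x y : E, P t x y = P t y x)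
    (hck : ∀ s > (0:ℝ), ∀ t > (0:ℝ), ∀ x y : E,
      P (t + s) x y = ∫⁻ z, P t x z * P s z y ∂m)
    (hsub : ∀ t > (0:ℝ), ∀ x : E, ∫⁻ y, P t x y ∂m ≤ 1)
    (p : ℝ) (hp : 1 ≤ p) (α β : ℝ) (hα : 0 < α) (hαβ : α < β) (x : E) :
    (∫⁻ y, heatResolvent P α x y ^ p ∂μ) ^ (1/p)
      ≤ ENNReal.ofReal (β / α) *
        ⨆ z : E, (∫⁻ y, heatResolvent P β z y ^ p ∂μ) ^ (1/p) := by
  have hβ : 0 < β := hα.trans hαβ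
  have hp0 : 0 < p := lt_of_lt_of_le one_pos hp
  -- measurability of resolvents in y
  have hresy : ∀ (γ : ℝ) (z : E), Measurable fun y => heatResolvent P γ z y := by
    intro γ z
    have h : Measurable (Function.uncurry fun (y : E) (t : ℝ) =>
        ENNReal.ofReal (Real.exp (-(γ * t))) * P t z y) := by
      apply Measurable.mul
      · exact (measurable_snd.const_mul γ).neg.exp.ennreal_ofReal
      · have h2 : Measurable ((fun q : ℝ × E × E => P q.1 q.2.1 q.2.2)
            ∘ (fun q : E × ℝ => (q.2, z, q.1))) :=
          hmeas.comp (measurable_snd.prodMk (measurable_const.prodMk measurable_fst))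
        exact h2
    exact h.lintegral_prod_right
  set v : E → ℝ≥0∞ := fun y => heatResolvent P β x y with hv
  have hvm : Measurable v := hresy β x
  set u : E → ℝ≥0∞ := fun y => heatResolvent P α x y with hu
  have hum : Measurable u := hresy α x
  -- if v y = 0 then u y = 0
  have hu0 : ∀ y, v y = 0 → u y = 0 := by
    intro y hvy
    have hPm : Measurable fun t : ℝ => P t x y := by
      have h : Measurable ((fun q : ℝ × E × E => P q.1 q.2.1 q.2.2)
          ∘ (fun t : ℝ => (t, x, y))) :=
        hmeas.comp (measurable_id.prodMk measurable_const)
      exact h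
    have hfmβ : Measurable fun t : ℝ => ENNReal.ofReal (Real.exp (-(β * t))) * P t x y := by
      exact ((measurable_id.const_mul β).neg.exp.ennreal_ofReal).mul hPm
    have h1 : (fun t => ENNReal.ofReal (Real.exp (-(β * t))) * P t x y)
        =ᵐ[volume.restrict (Ioi (0:ℝ))] 0 :=
      (lintegral_eq_zero_iff hfmβ).1 hvy
    have h2 : (fun t => ENNReal.ofReal (Real.exp (-(α * t))) * P t x y)
        =ᵐ[volume.restrict (Ioi (0:ℝ))] 0 := by
      filter_upwards [h1] with t ht
      simp only [Pi.zero_apply] at ht ⊢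
      rcases mul_eq_zero.1 ht with h | h
      · exact absurd h (by simp [Real.exp_pos])
      · rw [h, mul_zero]
    rw [hu]
    simp only
    unfold heatResolvent
    rw [lintegral_congr_ae h2]
    simp
  -- level sets of v
  set Sv : ℕ → Set E := fun k => {y | ((k:ℝ≥0∞))⁻¹ < v y} with hSv
  have hSvm : ∀ k, MeasurableSet (Sv k) := fun k => measurableSet_lt measurable_const hvm
  set B : Set E := {y | v y ≠ 0} with hB
  have hBm : MeasurableSet B := hvm (measurableSet_singleton 0) |>.compl
  have hBU : B = ⋃ k, Sv k := by
    ext y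
    simp only [hB, hSv, mem_setOf_eq, mem_iUnion]
    constructor
    · intro h
      exact ENNReal.exists_inv_nat_lt h
    · rintro ⟨k, hk⟩
      intro h0
      rw [h0] at hk
      exact ENNReal.not_lt_zero hk
  by_cases hfin : ∀ k : ℕ, μ (Sv k) ≠ ∞
  · -- σ-finite case
    have hSigma : SigmaFinite (μ.restrict B) := by
      refine ⟨⟨⟨fun k => Sv k ∪ Bᶜ, fun _ => trivial, ?_, ?_⟩⟩⟩
      · intro k
        rw [Measure.restrict_apply' hBm]
        have hsub2 : (Sv k ∪ Bᶜ) ∩ B ⊆ Sv k := by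
          rintro y ⟨hy1 | hy1, hy2⟩
          · exact hy1
          · exact absurd hy2 hy1
        exact lt_of_le_of_lt (measure_mono hsub2) (lt_top_iff_ne_top.2 (hfin k))
      · rw [eq_univ_iff_forall]
        intro y
        rw [mem_iUnion]
        by_cases hy : y ∈ B
        · rw [hBU] at hy
          obtain ⟨k, hk⟩ := mem_iUnion.1 hy
          exact ⟨k, Or.inl hk⟩
        · exact ⟨0, Or.inr hy⟩
    have hkey := key_sigma_finite m (μ.restrict B) P hmeas hck hsub hp hα hαβ x
    -- LHS equality
    have hLHS : ∫⁻ y, u y ^ p ∂μ = ∫⁻ y, u y ^ p ∂(μ.restrict B) := by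
      rw [← lintegral_add_compl (fun y => u y ^ p) hBm]
      have hzero : ∫⁻ y in Bᶜ, u y ^ p ∂μ = 0 := by
        rw [setLIntegral_congr_fun hBm.compl (fun y hy => ?_), lintegral_zero]
        have : v y = 0 := not_not.1 fun h => hy h
        rw [hu0 y this, ENNReal.zero_rpow_of_pos hp0]
      rw [hzero, add_zero]
    have hRHS : (⨆ z : E, (∫⁻ y, heatResolvent P β z y ^ p ∂(μ.restrict B)) ^ (1/p))
        ≤ ⨆ z : E, (∫⁻ y, heatResolvent P β z y ^ p ∂μ) ^ (1/p) := by
      apply iSup_mono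
      intro z
      apply ENNReal.rpow_le_rpow _ (by positivity)
      exact lintegral_mono' Measure.restrict_le_self le_rfl
    calc (∫⁻ y, heatResolvent P α x y ^ p ∂μ) ^ (1/p)
        = (∫⁻ y, u y ^ p ∂(μ.restrict B)) ^ (1/p) := by rw [← hLHS]
      _ ≤ ENNReal.ofReal (β / α) *
            ⨆ z : E, (∫⁻ y, heatResolvent P β z y ^ p ∂(μ.restrict B)) ^ (1/p) := hkey
      _ ≤ _ := mul_le_mul' le_rfl hRHS
  · -- some level set has infinite measure: RHS is ∞
    push_neg at hfin
    obtain ⟨k, hk⟩ := hfin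
    have hk0 : k ≠ 0 := by
      rintro rfl
      have : Sv 0 = ∅ := by
        ext y
        simp [hSv]
      rw [this] at hk
      simp at hk
    have hcpos : (0:ℝ≥0∞) < ((k:ℝ≥0∞))⁻¹ ^ p := by
      apply ENNReal.rpow_pos
      · simp
      · simpa using hk0
    have hvint : ∫⁻ y, v y ^ p ∂μ = ∞ := by
      have h1 : ∫⁻ y, v y ^ p ∂μ ≥ ∫⁻ y in Sv k, v y ^ p ∂μ :=
        lintegral_mono' Measure.restrict_le_self le_rfl
      have h2 : ∫⁻ y in Sv k, v y ^ p ∂μ ≥ ∫⁻ _ in Sv k, ((k:ℝ≥0∞))⁻¹ ^ p ∂μ := by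
        apply setLIntegral_mono (hvm.pow_const p)
        intro y hy
        exact ENNReal.rpow_le_rpow (le_of_lt hy) hp0.le
      rw [setLIntegral_const] at h2
      rw [hk] at h2
      rw [ENNReal.mul_top hcpos.ne'] at h2
      exact top_le_iff.1 (le_trans h2 h1)
    have hStop : (⨆ z : E, (∫⁻ y, heatResolvent P β z y ^ p ∂μ) ^ (1/p)) = ∞ := by
      apply top_le_iff.1
      refine le_trans ?_ (le_iSup (fun z => (∫⁻ y, heatResolvent P β z y ^ p ∂μ) ^ (1/p)) x)
      rw [show (∫⁻ y, heatResolvent P β x y ^ p ∂μ) = ∞ from hvint,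
        ENNReal.top_rpow_of_pos (by positivity)]
    rw [hStop, ENNReal.mul_top]
    · exact le_top
    · simp only [ne_eq, ENNReal.ofReal_eq_zero, not_le]
      positivity
end

section
/- Let p ∈ [1,∞). For all a, t > 0 and every x ∈ E one has ∫_E (∫_a^{a+t} p_s(x,y) ds)^p μ(dy) ≤ sup_{z∈E} ∫_E (∫_0^t p_s(z,y) ds)^p μ(dy). -/
open MeasureTheory ENNReal Set Filter

private lemma lint_Ioc_shift (f : ℝ → ℝ≥0∞) (hf : Measurable f) (a b c : ℝ) :
    ∫⁻ s in Set.Ioc (a + b) (a + c), f s = ∫⁻ s in Set.Ioc b c, f (s + a) := by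
  conv_lhs => rw [← map_add_right_eq_self volume a]
  rw [setLIntegral_map measurableSet_Ioc hf (measurable_add_const a),
    preimage_add_const_Ioc]
  norm_num

private lemma jensen_aux {α : Type*} [MeasurableSpace α] (ν : Measure α) {w f : α → ℝ≥0∞}
    (hw : Measurable w) (hf : Measurable f) (hw1 : ∫⁻ a, w a ∂ν ≤ 1) {p : ℝ} (hp : 1 ≤ p) :
    (∫⁻ a, w a * f a ∂ν) ^ p ≤ ∫⁻ a, w a * f a ^ p ∂ν := by
  rcases eq_or_lt_of_le hp with h1 | h1
  · simp [← h1]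
  · have hp0 : (0:ℝ) < p := by linarith
    have hpq : p.HolderConjugate (p / (p - 1)) := Real.HolderConjugate.conjExponent h1
    set q := p / (p - 1) with hq
    have hq0 : (0:ℝ) ≤ 1 / q := hpq.symm.one_div_nonneg
    have hp0' : (0:ℝ) ≤ 1 / p := hpq.one_div_nonneg
    have key : ∫⁻ a, w a * f a ∂ν ≤ (∫⁻ a, w a * f a ^ p ∂ν) ^ (1 / p) := by
      have h := ENNReal.lintegral_mul_le_Lp_mul_Lq ν hpq
        (f := fun a => (w a) ^ (1/p) * f a) (g := fun a => (w a) ^ (1/q))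
        ((hw.pow_const _).mul hf).aemeasurable (hw.pow_const _).aemeasurable
      have e1 : ∀ a, ((fun a => (w a) ^ (1/p) * f a) * fun a => (w a) ^ (1/q)) a
          = w a * f a := by
        intro a
        simp only [Pi.mul_apply]
        rw [mul_right_comm, ← ENNReal.rpow_add_of_nonneg _ _ hp0' hq0,
          one_div, one_div, hpq.inv_add_inv_eq_one, ENNReal.rpow_one]
      have e2 : ∀ a, ((w a) ^ (1/p) * f a) ^ p = w a * f a ^ p := by
        intro a
        rw [ENNReal.mul_rpow_of_nonneg _ _ (le_of_lt hp0), ← ENNReal.rpow_mul,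
          one_div_mul_cancel (ne_of_gt hp0), ENNReal.rpow_one]
      have e3 : ∀ a, ((w a) ^ (1/q)) ^ q = w a := by
        intro a
        rw [← ENNReal.rpow_mul, one_div_mul_cancel (ne_of_gt hpq.symm.pos), ENNReal.rpow_one]
      simp only [e1, e2, e3] at h
      calc ∫⁻ a, w a * f a ∂ν ≤ (∫⁻ a, w a * f a ^ p ∂ν) ^ (1/p) * (∫⁻ a, w a ∂ν) ^ (1/q) := h
        _ ≤ (∫⁻ a, w a * f a ^ p ∂ν) ^ (1/p) * 1 := by
            gcongr
            exact ENNReal.rpow_le_one hw1 hq0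
        _ = (∫⁻ a, w a * f a ^ p ∂ν) ^ (1/p) := mul_one _
    calc (∫⁻ a, w a * f a ∂ν) ^ p
        ≤ ((∫⁻ a, w a * f a ^ p ∂ν) ^ (1/p)) ^ p := ENNReal.rpow_le_rpow key (le_of_lt hp0)
      _ = ∫⁻ a, w a * f a ^ p ∂ν := by
          rw [← ENNReal.rpow_mul, one_div_mul_cancel (ne_of_gt hp0), ENNReal.rpow_one]

private lemma meas_comp3 {E : Type*} [MeasurableSpace E] {P : ℝ → E → E → ℝ≥0∞}
    (hmeas : Measurable (fun q : ℝ × E × E => P q.1 q.2.1 q.2.2))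
    {δ : Type*} [MeasurableSpace δ] {f : δ → ℝ} {g h : δ → E}
    (hf : Measurable f) (hg : Measurable g) (hh : Measurable h) :
    Measurable fun d => P (f d) (g d) (h d) :=
  hmeas.comp (hf.prodMk (hg.prodMk hh))

private lemma meas_window {E : Type*} [MeasurableSpace E] {P : ℝ → E → E → ℝ≥0∞}
    (hmeas : Measurable (fun q : ℝ × E × E => P q.1 q.2.1 q.2.2)) (c d : ℝ) :
    Measurable (fun q : E × E => ∫⁻ s in Set.Ioc c d, P s q.1 q.2) :=
  Measurable.lintegral_prod_right'
    (f := fun r : (E × E) × ℝ => P r.2 r.1.1 r.1.2)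
    (meas_comp3 hmeas measurable_snd (measurable_fst.comp measurable_fst)
      (measurable_snd.comp measurable_fst))

private lemma core_sfinite {E : Type*} [MeasurableSpace E] (m : Measure E) [SigmaFinite m]
    (ν : Measure E) [SFinite ν] {P : ℝ → E → E → ℝ≥0∞}
    (hmeas : Measurable (fun q : ℝ × E × E => P q.1 q.2.1 q.2.2))
    (hck : ∀ s > (0:ℝ), ∀ t > (0:ℝ), ∀ x y : E,
      P (t + s) x y = ∫⁻ z, P t x z * P s z y ∂m)
    (hsub : ∀ t > (0:ℝ), ∀ x : E, ∫⁻ y, P t x y ∂m ≤ 1)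
    {p : ℝ} (hp : 1 ≤ p) {a t : ℝ} (ha : 0 < a) (ht : 0 < t) (x : E) :
    ∫⁻ y, (∫⁻ s in Set.Ioc a (a + t), P s x y) ^ p ∂ν
      ≤ ⨆ z : E, ∫⁻ y, (∫⁻ s in Set.Ioc (0:ℝ) t, P s z y) ^ p ∂ν := by
  have hFm : Measurable (fun q : E × E => ∫⁻ s in Set.Ioc (0:ℝ) t, P s q.1 q.2) :=
    meas_window hmeas 0 t
  have hFz : ∀ z : E, Measurable (fun y => ∫⁻ s in Set.Ioc (0:ℝ) t, P s z y) :=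
    fun z => hFm.comp (measurable_const.prodMk measurable_id)
  have hwm : Measurable (fun z => P a x z) :=
    meas_comp3 hmeas measurable_const measurable_const measurable_id
  have hK1 : ∀ y : E, (∫⁻ s in Set.Ioc a (a + t), P s x y)
      = ∫⁻ z, P a x z * (∫⁻ s in Set.Ioc (0:ℝ) t, P s z y) ∂m := by
    intro y
    have hshift := lint_Ioc_shift (fun s => P s x y)
      (meas_comp3 hmeas measurable_id measurable_const measurable_const) a 0 t
    rw [add_zero] at hshift
    rw [hshift]
    have h2 : ∫⁻ s in Set.Ioc (0:ℝ) t, P (s + a) x y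
        = ∫⁻ s in Set.Ioc (0:ℝ) t, ∫⁻ z, P a x z * P s z y ∂m := by
      refine setLIntegral_congr_fun measurableSet_Ioc (fun s hs => ?_)
      rw [add_comm]
      exact hck s hs.1 a ha x y
    rw [h2]
    rw [lintegral_lintegral_swap (f := fun (s : ℝ) (z : E) => P a x z * P s z y)
      (((meas_comp3 hmeas measurable_const measurable_const measurable_snd).mul
        (meas_comp3 hmeas measurable_fst measurable_snd measurable_const)).aemeasurable)]
    exact lintegral_congr fun z => lintegral_const_mul _
      (meas_comp3 hmeas measurable_id measurable_const measurable_const)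
  calc ∫⁻ y, (∫⁻ s in Set.Ioc a (a + t), P s x y) ^ p ∂ν
      = ∫⁻ y, (∫⁻ z, P a x z * (∫⁻ s in Set.Ioc (0:ℝ) t, P s z y) ∂m) ^ p ∂ν :=
        lintegral_congr fun y => by rw [hK1 y]
    _ ≤ ∫⁻ y, ∫⁻ z, P a x z * (∫⁻ s in Set.Ioc (0:ℝ) t, P s z y) ^ p ∂m ∂ν :=
        lintegral_mono fun y => jensen_aux m hwm
          (hFm.comp (measurable_id.prodMk measurable_const)) (hsub a ha x) hp
    _ = ∫⁻ z, ∫⁻ y, P a x z * (∫⁻ s in Set.Ioc (0:ℝ) t, P s z y) ^ p ∂ν ∂m := by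
        refine lintegral_lintegral_swap ?_
        exact ((hwm.comp measurable_snd).mul
          ((hFm.comp (measurable_snd.prodMk measurable_fst)).pow_const _)).aemeasurable
    _ = ∫⁻ z, P a x z * ∫⁻ y, (∫⁻ s in Set.Ioc (0:ℝ) t, P s z y) ^ p ∂ν ∂m :=
        lintegral_congr fun z => lintegral_const_mul _ ((hFz z).pow_const _)
    _ ≤ ∫⁻ z, P a x z * (⨆ z' : E, ∫⁻ y, (∫⁻ s in Set.Ioc (0:ℝ) t, P s z' y) ^ p ∂ν) ∂m :=
        lintegral_mono fun z => _root_.mul_le_mul_right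
          (le_iSup (fun z' => ∫⁻ y, (∫⁻ s in Set.Ioc (0:ℝ) t, P s z' y) ^ p ∂ν) z) _
    _ = (∫⁻ z, P a x z ∂m) * ⨆ z' : E, ∫⁻ y, (∫⁻ s in Set.Ioc (0:ℝ) t, P s z' y) ^ p ∂ν :=
        lintegral_mul_const _ hwm
    _ ≤ 1 * ⨆ z' : E, ∫⁻ y, (∫⁻ s in Set.Ioc (0:ℝ) t, P s z' y) ^ p ∂ν :=
        _root_.mul_le_mul_left (hsub a ha x) _
    _ = ⨆ z' : E, ∫⁻ y, (∫⁻ s in Set.Ioc (0:ℝ) t, P s z' y) ^ p ∂ν := one_mul _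

private lemma greedy {E : Type*} [MeasurableSpace E] (m μ : Measure E) [SigmaFinite m]
    {P : ℝ → E → E → ℝ≥0∞}
    (hmeas : Measurable (fun q : ℝ × E × E => P q.1 q.2.1 q.2.2))
    (hsymm : ∀ t > (0:ℝ), ∀ x y : E, P t x y = P t y x)
    (hck : ∀ s > (0:ℝ), ∀ t > (0:ℝ), ∀ x y : E,
      P (t + s) x y = ∫⁻ z, P t x z * P s z y ∂m)
    (hsub : ∀ t > (0:ℝ), ∀ x : E, ∫⁻ y, P t x y ∂m ≤ 1)
    {a t : ℝ} (ha : 0 < a) (ht : 0 < t) (x : E) {D : Set E} {ε : ℝ≥0∞}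
    (hε : ε ≠ 0) (hDm : MeasurableSet D)
    (hDlow : ∀ y ∈ D, ε ≤ ∫⁻ s in Set.Ioc a (a + t), P s x y)
    (hDtop : μ D = ⊤)
    (hDnull : ∀ z : E, μ (D ∩ {y | 0 < ∫⁻ s in Set.Ioc (0:ℝ) t, P s z y}) = 0) : False := by
  classical
  set τ := min a t with hτdef
  have hτ : 0 < τ := lt_min ha ht
  set r := τ / 2 with hrdef
  have hr : 0 < r := by positivity
  have hra : r < a := lt_of_lt_of_le (half_lt_self hτ) (min_le_left a t)
  have hrrt : r + r ≤ t := by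
    rw [hrdef, add_halves]
    exact min_le_right a t
  set G : E → E → ℝ≥0∞ := fun v y => ∫⁻ u in Set.Ioc (0:ℝ) r, P u v y with hGdef
  set ρ : E → ℝ≥0∞ := fun v => ∫⁻ σ in Set.Ioc (0:ℝ) (a + t), P σ x v with hρdef
  have hGm : Measurable (fun q : E × E => G q.1 q.2) := meas_window hmeas 0 r
  have hGvy : ∀ y : E, Measurable (fun v => G v y) :=
    fun y => hGm.comp (measurable_id.prodMk measurable_const)
  have hρm : Measurable ρ :=
    (meas_window hmeas 0 (a + t)).comp (measurable_const.prodMk measurable_id)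
  set lam := m.withDensity ρ with hlamdef
  -- finiteness of lam
  have hlamuniv : lam Set.univ ≤ ENNReal.ofReal (a + t) := by
    have h1 : lam Set.univ = ∫⁻ v, ρ v ∂m := by
      rw [hlamdef, withDensity_apply _ MeasurableSet.univ, Measure.restrict_univ]
    rw [h1]
    have h2 : ∫⁻ v, ρ v ∂m = ∫⁻ σ in Set.Ioc (0:ℝ) (a + t), ∫⁻ v, P σ x v ∂m := by
      exact lintegral_lintegral_swap (f := fun (v : E) (σ : ℝ) => P σ x v)
        ((meas_comp3 hmeas measurable_snd measurable_const measurable_fst).aemeasurable)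
    rw [h2]
    calc ∫⁻ σ in Set.Ioc (0:ℝ) (a + t), ∫⁻ v, P σ x v ∂m
        ≤ ∫⁻ _ in Set.Ioc (0:ℝ) (a + t), (1:ℝ≥0∞) :=
          setLIntegral_mono measurable_const fun σ hσ => hsub σ hσ.1 x
      _ = volume (Set.Ioc (0:ℝ) (a + t)) := by rw [setLIntegral_const, one_mul]
      _ = ENNReal.ofReal (a + t) := by rw [Real.volume_Ioc, sub_zero]
  have hlamtop : lam Set.univ ≠ ⊤ := ne_top_of_le_ne_top ofReal_ne_top hlamuniv
  -- K4
  have hK4 : ∀ y : E, ENNReal.ofReal r * (∫⁻ σ in Set.Ioc a (a + t), P σ x y)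
      ≤ ∫⁻ v, ρ v * G v y ∂m := by
    intro y
    have e1 : ∫⁻ v, ρ v * G v y ∂m
        = ∫⁻ v, (∫⁻ σ in Set.Ioc (0:ℝ) (a + t), P σ x v * G v y) ∂m := by
      refine lintegral_congr fun v => ?_
      exact (lintegral_mul_const _ (meas_comp3 hmeas measurable_id measurable_const
        measurable_const)).symm
    have e2 : ∫⁻ v, (∫⁻ σ in Set.Ioc (0:ℝ) (a + t), P σ x v * G v y) ∂m
        = ∫⁻ σ in Set.Ioc (0:ℝ) (a + t), ∫⁻ v, P σ x v * G v y ∂m := by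
      exact lintegral_lintegral_swap (f := fun (v : E) (σ : ℝ) => P σ x v * G v y)
        (((meas_comp3 hmeas measurable_snd measurable_const measurable_fst).mul
          ((hGvy y).comp measurable_fst)).aemeasurable)
    have e3 : ∀ σ ∈ Set.Ioc (0:ℝ) (a + t),
        ∫⁻ v, P σ x v * G v y ∂m = ∫⁻ u in Set.Ioc (0:ℝ) r, P (σ + u) x y := by
      intro σ hσ
      have i1 : ∫⁻ v, P σ x v * G v y ∂m
          = ∫⁻ v, (∫⁻ u in Set.Ioc (0:ℝ) r, P σ x v * P u v y) ∂m := by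
        refine lintegral_congr fun v => ?_
        exact (lintegral_const_mul _ (meas_comp3 hmeas measurable_id measurable_const
          measurable_const)).symm
      rw [i1, lintegral_lintegral_swap (f := fun (v : E) (u : ℝ) => P σ x v * P u v y)
        (((meas_comp3 hmeas measurable_const measurable_const measurable_fst).mul
          (meas_comp3 hmeas measurable_snd measurable_fst measurable_const)).aemeasurable)]
      refine setLIntegral_congr_fun measurableSet_Ioc (fun u hu => ?_)
      exact (hck u hu.1 σ hσ.1 x y).symm
    rw [e1, e2, setLIntegral_congr_fun measurableSet_Ioc e3,
      lintegral_lintegral_swap (f := fun (σ : ℝ) (u : ℝ) => P (σ + u) x y)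
        ((meas_comp3 hmeas (measurable_fst.add measurable_snd) measurable_const
          measurable_const).aemeasurable)]
    calc ENNReal.ofReal r * (∫⁻ σ in Set.Ioc a (a + t), P σ x y)
        = ∫⁻ _ in Set.Ioc (0:ℝ) r, (∫⁻ σ in Set.Ioc a (a + t), P σ x y) := by
          rw [setLIntegral_const, Real.volume_Ioc, sub_zero, mul_comm]
      _ ≤ ∫⁻ u in Set.Ioc (0:ℝ) r, ∫⁻ σ in Set.Ioc (0:ℝ) (a + t), P (σ + u) x y := by
          refine setLIntegral_mono ?_ ?_
          · exact Measurable.lintegral_prod_right'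
              (f := fun q : ℝ × ℝ => P (q.2 + q.1) x y)
              (meas_comp3 hmeas (measurable_snd.add measurable_fst) measurable_const
                measurable_const)
          · intro u hu
            have hshift := lint_Ioc_shift (fun s => P s x y)
              (meas_comp3 hmeas measurable_id measurable_const measurable_const) u 0 (a + t)
            rw [add_zero] at hshift
            rw [← hshift]
            refine lintegral_mono' (Measure.restrict_mono ?_ le_rfl) le_rfl
            exact Set.Ioc_subset_Ioc (le_of_lt (lt_of_le_of_lt hu.2 hra))
              (by linarith [hu.1])
  -- K5
  have hK5 : ∀ y y' : E, ∫⁻ v, G v y * G v y' ∂m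
      ≤ ENNReal.ofReal r * (∫⁻ s in Set.Ioc (0:ℝ) t, P s y y') := by
    intro y y'
    have e0 : ∀ v, G v y = ∫⁻ u in Set.Ioc (0:ℝ) r, P u y v := by
      intro v
      exact setLIntegral_congr_fun measurableSet_Ioc (fun u hu =>
        hsymm u hu.1 v y)
    have e1 : ∫⁻ v, G v y * G v y' ∂m
        = ∫⁻ v, (∫⁻ u in Set.Ioc (0:ℝ) r, P u y v * G v y') ∂m := by
      refine lintegral_congr fun v => ?_
      rw [e0 v]
      exact (lintegral_mul_const _ (meas_comp3 hmeas measurable_id measurable_const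
        measurable_const)).symm
    have e2 : ∫⁻ v, (∫⁻ u in Set.Ioc (0:ℝ) r, P u y v * G v y') ∂m
        = ∫⁻ u in Set.Ioc (0:ℝ) r, ∫⁻ v, P u y v * G v y' ∂m := by
      exact lintegral_lintegral_swap (f := fun (v : E) (u : ℝ) => P u y v * G v y')
        (((meas_comp3 hmeas measurable_snd measurable_const measurable_fst).mul
          ((hGvy y').comp measurable_fst)).aemeasurable)
    have e3 : ∀ u ∈ Set.Ioc (0:ℝ) r,
        ∫⁻ v, P u y v * G v y' ∂m = ∫⁻ u' in Set.Ioc (0:ℝ) r, P (u + u') y y' := by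
      intro u hu
      have i1 : ∫⁻ v, P u y v * G v y' ∂m
          = ∫⁻ v, (∫⁻ u' in Set.Ioc (0:ℝ) r, P u y v * P u' v y') ∂m := by
        refine lintegral_congr fun v => ?_
        exact (lintegral_const_mul _ (meas_comp3 hmeas measurable_id measurable_const
          measurable_const)).symm
      rw [i1, lintegral_lintegral_swap (f := fun (v : E) (u' : ℝ) => P u y v * P u' v y')
        (((meas_comp3 hmeas measurable_const measurable_const measurable_fst).mul
          (meas_comp3 hmeas measurable_snd measurable_fst measurable_const)).aemeasurable)]
      refine setLIntegral_congr_fun measurableSet_Ioc (fun u' hu' => ?_)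
      exact (hck u' hu'.1 u hu.1 y y').symm
    rw [e1, e2, setLIntegral_congr_fun measurableSet_Ioc e3]
    calc ∫⁻ u in Set.Ioc (0:ℝ) r, ∫⁻ u' in Set.Ioc (0:ℝ) r, P (u + u') y y'
        ≤ ∫⁻ _ in Set.Ioc (0:ℝ) r, (∫⁻ s in Set.Ioc (0:ℝ) t, P s y y') := by
          refine setLIntegral_mono measurable_const ?_
          intro u hu
          have hshift := lint_Ioc_shift (fun s => P s y y')
            (meas_comp3 hmeas measurable_id measurable_const measurable_const) u 0 r
          rw [add_zero] at hshift
          have : ∫⁻ u' in Set.Ioc (0:ℝ) r, P (u + u') y y'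
              = ∫⁻ s in Set.Ioc u (u + r), P s y y' := by
            rw [hshift]
            refine setLIntegral_congr_fun measurableSet_Ioc (fun u' _ => ?_)
            rw [add_comm]
          rw [this]
          refine lintegral_mono' (Measure.restrict_mono ?_ le_rfl) le_rfl
          exact Set.Ioc_subset_Ioc (le_of_lt hu.1) (by linarith [hu.2, hrrt])
      _ = ENNReal.ofReal r * (∫⁻ s in Set.Ioc (0:ℝ) t, P s y y') := by
          rw [setLIntegral_const, Real.volume_Ioc, sub_zero, mul_comm]
  -- the sets S_y
  set Sy : E → Set E := fun y => {v | 0 < ρ v * G v y} with hSydef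
  have hSym : ∀ y, MeasurableSet (Sy y) :=
    fun y => measurableSet_lt measurable_const (hρm.mul (hGvy y))
  have hpos : ∀ y ∈ D, lam (Sy y) ≠ 0 := by
    intro y hyD h0
    have hm0 : m (Sy y) = 0 := by
      have h1 : ∫⁻ v in Sy y, ρ v ∂m = 0 := by
        rw [← withDensity_apply _ (hSym y)]; exact h0
      have h2 := (lintegral_eq_zero_iff hρm).mp h1
      have h3 : (m.restrict (Sy y)) {v | ρ v ≠ 0} = 0 := h2
      have h4 : Sy y ⊆ {v | ρ v ≠ 0} := by
        intro v hv
        intro hρ0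
        rw [Set.mem_setOf_eq] at hv
        rw [hρ0, zero_mul] at hv
        exact lt_irrefl _ hv
      have := measure_mono_null h4 h3
      rwa [Measure.restrict_apply_self] at this
    have hae : (fun v => ρ v * G v y) =ᶠ[ae m] 0 := by
      refine measure_mono_null ?_ hm0
      intro v hv
      simp only [Set.mem_compl_iff, Set.mem_setOf_eq, Pi.zero_apply] at hv ⊢
      exact pos_iff_ne_zero.mpr hv
    have hint0 : ∫⁻ v, ρ v * G v y ∂m = 0 := by
      have := lintegral_congr_ae hae
      simpa using this
    have h4 := hK4 y
    rw [hint0, le_zero_iff, mul_eq_zero] at h4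
    rcases h4 with h4 | h4
    · exact (ENNReal.ofReal_pos.mpr hr).ne' h4
    · exact hε (le_zero_iff.mp (h4 ▸ hDlow y hyD))
  have hdisj : ∀ y y' : E, (∫⁻ s in Set.Ioc (0:ℝ) t, P s y y') = 0 →
      lam (Sy y ∩ Sy y') = 0 := by
    intro y y' hF0
    have h1 : ∫⁻ v, G v y * G v y' ∂m = 0 := by
      refine le_antisymm ?_ (zero_le)
      calc ∫⁻ v, G v y * G v y' ∂m ≤ ENNReal.ofReal r * (∫⁻ s in Set.Ioc (0:ℝ) t, P s y y') :=
            hK5 y y'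
        _ = 0 := by rw [hF0, mul_zero]
    have h2 := (lintegral_eq_zero_iff ((hGvy y).mul (hGvy y'))).mp h1
    have h3 : m {v | G v y * G v y' ≠ 0} = 0 := h2
    have h4 : Sy y ∩ Sy y' ⊆ {v | G v y * G v y' ≠ 0} := by
      rintro v ⟨hv1, hv2⟩
      rw [Set.mem_setOf_eq] at hv1 hv2 ⊢
      have hg1 : G v y ≠ 0 := by
        intro h; rw [h, mul_zero] at hv1; exact lt_irrefl _ hv1
      have hg2 : G v y' ≠ 0 := by
        intro h; rw [h, mul_zero] at hv2; exact lt_irrefl _ hv2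
      exact mul_ne_zero hg1 hg2
    exact (withDensity_absolutelyContinuous m ρ) (measure_mono_null h4 h3)
  -- Φ and pick
  set Φ : Set E → ℝ≥0∞ := fun A => ⨆ y ∈ A, lam (Sy y) with hΦdef
  have hΦtop : ∀ A, Φ A ≠ ⊤ :=
    fun A => ne_top_of_le_ne_top hlamtop (iSup₂_le fun y _ => measure_mono (Set.subset_univ _))
  have hDne : D.Nonempty := nonempty_of_measure_ne_zero (hDtop ▸ ENNReal.top_ne_zero)
  have hEne : Nonempty E := ⟨hDne.some⟩
  set pick : Set E → E :=
    fun A => if h : ∃ y, y ∈ A ∧ Φ A / 2 < lam (Sy y) then h.choose else Classical.arbitrary E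
    with hpickdef
  have hpick : ∀ A : Set E, A ⊆ D → μ A = ⊤ →
      pick A ∈ A ∧ Φ A / 2 < lam (Sy (pick A)) := by
    intro A hAD hAtop
    have hAne : A.Nonempty := nonempty_of_measure_ne_zero (hAtop ▸ ENNReal.top_ne_zero)
    have hΦ0 : Φ A ≠ 0 := by
      obtain ⟨y, hy⟩ := hAne
      intro h0
      have : lam (Sy y) ≤ Φ A := le_iSup₂ (f := fun y (_ : y ∈ A) => lam (Sy y)) y hy
      rw [h0, le_zero_iff] at this
      exact hpos y (hAD hy) this
    have hhalf : Φ A / 2 < Φ A := ENNReal.half_lt_self hΦ0 (hΦtop A)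
    have hex : ∃ y, y ∈ A ∧ Φ A / 2 < lam (Sy y) := by
      conv_rhs at hhalf => rw [hΦdef]
      simp only [lt_iSup_iff] at hhalf
      obtain ⟨y, hy, hlt⟩ := hhalf
      exact ⟨y, hy, hlt⟩
    rw [hpickdef]
    simp only [dif_pos hex]
    exact hex.choose_spec
  -- the recursive sequence of sets
  set bad : E → Set E := fun z => {w | 0 < ∫⁻ s in Set.Ioc (0:ℝ) t, P s z w} with hbaddef
  have hbadm : ∀ z, MeasurableSet (bad z) := by
    intro z
    exact measurableSet_lt measurable_const
      ((meas_window hmeas 0 t).comp (measurable_const.prodMk measurable_id))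
  set Sset : ℕ → Set E := fun n => Nat.rec D (fun _ A => A \ bad (pick A)) n with hSsetdef
  have hSset0 : Sset 0 = D := rfl
  have hSsetS : ∀ n, Sset (n + 1) = Sset n \ bad (pick (Sset n)) := fun n => rfl
  have hinv : ∀ n, MeasurableSet (Sset n) ∧ Sset n ⊆ D ∧ μ (Sset n) = ⊤ := by
    intro n
    induction n with
    | zero => exact ⟨hDm, le_refl _, hDtop⟩
    | succ n ih =>
      refine ⟨ih.1.diff (hbadm _), (Set.diff_subset).trans ih.2.1, ?_⟩
      have hnull : μ (Sset n ∩ bad (pick (Sset n))) = 0 :=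
        measure_mono_null (Set.inter_subset_inter_left _ ih.2.1) (hDnull (pick (Sset n)))
      have : μ (Sset n) ≤ μ (Sset n \ bad (pick (Sset n))) + μ (Sset n ∩ bad (pick (Sset n))) := by
        conv_lhs => rw [← Set.diff_union_inter (Sset n) (bad (pick (Sset n)))]
        exact measure_union_le _ _
      rw [hnull, add_zero, ih.2.2, top_le_iff] at this
      exact this
  set y : ℕ → E := fun n => pick (Sset n) with hydef
  have hy : ∀ n, y n ∈ Sset n ∧ Φ (Sset n) / 2 < lam (Sy (y n)) :=
    fun n => hpick _ (hinv n).2.1 (hinv n).2.2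
  have hdec : ∀ n, Sset (n + 1) ⊆ Sset n := fun n => Set.diff_subset
  have hmono : ∀ k n, k < n → Sset n ⊆ Sset (k + 1) := by
    intro k n hkn
    induction n with
    | zero => omega
    | succ n ih =>
      rcases Nat.lt_succ_iff_lt_or_eq.mp hkn with h | h
      · exact (hdec n).trans (ih h)
      · rw [h]
  have hF0 : ∀ k n, k < n → (∫⁻ s in Set.Ioc (0:ℝ) t, P s (y k) (y n)) = 0 := by
    intro k n hkn
    have h1 : y n ∈ Sset (k + 1) := hmono k n hkn (hy n).1
    rw [hSsetS k] at h1
    have h2 : y n ∉ bad (y k) := h1.2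
    rw [hbaddef] at h2
    simp only [Set.mem_setOf_eq, not_lt, le_zero_iff] at h2
    exact h2
  have hAED : Pairwise (Function.onFun (AEDisjoint lam) fun n => Sy (y n)) := by
    intro k n hkn
    rcases hkn.lt_or_gt with h | h
    · exact hdisj (y k) (y n) (hF0 k n h)
    · have := hdisj (y n) (y k) (hF0 n k h)
      rwa [Set.inter_comm] at this
  have hsum := measure_iUnion₀ hAED (fun n => (hSym (y n)).nullMeasurableSet)
  have hsumfin : ∑' n : ℕ, lam (Sy (y n)) ≠ ⊤ := by
    rw [← hsum]
    exact ne_top_of_le_ne_top hlamtop (measure_mono (Set.subset_univ _))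
  -- the point y*
  set W := D \ ⋃ n, bad (y n) with hWdef
  have hWtop : μ W = ⊤ := by
    have hnull : μ (D ∩ ⋃ n, bad (y n)) = 0 := by
      rw [Set.inter_iUnion]
      exact measure_iUnion_null fun n => hDnull (y n)
    have : μ D ≤ μ W + μ (D ∩ ⋃ n, bad (y n)) := by
      rw [hWdef]
      conv_lhs => rw [← Set.diff_union_inter D (⋃ n, bad (y n))]
      exact measure_union_le _ _
    rw [hnull, add_zero, hDtop, top_le_iff] at this
    exact this
  obtain ⟨ystar, hystar⟩ : W.Nonempty := nonempty_of_measure_ne_zero (hWtop ▸ ENNReal.top_ne_zero)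
  have hystarD : ystar ∈ D := hystar.1
  have hystarS : ∀ n, ystar ∈ Sset n := by
    intro n
    induction n with
    | zero => exact hystarD
    | succ n ih =>
      rw [hSsetS n]
      refine ⟨ih, fun hmem => ?_⟩
      exact hystar.2 (Set.mem_iUnion.mpr ⟨n, hmem⟩)
  have hstar_le : ∀ n, lam (Sy ystar) ≤ 2 * lam (Sy (y n)) := by
    intro n
    have h1 : lam (Sy ystar) ≤ Φ (Sset n) :=
      le_iSup₂ (f := fun y (_ : y ∈ Sset n) => lam (Sy y)) ystar (hystarS n)
    have h2 : Φ (Sset n) ≤ 2 * lam (Sy (y n)) := by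
      have h3 := (hy n).2
      calc Φ (Sset n) = Φ (Sset n) / 2 * 2 := by
            rw [ENNReal.div_mul_cancel (by norm_num) (by norm_num)]
        _ ≤ lam (Sy (y n)) * 2 := _root_.mul_le_mul_left (le_of_lt h3) 2
        _ = 2 * lam (Sy (y n)) := mul_comm _ _
    exact h1.trans h2
  have hc0 : lam (Sy ystar) ≠ 0 := hpos ystar hystarD
  have hdiv : ∀ n : ℕ, lam (Sy ystar) / 2 ≤ lam (Sy (y n)) := by
    intro n
    rw [ENNReal.div_le_iff (by norm_num) (by norm_num)]
    rw [mul_comm]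
    exact hstar_le n
  have htsum : (⊤ : ℝ≥0∞) ≤ ∑' n : ℕ, lam (Sy (y n)) := by
    calc (⊤ : ℝ≥0∞) = ∑' _ : ℕ, lam (Sy ystar) / 2 :=
          (ENNReal.tsum_const_eq_top_of_ne_zero (by
            simp only [ne_eq, ENNReal.div_eq_zero_iff, not_or]
            exact ⟨hc0, by norm_num⟩)).symm
      _ ≤ ∑' n : ℕ, lam (Sy (y n)) := ENNReal.tsum_le_tsum hdiv
  exact hsumfin (top_le_iff.mp htsum)

theorem stmt_1 {E : Type*} [MeasurableSpace E] (m μ : Measure E) [SigmaFinite m]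
    (P : ℝ → E → E → ℝ≥0∞)
    (hmeas : Measurable (fun q : ℝ × E × E => P q.1 q.2.1 q.2.2))
    (hsymm : ∀ t > (0:ℝ), ∀ x y : E, P t x y = P t y x)
    (hck : ∀ s > (0:ℝ), ∀ t > (0:ℝ), ∀ x y : E,
      P (t + s) x y = ∫⁻ z, P t x z * P s z y ∂m)
    (hsub : ∀ t > (0:ℝ), ∀ x : E, ∫⁻ y, P t x y ∂m ≤ 1)
    (p : ℝ) (hp : 1 ≤ p) (a t : ℝ) (ha : 0 < a) (ht : 0 < t) (x : E) :
    ∫⁻ y, (∫⁻ s in Set.Ioc a (a + t), P s x y) ^ p ∂μ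
      ≤ ⨆ z : E, ∫⁻ y, (∫⁻ s in Set.Ioc (0:ℝ) t, P s z y) ^ p ∂μ := by
  classical
  have hp0 : (0:ℝ) < p := lt_of_lt_of_le one_pos hp
  set g : E → ℝ≥0∞ := fun y => ∫⁻ s in Set.Ioc a (a + t), P s x y with hgdef
  set gp : E → ℝ≥0∞ := fun y => g y ^ p with hgpdef
  have hgm : Measurable g :=
    (meas_window hmeas a (a + t)).comp (measurable_const.prodMk measurable_id)
  have hgpm : Measurable gp := hgm.pow_const _
  set S := ⨆ z : E, ∫⁻ y, (∫⁻ s in Set.Ioc (0:ℝ) t, P s z y) ^ p ∂μ with hSdef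
  show ∫⁻ y, gp y ∂μ ≤ S
  have hFzm : ∀ z : E, Measurable (fun y => (∫⁻ s in Set.Ioc (0:ℝ) t, P s z y) ^ p) :=
    fun z => ((meas_window hmeas 0 t).comp
      (measurable_const.prodMk measurable_id)).pow_const _
  set B : ℕ → Set E := fun n => {y | ((n:ℝ≥0∞) + 1)⁻¹ < gp y} with hBdef
  have hBm : ∀ n, MeasurableSet (B n) :=
    fun n => measurableSet_lt measurable_const hgpm
  have hBcover : ∀ y : E, gp y ≠ 0 → ∃ n : ℕ, y ∈ B n := by
    intro y hy
    obtain ⟨n, hn⟩ := ENNReal.exists_inv_nat_lt hy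
    refine ⟨n, ?_⟩
    have h1 : ((n:ℝ≥0∞) + 1)⁻¹ ≤ ((n:ℝ≥0∞))⁻¹ := ENNReal.inv_le_inv.mpr le_self_add
    exact lt_of_le_of_lt h1 hn
  by_cases hA : ∀ n : ℕ, μ (B n) < ⊤
  · -- σ-finite case
    set T : Set E := {y | gp y ≠ 0} with hTdef
    have hTm : MeasurableSet T := by
      have : T = (gp ⁻¹' {0})ᶜ := by
        ext y; simp [hTdef]
      rw [this]
      exact (hgpm (measurableSet_singleton 0)).compl
    haveI : SigmaFinite (μ.restrict T) := by
      refine ⟨⟨⟨fun n => B n ∪ Tᶜ, fun _ => mem_univ _, fun n => ?_, ?_⟩⟩⟩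
      · calc (μ.restrict T) (B n ∪ Tᶜ)
            ≤ (μ.restrict T) (B n) + (μ.restrict T) Tᶜ := measure_union_le _ _
          _ ≤ μ (B n) + 0 := by
              refine add_le_add (le_trans (le_of_eq (Measure.restrict_apply (hBm n)))
                (measure_mono Set.inter_subset_left)) (le_of_eq ?_)
              rw [Measure.restrict_apply hTm.compl, Set.compl_inter_self]
              exact measure_empty
          _ < ⊤ := by rw [add_zero]; exact hA n
      · ext y
        simp only [Set.mem_iUnion, Set.mem_union, Set.mem_univ, iff_true]
        by_cases hy : gp y = 0
        · exact ⟨0, Or.inr (by simp [hTdef, hy])⟩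
        · obtain ⟨n, hn⟩ := hBcover y hy
          exact ⟨n, Or.inl hn⟩
    have hrestr : ∫⁻ y, gp y ∂μ = ∫⁻ y, gp y ∂(μ.restrict T) := by
      have hind : ∀ y, T.indicator gp y = gp y := by
        intro y
        by_cases hy : y ∈ T
        · rw [Set.indicator_of_mem hy]
        · rw [Set.indicator_of_notMem hy]
          simp only [hTdef, Set.mem_setOf_eq, not_not] at hy
          exact hy.symm
      calc ∫⁻ y, gp y ∂μ = ∫⁻ y, T.indicator gp y ∂μ := (lintegral_congr hind).symm
        _ = ∫⁻ y in T, gp y ∂μ := lintegral_indicator hTm gp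
    rw [hrestr]
    calc ∫⁻ y, gp y ∂(μ.restrict T)
        ≤ ⨆ z : E, ∫⁻ y, (∫⁻ s in Set.Ioc (0:ℝ) t, P s z y) ^ p ∂(μ.restrict T) :=
          core_sfinite m (μ.restrict T) hmeas hck hsub hp ha ht x
      _ ≤ S := iSup_mono fun z => lintegral_mono' Measure.restrict_le_self le_rfl
  · -- some level set has infinite measure
    push_neg at hA
    obtain ⟨n₀, hn₀⟩ := hA
    set ε₀ : ℝ≥0∞ := ((n₀:ℝ≥0∞) + 1)⁻¹ with hε₀def
    have hε₀0 : ε₀ ≠ 0 := ENNReal.inv_ne_zero.mpr (by simp)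
    have hε₀top : ε₀ ≠ ⊤ := ENNReal.inv_ne_top.mpr (by simp)
    have hBtop : μ (B n₀) = ⊤ := top_le_iff.mp hn₀
    suffices hS : S = ⊤ by rw [hS]; exact le_top
    -- lower bound from finite pieces
    have hpiece : ∀ C : Set E, MeasurableSet C → C ⊆ B n₀ → μ C ≠ ⊤ → ε₀ * μ C ≤ S := by
      intro C hCm hCB hCfin
      haveI : IsFiniteMeasure (μ.restrict C) :=
        ⟨by rw [Measure.restrict_apply_univ]; exact lt_top_iff_ne_top.mpr hCfin⟩
      calc ε₀ * μ C = ∫⁻ _ in C, ε₀ ∂μ := (setLIntegral_const C ε₀).symm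
        _ ≤ ∫⁻ y in C, gp y ∂μ := setLIntegral_mono hgpm fun y hy => le_of_lt (hCB hy)
        _ = ∫⁻ y, gp y ∂(μ.restrict C) := rfl
        _ ≤ ⨆ z : E, ∫⁻ y, (∫⁻ s in Set.Ioc (0:ℝ) t, P s z y) ^ p ∂(μ.restrict C) :=
          core_sfinite m (μ.restrict C) hmeas hck hsub hp ha ht x
        _ ≤ S := iSup_mono fun z => lintegral_mono' Measure.restrict_le_self le_rfl
    by_cases hMb : ∃ M : ℝ≥0∞, M ≠ ⊤ ∧
        ∀ C : Set E, MeasurableSet C → C ⊆ B n₀ → μ C ≠ ⊤ → μ C ≤ M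
    · -- bounded case: build the purely infinite part
      obtain ⟨M, hMne, hMb⟩ := hMb
      set Msup : ℝ≥0∞ := ⨆ (C : Set E) (_ : MeasurableSet C ∧ C ⊆ B n₀ ∧ μ C ≠ ⊤), μ C
        with hMsupdef
      have hMsuple : Msup ≤ M := iSup₂_le fun C hC => hMb C hC.1 hC.2.1 hC.2.2
      have hMsupne : Msup ≠ ⊤ := ne_top_of_le_ne_top hMne hMsuple
      have hex : ∀ j : ℕ, ∃ C : Set E, (MeasurableSet C ∧ C ⊆ B n₀ ∧ μ C ≠ ⊤) ∧
          Msup - ((j:ℝ≥0∞) + 1)⁻¹ ≤ μ C := by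
        intro j
        rcases eq_or_ne Msup 0 with h0 | h0
        · exact ⟨∅, ⟨MeasurableSet.empty, Set.empty_subset _, by simp⟩, by
            rw [h0, zero_tsub]; exact zero_le⟩
        · have hlt : Msup - ((j:ℝ≥0∞) + 1)⁻¹ < Msup :=
            ENNReal.sub_lt_self hMsupne h0 (ENNReal.inv_ne_zero.mpr (by simp))
          conv_rhs at hlt => rw [hMsupdef]
          rw [lt_iSup_iff] at hlt
          obtain ⟨C, hC⟩ := hlt
          rw [lt_iSup_iff] at hC
          obtain ⟨hCp, hlt'⟩ := hC
          exact ⟨C, hCp, le_of_lt hlt'⟩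
      choose Cs hCs hCslow using hex
      set B₀ : Set E := ⋃ j, Cs j with hB₀def
      have hB₀m : MeasurableSet B₀ := MeasurableSet.iUnion fun j => (hCs j).1
      have hAccm : ∀ k : ℕ, MeasurableSet (Set.accumulate Cs k) := by
        intro k
        rw [Set.accumulate_def]
        exact MeasurableSet.biUnion (Set.to_countable _) fun j _ => (hCs j).1
      have hAccB : ∀ k : ℕ, Set.accumulate Cs k ⊆ B n₀ := by
        intro k
        rw [Set.accumulate_def]
        exact Set.iUnion₂_subset fun j _ => (hCs j).2.1
      have hAccfin : ∀ k : ℕ, μ (Set.accumulate Cs k) ≠ ⊤ := by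
        intro k
        rw [Set.accumulate_def]
        refine ne_of_lt (measure_biUnion_lt_top (Set.finite_Iic k) fun j _ => ?_)
        exact lt_top_iff_ne_top.mpr (hCs j).2.2
      have hAccle : ∀ k : ℕ, μ (Set.accumulate Cs k) ≤ Msup := by
        intro k
        exact le_iSup₂ (f := fun (C : Set E) (_ : MeasurableSet C ∧ C ⊆ B n₀ ∧ μ C ≠ ⊤) => μ C)
          (Set.accumulate Cs k) ⟨hAccm k, hAccB k, hAccfin k⟩
      have hB₀sup : μ B₀ = ⨆ k, μ (Set.accumulate Cs k) := by
        rw [hB₀def, ← Set.iUnion_accumulate]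
        exact monotone_accumulate.directed_le.measure_iUnion
      have hB₀le : μ B₀ ≤ Msup := by
        rw [hB₀sup]
        exact iSup_le hAccle
      have hB₀ne : μ B₀ ≠ ⊤ := ne_top_of_le_ne_top hMsupne hB₀le
      have hMsup_le : ∀ j : ℕ, Msup ≤ μ B₀ + ((j:ℝ≥0∞) + 1)⁻¹ := by
        intro j
        rw [← tsub_le_iff_right]
        exact le_trans (hCslow j) (measure_mono (Set.subset_iUnion Cs j))
      set D : Set E := B n₀ \ B₀ with hDdef
      have hDm : MeasurableSet D := (hBm n₀).diff hB₀m
      have hDtop : μ D = ⊤ := by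
        have h1 : μ (B n₀) ≤ μ D + μ B₀ :=
          (measure_mono (Set.subset_diff_union _ _)).trans (measure_union_le _ _)
        by_contra hne
        exact (ENNReal.add_ne_top.mpr ⟨hne, hB₀ne⟩) (top_le_iff.mp (hBtop ▸ h1))
      have hDfin0 : ∀ C : Set E, MeasurableSet C → C ⊆ D → μ C ≠ ⊤ → μ C = 0 := by
        intro C hCm hCD hCne
        have hCk : ∀ k : ℕ, μ C + μ (Set.accumulate Cs k) ≤ Msup := by
          intro k
          have hdisj : Disjoint C (Set.accumulate Cs k) := by
            refine Set.disjoint_left.mpr fun y hyC hyA => ?_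
            have : y ∈ B₀ := by
              rw [hB₀def, ← Set.iUnion_accumulate]
              exact Set.mem_iUnion.mpr ⟨k, hyA⟩
            exact (hCD hyC).2 this
          have hunion : μ (C ∪ Set.accumulate Cs k) = μ C + μ (Set.accumulate Cs k) :=
            measure_union hdisj (hAccm k)
          have hsubB : C ∪ Set.accumulate Cs k ⊆ B n₀ :=
            Set.union_subset (hCD.trans Set.diff_subset) (hAccB k)
          have hfin : μ (C ∪ Set.accumulate Cs k) ≠ ⊤ := by
            rw [hunion]; exact ENNReal.add_ne_top.mpr ⟨hCne, hAccfin k⟩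
          rw [← hunion]
          exact le_iSup₂ (f := fun (C : Set E) (_ : MeasurableSet C ∧ C ⊆ B n₀ ∧ μ C ≠ ⊤) => μ C)
            (C ∪ Set.accumulate Cs k) ⟨hCm.union (hAccm k), hsubB, hfin⟩
        have hCB₀ : μ C + μ B₀ ≤ Msup := by
          rw [hB₀sup, ENNReal.add_iSup]
          exact iSup_le hCk
        have h3 : ∀ j : ℕ, μ C ≤ ((j:ℝ≥0∞) + 1)⁻¹ := by
          intro j
          have h2 : μ C + μ B₀ ≤ ((j:ℝ≥0∞) + 1)⁻¹ + μ B₀ := by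
            rw [add_comm (((j:ℝ≥0∞) + 1)⁻¹)]
            exact hCB₀.trans (hMsup_le j)
          exact (WithTop.add_le_add_iff_right hB₀ne).mp h2
        by_contra hC0
        obtain ⟨n, hn⟩ := ENNReal.exists_inv_nat_lt hC0
        have h4 : ((n:ℝ≥0∞) + 1)⁻¹ ≤ ((n:ℝ≥0∞))⁻¹ := ENNReal.inv_le_inv.mpr le_self_add
        exact absurd ((h3 n).trans h4) (not_le.mpr hn)
      by_cases hz : ∃ z : E, ∃ j : ℕ,
          μ (D ∩ {y | ((j:ℝ≥0∞) + 1)⁻¹ < (∫⁻ s in Set.Ioc (0:ℝ) t, P s z y) ^ p}) ≠ 0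
      · obtain ⟨z, j, hzj⟩ := hz
        set C := D ∩ {y | ((j:ℝ≥0∞) + 1)⁻¹ < (∫⁻ s in Set.Ioc (0:ℝ) t, P s z y) ^ p} with hCdef
        have hCm : MeasurableSet C :=
          hDm.inter (measurableSet_lt measurable_const (hFzm z))
        have hCtop : μ C = ⊤ := by
          by_contra h
          exact hzj (hDfin0 C hCm Set.inter_subset_left h)
        have h1 : (⊤:ℝ≥0∞) ≤ ∫⁻ y, (∫⁻ s in Set.Ioc (0:ℝ) t, P s z y) ^ p ∂μ := by
          calc (⊤:ℝ≥0∞) = ((j:ℝ≥0∞) + 1)⁻¹ * μ C := by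
                rw [hCtop, ENNReal.mul_top (ENNReal.inv_ne_zero.mpr (by simp))]
            _ = ∫⁻ _ in C, ((j:ℝ≥0∞) + 1)⁻¹ ∂μ := (setLIntegral_const C _).symm
            _ ≤ ∫⁻ y in C, (∫⁻ s in Set.Ioc (0:ℝ) t, P s z y) ^ p ∂μ :=
                setLIntegral_mono (hFzm z) fun y hy => le_of_lt hy.2
            _ ≤ ∫⁻ y, (∫⁻ s in Set.Ioc (0:ℝ) t, P s z y) ^ p ∂μ :=
                setLIntegral_le_lintegral _ _
        rw [hSdef]
        exact top_le_iff.mp (h1.trans (le_iSup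
          (fun z' => ∫⁻ y, (∫⁻ s in Set.Ioc (0:ℝ) t, P s z' y) ^ p ∂μ) z))
      · -- purely infinite part with all kernel level sets null: contradiction
        exfalso
        push_neg at hz
        -- lower bound for g on D
        set εg : ℝ≥0∞ := ε₀ ^ (1/p) with hεgdef
        have hεg0 : εg ≠ 0 := by
          rw [hεgdef]
          simp only [ne_eq, ENNReal.rpow_eq_zero_iff, not_or, not_and_or]
          constructor
          · exact Or.inl hε₀0
          · exact Or.inl hε₀top
        have hDlow : ∀ y ∈ D, εg ≤ g y := by
          intro y hy
          have h1 : ε₀ ≤ gp y := le_of_lt hy.1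
          have h2 : ε₀ ^ (1/p) ≤ (gp y) ^ (1/p) := ENNReal.rpow_le_rpow h1 (by positivity)
          rwa [hgpdef, ← ENNReal.rpow_mul, mul_one_div_cancel (ne_of_gt hp0),
            ENNReal.rpow_one] at h2
        have hDnull : ∀ z : E, μ (D ∩ {y | 0 < ∫⁻ s in Set.Ioc (0:ℝ) t, P s z y}) = 0 := by
          intro z
          have hsub' : D ∩ {y | 0 < ∫⁻ s in Set.Ioc (0:ℝ) t, P s z y}
              ⊆ ⋃ j : ℕ, D ∩ {y | ((j:ℝ≥0∞) + 1)⁻¹ < (∫⁻ s in Set.Ioc (0:ℝ) t, P s z y) ^ p} := by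
            rintro y ⟨hyD, hy⟩
            rw [Set.mem_setOf_eq] at hy
            have hne : (∫⁻ s in Set.Ioc (0:ℝ) t, P s z y) ^ p ≠ 0 := by
              simp only [ne_eq, ENNReal.rpow_eq_zero_iff, not_or, not_and_or]
              exact ⟨Or.inl (pos_iff_ne_zero.mp hy), Or.inr (by linarith)⟩
            obtain ⟨j, hj⟩ := ENNReal.exists_inv_nat_lt hne
            have h4 : ((j:ℝ≥0∞) + 1)⁻¹ ≤ ((j:ℝ≥0∞))⁻¹ := ENNReal.inv_le_inv.mpr le_self_add
            exact Set.mem_iUnion.mpr ⟨j, hyD, lt_of_le_of_lt h4 hj⟩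
          exact measure_mono_null hsub' (measure_iUnion_null fun j => hz z j)
        exact greedy m μ hmeas hsymm hck hsub ha ht x hεg0 hDm hDlow hDtop hDnull
    · -- unbounded case
      push_neg at hMb
      rw [hSdef]
      by_contra hne
      obtain ⟨k, hk⟩ := ENNReal.exists_nat_gt hne
      have hkS : (k:ℝ≥0∞) ≤ ⨆ z : E, ∫⁻ y, (∫⁻ s in Set.Ioc (0:ℝ) t, P s z y) ^ p ∂μ := by
        have hMne : (k:ℝ≥0∞) * ε₀⁻¹ ≠ ⊤ :=
          ENNReal.mul_ne_top (ENNReal.natCast_ne_top k) (ENNReal.inv_ne_top.mpr hε₀0)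
        obtain ⟨C, hCm, hCB, hCfin, hClt⟩ := hMb ((k:ℝ≥0∞) * ε₀⁻¹) hMne
        calc (k:ℝ≥0∞) = ε₀ * ((k:ℝ≥0∞) * ε₀⁻¹) := by
              rw [mul_comm (k:ℝ≥0∞), ← mul_assoc, ENNReal.mul_inv_cancel hε₀0 hε₀top, one_mul]
          _ ≤ ε₀ * μ C := _root_.mul_le_mul_right (le_of_lt hClt) ε₀
          _ ≤ S := hpiece C hCm hCB hCfin
      exact absurd (hk.trans_le hkS) (lt_irrefl _)
end

section
/- Let p' ∈ (1,∞), set q = p'/(p'−1), and suppose there is a constant C > 0 such that p_t(x,y) ≤ C t^{−q} for all t > 0 and x,y ∈ E. Let p ∈ [1,p') and δ = 1 − q(p−1)/p (so δ > 0). Then for every α > 0, sup_{x∈E} (∫_E r_α(x,y)^p m(dy))^{1/p} ≤ C^{(p−1)/p} Γ(δ) α^{−δ}, where Γ is the Gamma function. In particular, the reference measure m belongs to the L^p-Kato class with order δ. -/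
open MeasureTheory ENNReal Set Filter

lemma gammaLintegral {α δ : ℝ} (hα : 0 < α) (hδ : 0 < δ) :
    ∫⁻ t in Set.Ioi (0:ℝ), ENNReal.ofReal (Real.exp (-(α * t))) * ENNReal.ofReal (t ^ (δ - 1))
      = ENNReal.ofReal (Real.Gamma δ * α ^ (-δ)) := by
  have hint : MeasureTheory.IntegrableOn
      (fun t : ℝ => t ^ (δ - 1) * Real.exp (-(α * t))) (Set.Ioi 0) := by
    have h := integrableOn_rpow_mul_exp_neg_mul_rpow (by linarith : (-1:ℝ) < δ - 1) zero_lt_one hα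
    simpa [Real.rpow_one, neg_mul] using h
  have hnn : 0 ≤ᵐ[volume.restrict (Set.Ioi (0:ℝ))]
      fun t : ℝ => t ^ (δ - 1) * Real.exp (-(α * t)) := by
    filter_upwards [ae_restrict_mem measurableSet_Ioi] with t ht
    exact mul_nonneg (Real.rpow_nonneg (le_of_lt ht) _) (Real.exp_nonneg _)
  calc ∫⁻ t in Set.Ioi (0:ℝ), ENNReal.ofReal (Real.exp (-(α * t))) * ENNReal.ofReal (t ^ (δ - 1))
      = ∫⁻ t in Set.Ioi (0:ℝ), ENNReal.ofReal (t ^ (δ - 1) * Real.exp (-(α * t))) := by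
        refine lintegral_congr fun t => ?_
        rw [← ENNReal.ofReal_mul (Real.exp_nonneg _), mul_comm]
    _ = ENNReal.ofReal (∫ t in Set.Ioi (0:ℝ), t ^ (δ - 1) * Real.exp (-(α * t))) :=
        (MeasureTheory.ofReal_integral_eq_lintegral_ofReal hint hnn).symm
    _ = ENNReal.ofReal (Real.Gamma δ * α ^ (-δ)) := by
        rw [Real.integral_rpow_mul_exp_neg_mul_Ioi hδ hα]
        congr 1
        rw [mul_comm, one_div, Real.rpow_neg hα.le, ← Real.inv_rpow hα.le]

theorem stmt_9 {E : Type*} [MeasurableSpace E] (m : Measure E) [SigmaFinite m]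
    (P : ℝ → E → E → ℝ≥0∞)
    (hmeas : Measurable (fun q : ℝ × E × E => P q.1 q.2.1 q.2.2))
    (hsymm : ∀ t > (0:ℝ), ∀ x y : E, P t x y = P t y x)
    (hck : ∀ s > (0:ℝ), ∀ t > (0:ℝ), ∀ x y : E,
      P (t + s) x y = ∫⁻ z, P t x z * P s z y ∂m)
    (hsub : ∀ t > (0:ℝ), ∀ x : E, ∫⁻ y, P t x y ∂m ≤ 1)
    (p' : ℝ) (hp' : 1 < p')
    (q : ℝ) (hq : q = p' / (p' - 1))
    (C : ℝ) (hC : 0 < C)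
    (hultra : ∀ t > (0:ℝ), ∀ x y : E, P t x y ≤ ENNReal.ofReal (C * t ^ (-q)))
    (p : ℝ) (hp : 1 ≤ p) (hpp' : p < p')
    (δ : ℝ) (hδ : δ = 1 - q * (p - 1) / p) :
    (∀ α > (0:ℝ),
      (⨆ x : E, (∫⁻ y, heatResolvent P α x y ^ p ∂m) ^ (1/p))
        ≤ ENNReal.ofReal (C ^ ((p - 1) / p) * Real.Gamma δ * α ^ (-δ))) ∧
    (∃ C' > (0:ℝ), ∃ α₀ > (0:ℝ), ∀ α ≥ α₀,
      (⨆ x : E, (∫⁻ y, heatResolvent P α x y ^ p ∂m) ^ (1/p))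
        ≤ ENNReal.ofReal (C' * α ^ (-δ))) := by
  have hp0 : (0:ℝ) < p := lt_of_lt_of_le one_pos hp
  have hp'1 : (0:ℝ) < p' - 1 := by linarith
  have hq0 : 0 < q := by rw [hq]; exact div_pos (by linarith) hp'1
  have hδpos : 0 < δ := by
    rw [hδ, sub_pos, div_lt_one hp0, hq, div_mul_eq_mul_div, div_lt_iff₀ hp'1]
    nlinarith
  have hp1 : (0:ℝ) ≤ p - 1 := by linarith
  have hqp : q * (p - 1) = (1 - δ) * p := by
    rw [hδ]
    field_simp
    ring
  have hexp : -(δ-1)*(p-1) + -q*(p-1) = δ - 1 := by nlinarith [hqp]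
  -- the inner spatial estimate
  have hinner : ∀ t > (0:ℝ), ∀ x : E,
      ∫⁻ y, P t x y ^ p ∂m ≤ ENNReal.ofReal ((C * t ^ (-q)) ^ (p-1)) := by
    intro t ht x
    have hnn : (0:ℝ) ≤ C * t ^ (-q) := mul_nonneg hC.le (Real.rpow_nonneg ht.le _)
    calc ∫⁻ y, P t x y ^ p ∂m
        = ∫⁻ y, P t x y ^ (p-1) * P t x y ∂m := by
          refine lintegral_congr fun y => ?_
          conv_lhs => rw [show p = (p-1)+1 by ring]
          rw [ENNReal.rpow_add_of_nonneg _ _ hp1 zero_le_one, ENNReal.rpow_one]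
      _ ≤ ∫⁻ y, ENNReal.ofReal (C * t ^ (-q)) ^ (p-1) * P t x y ∂m :=
          lintegral_mono fun y =>
            mul_le_mul' (ENNReal.rpow_le_rpow (hultra t ht x y) hp1) le_rfl
      _ = ENNReal.ofReal (C * t ^ (-q)) ^ (p-1) * ∫⁻ y, P t x y ∂m :=
          lintegral_const_mul' _ _ (ENNReal.rpow_ne_top_of_nonneg hp1 ENNReal.ofReal_ne_top)
      _ ≤ ENNReal.ofReal (C * t ^ (-q)) ^ (p-1) * 1 := mul_le_mul' le_rfl (hsub t ht x)
      _ = ENNReal.ofReal ((C * t ^ (-q)) ^ (p-1)) := by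
          rw [mul_one, ENNReal.ofReal_rpow_of_nonneg hnn hp1]
  -- pointwise Hölder-in-time bound
  have key : ∀ α > (0:ℝ), ∀ x y : E,
      heatResolvent P α x y ^ p ≤
        ENNReal.ofReal (Real.Gamma δ * α ^ (-δ)) ^ (p-1) *
          ∫⁻ t in Set.Ioi (0:ℝ),
            ENNReal.ofReal (Real.exp (-(α * t)) * t ^ (-(δ-1)*(p-1))) * P t x y ^ p := by
    intro α hα x y
    rcases eq_or_lt_of_le hp with h1 | h1
    · -- the case p = 1
      subst h1
      simp only [ENNReal.rpow_one, sub_self, mul_zero, neg_zero, zero_mul,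
        ENNReal.rpow_zero, one_mul, Real.rpow_zero, mul_one, neg_mul]
      rw [heatResolvent]
    · -- the case 1 < p : use Hölder's inequality in the time variable
      have hsp : (p / (p - 1)).HolderConjugate p := (Real.HolderConjugate.conjExponent h1).symm
      set s := p / (p - 1) with hs_def
      have hs0 : 0 < s := hsp.pos
      have h1s : 1/s = (p-1)/p := by rw [hs_def, one_div_div]
      have hisp : (1/s) * p = p - 1 := by rw [h1s]; field_simp
      have hφmeas : Measurable (fun t : ℝ => (Real.exp (-(α * t)) * t ^ (δ - 1)) ^ (1/s)) :=
        (((measurable_const.mul measurable_id).neg.exp).mul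
          (measurable_id.pow measurable_const)).pow measurable_const
      have hψmeas : Measurable
          (fun t : ℝ => Real.exp (-(α * t)) ^ (1/p) * t ^ (-((δ-1) * (1/s)))) :=
        (((measurable_const.mul measurable_id).neg.exp).pow measurable_const).mul
          (measurable_id.pow measurable_const)
      have hPmeas : Measurable fun t => P t x y :=
        hmeas.comp (measurable_id.prodMk (measurable_const.prodMk measurable_const))
      have hfm : AEMeasurable
          (fun t : ℝ => ENNReal.ofReal ((Real.exp (-(α * t)) * t ^ (δ - 1)) ^ (1/s)))
          (volume.restrict (Set.Ioi (0:ℝ))) :=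
        (ENNReal.measurable_ofReal.comp hφmeas).aemeasurable
      have hgm : AEMeasurable
          (fun t : ℝ => ENNReal.ofReal
            (Real.exp (-(α * t)) ^ (1/p) * t ^ (-((δ-1) * (1/s)))) * P t x y)
          (volume.restrict (Set.Ioi (0:ℝ))) :=
        ((ENNReal.measurable_ofReal.comp hψmeas).mul hPmeas).aemeasurable
      have hbase : ∀ t ∈ Set.Ioi (0:ℝ), (0:ℝ) ≤ Real.exp (-(α * t)) * t ^ (δ - 1) :=
        fun t ht => mul_nonneg (Real.exp_nonneg _) (Real.rpow_nonneg ht.le _)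
      have hres : heatResolvent P α x y = ∫⁻ t in Set.Ioi (0:ℝ),
          ((fun t : ℝ => ENNReal.ofReal ((Real.exp (-(α * t)) * t ^ (δ - 1)) ^ (1/s))) *
           (fun t : ℝ => ENNReal.ofReal
            (Real.exp (-(α * t)) ^ (1/p) * t ^ (-((δ-1) * (1/s)))) * P t x y)) t := by
        rw [heatResolvent]
        refine setLIntegral_congr_fun measurableSet_Ioi (fun t ht => ?_)
        have hφψ : (Real.exp (-(α * t)) * t ^ (δ - 1)) ^ (1/s) *
            (Real.exp (-(α * t)) ^ (1/p) * t ^ (-((δ-1) * (1/s)))) =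
            Real.exp (-(α * t)) := by
          rw [Real.mul_rpow (Real.exp_nonneg _) (Real.rpow_nonneg ht.le _),
            ← Real.rpow_mul ht.le, mul_mul_mul_comm, ← Real.rpow_add (Real.exp_pos _),
            ← Real.rpow_add ht, add_neg_cancel, Real.rpow_zero, mul_one,
            one_div, one_div, hsp.inv_add_inv_eq_one, Real.rpow_one]
        simp only [Pi.mul_apply]
        rw [← mul_assoc, ← ENNReal.ofReal_mul (Real.rpow_nonneg (hbase t ht) _), hφψ]
      have hfs : (∫⁻ t in Set.Ioi (0:ℝ),
          ENNReal.ofReal ((Real.exp (-(α * t)) * t ^ (δ - 1)) ^ (1/s)) ^ s) =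
          ENNReal.ofReal (Real.Gamma δ * α ^ (-δ)) := by
        rw [← gammaLintegral hα hδpos]
        refine setLIntegral_congr_fun measurableSet_Ioi (fun t ht => ?_)
        rw [ENNReal.ofReal_rpow_of_nonneg (Real.rpow_nonneg (hbase t ht) _) hs0.le,
          ← Real.rpow_mul (hbase t ht), one_div_mul_cancel hs0.ne', Real.rpow_one,
          ENNReal.ofReal_mul (Real.exp_nonneg _)]
      have hgp : (∫⁻ t in Set.Ioi (0:ℝ),
          (ENNReal.ofReal (Real.exp (-(α * t)) ^ (1/p) * t ^ (-((δ-1) * (1/s)))) *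
            P t x y) ^ p) =
          ∫⁻ t in Set.Ioi (0:ℝ),
            ENNReal.ofReal (Real.exp (-(α * t)) * t ^ (-(δ-1)*(p-1))) * P t x y ^ p := by
        refine setLIntegral_congr_fun measurableSet_Ioi (fun t ht => ?_)
        have hψnn : (0:ℝ) ≤ Real.exp (-(α * t)) ^ (1/p) * t ^ (-((δ-1) * (1/s))) :=
          mul_nonneg (Real.rpow_nonneg (Real.exp_nonneg _) _) (Real.rpow_nonneg ht.le _)
        have hE : -((δ-1) * (1/s)) * p = -(δ-1)*(p-1) := by
          linear_combination (-(δ - 1)) * hisp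
        rw [ENNReal.mul_rpow_of_nonneg _ _ hp0.le,
          ENNReal.ofReal_rpow_of_nonneg hψnn hp0.le,
          Real.mul_rpow (Real.rpow_nonneg (Real.exp_nonneg _) _) (Real.rpow_nonneg ht.le _),
          ← Real.rpow_mul (Real.exp_nonneg _), ← Real.rpow_mul ht.le,
          one_div_mul_cancel hp0.ne', Real.rpow_one, hE]
      have hholder := ENNReal.lintegral_mul_le_Lp_mul_Lq
        (volume.restrict (Set.Ioi (0:ℝ))) hsp hfm hgm
      calc heatResolvent P α x y ^ p
          ≤ ((∫⁻ t in Set.Ioi (0:ℝ),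
                ENNReal.ofReal ((Real.exp (-(α * t)) * t ^ (δ - 1)) ^ (1/s)) ^ s) ^ (1/s) *
              (∫⁻ t in Set.Ioi (0:ℝ),
                (ENNReal.ofReal (Real.exp (-(α * t)) ^ (1/p) * t ^ (-((δ-1) * (1/s)))) *
                  P t x y) ^ p) ^ (1/p)) ^ p := by
            refine ENNReal.rpow_le_rpow ?_ hp0.le
            rw [hres]; exact hholder
        _ = _ := by
            rw [hfs, hgp, ENNReal.mul_rpow_of_nonneg _ _ hp0.le,
              ← ENNReal.rpow_mul, ← ENNReal.rpow_mul, hisp,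
              one_div_mul_cancel hp0.ne', ENNReal.rpow_one]
  -- the main integral bound
  have main : ∀ α > (0:ℝ), ∀ x : E,
      (∫⁻ y, heatResolvent P α x y ^ p ∂m) ≤
        ENNReal.ofReal (C ^ (p-1)) * ENNReal.ofReal (Real.Gamma δ * α ^ (-δ)) ^ p := by
    intro α hα x
    set A := ENNReal.ofReal (Real.Gamma δ * α ^ (-δ)) with hA
    have hAtop : A ^ (p-1) ≠ ⊤ := ENNReal.rpow_ne_top_of_nonneg hp1 ENNReal.ofReal_ne_top
    have hswapm : AEMeasurable (Function.uncurry fun (y : E) (t : ℝ) =>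
        ENNReal.ofReal (Real.exp (-(α * t)) * t ^ (-(δ-1)*(p-1))) * P t x y ^ p)
        (m.prod (volume.restrict (Set.Ioi (0:ℝ)))) := by
      apply Measurable.aemeasurable
      apply Measurable.mul
      · exact (ENNReal.measurable_ofReal.comp
          (((measurable_const.mul measurable_id).neg.exp).mul
            (measurable_id.pow measurable_const))).comp measurable_snd
      · exact (hmeas.comp (measurable_snd.prodMk
          (measurable_const.prodMk measurable_fst))).pow measurable_const
    calc (∫⁻ y, heatResolvent P α x y ^ p ∂m)
        ≤ ∫⁻ y, A ^ (p-1) * (∫⁻ t in Set.Ioi (0:ℝ),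
            ENNReal.ofReal (Real.exp (-(α * t)) * t ^ (-(δ-1)*(p-1))) * P t x y ^ p) ∂m :=
          lintegral_mono fun y => key α hα x y
      _ = A ^ (p-1) * ∫⁻ y, (∫⁻ t in Set.Ioi (0:ℝ),
            ENNReal.ofReal (Real.exp (-(α * t)) * t ^ (-(δ-1)*(p-1))) * P t x y ^ p) ∂m :=
          lintegral_const_mul' _ _ hAtop
      _ = A ^ (p-1) * ∫⁻ t in Set.Ioi (0:ℝ), ∫⁻ y,
            ENNReal.ofReal (Real.exp (-(α * t)) * t ^ (-(δ-1)*(p-1))) * P t x y ^ p ∂m := by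
          congr 1
          exact lintegral_lintegral_swap hswapm
      _ ≤ A ^ (p-1) * ∫⁻ t in Set.Ioi (0:ℝ), ENNReal.ofReal (C^(p-1)) *
            (ENNReal.ofReal (Real.exp (-(α * t))) * ENNReal.ofReal (t ^ (δ-1))) := by
          refine mul_le_mul' le_rfl (setLIntegral_mono' measurableSet_Ioi fun t ht => ?_)
          have hnn1 : (0:ℝ) ≤ Real.exp (-(α * t)) * t ^ (-(δ-1)*(p-1)) :=
            mul_nonneg (Real.exp_nonneg _) (Real.rpow_nonneg (le_of_lt ht) _)
          rw [lintegral_const_mul' _ _ ENNReal.ofReal_ne_top]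
          calc ENNReal.ofReal (Real.exp (-(α * t)) * t ^ (-(δ-1)*(p-1))) *
                ∫⁻ y, P t x y ^ p ∂m
              ≤ ENNReal.ofReal (Real.exp (-(α * t)) * t ^ (-(δ-1)*(p-1))) *
                ENNReal.ofReal ((C * t ^ (-q)) ^ (p-1)) :=
                mul_le_mul' le_rfl (hinner t ht x)
            _ = ENNReal.ofReal (C^(p-1)) *
                (ENNReal.ofReal (Real.exp (-(α * t))) * ENNReal.ofReal (t ^ (δ-1))) := by
                rw [← ENNReal.ofReal_mul hnn1,
                  ← ENNReal.ofReal_mul (Real.exp_nonneg _),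
                  ← ENNReal.ofReal_mul (Real.rpow_nonneg hC.le _)]
                congr 1
                have h1 : (C * t^(-q))^(p-1) = C^(p-1) * t^(-q*(p-1)) := by
                  rw [Real.mul_rpow hC.le (Real.rpow_nonneg (le_of_lt ht) _),
                    ← Real.rpow_mul (le_of_lt ht)]
                have h2 : t^(-(δ-1)*(p-1)) * t^(-q*(p-1)) = t^(δ-1) := by
                  rw [← Real.rpow_add ht, hexp]
                rw [h1]
                calc Real.exp (-(α*t)) * t^(-(δ-1)*(p-1)) * (C^(p-1) * t^(-q*(p-1)))
                    = C^(p-1) * (Real.exp (-(α*t)) * (t^(-(δ-1)*(p-1)) * t^(-q*(p-1)))) := by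
                      ring
                  _ = C^(p-1) * (Real.exp (-(α*t)) * t^(δ-1)) := by rw [h2]
      _ = A ^ (p-1) * (ENNReal.ofReal (C^(p-1)) * A) := by
          rw [lintegral_const_mul' _ _ ENNReal.ofReal_ne_top, hA, gammaLintegral hα hδpos]
      _ = ENNReal.ofReal (C^(p-1)) * A ^ p := by
          have hAA : A ^ (p-1) * A ^ (1:ℝ) = A ^ p := by
            rw [← ENNReal.rpow_add_of_nonneg _ _ hp1 zero_le_one, sub_add_cancel]
          calc A ^ (p-1) * (ENNReal.ofReal (C^(p-1)) * A)
              = ENNReal.ofReal (C^(p-1)) * (A ^ (p-1) * A ^ (1:ℝ)) := by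
                rw [ENNReal.rpow_one]; ring
            _ = ENNReal.ofReal (C^(p-1)) * A ^ p := by rw [hAA]
  -- conclude
  have firstpart : ∀ α > (0:ℝ),
      (⨆ x : E, (∫⁻ y, heatResolvent P α x y ^ p ∂m) ^ (1/p))
        ≤ ENNReal.ofReal (C ^ ((p - 1) / p) * Real.Gamma δ * α ^ (-δ)) := by
    intro α hα
    refine iSup_le fun x => ?_
    have h1p : (0:ℝ) ≤ 1/p := by positivity
    calc (∫⁻ y, heatResolvent P α x y ^ p ∂m) ^ (1/p)
        ≤ (ENNReal.ofReal (C ^ (p-1)) *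
            ENNReal.ofReal (Real.Gamma δ * α ^ (-δ)) ^ p) ^ (1/p) :=
          ENNReal.rpow_le_rpow (main α hα x) h1p
      _ = ENNReal.ofReal (C ^ ((p - 1) / p) * Real.Gamma δ * α ^ (-δ)) := by
          rw [ENNReal.mul_rpow_of_nonneg _ _ h1p, ← ENNReal.rpow_mul,
            mul_one_div_cancel hp0.ne', ENNReal.rpow_one,
            ENNReal.ofReal_rpow_of_nonneg (Real.rpow_nonneg hC.le _) h1p,
            ← Real.rpow_mul hC.le, mul_one_div,
            ← ENNReal.ofReal_mul (Real.rpow_nonneg hC.le _), ← mul_assoc]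
  refine ⟨firstpart, C ^ ((p-1)/p) * Real.Gamma δ,
    mul_pos (Real.rpow_pos_of_pos hC _) (Real.Gamma_pos_of_pos hδpos),
    1, one_pos, fun α hα => ?_⟩
  have := firstpart α (lt_of_lt_of_le one_pos hα)
  simpa [mul_assoc] using this
end

section
/- Let (E,ρ) be a metric space with a Borel measure m such that diam(E) ≤ 1, m(E) < ∞, and there exist constants c₁, c₂ > 0 and d_f ≥ 1 with c₁ r^{d_f} ≤ m(B(x,r)) ≤ c₂ r^{d_f} for all x ∈ E and r ∈ (0,1], where B(x,r) is the open ball of center x and radius r. Let p_t(x,y) be a symmetric sub-Markovian heat kernel on (E,m) and suppose there exist constants c₃, c₄ > 0 and d_w ≥ 2 such that p_t(x,y) ≤ c₃ t^{−d_f/d_w} exp(−c₄ (ρ(x,y)^{d_w}/t)^{1/(d_w−1)}) for all x,y ∈ E and t ∈ (0,1] (sub-Gaussian upper estimate). If p ∈ [1,∞) and δ ∈ (0,1] satisfy p·d_w·δ < d_f − p(d_f − d_w), then m belongs to the L^p-Kato class with order δ, i.e. there exist C, α₀ > 0 such that sup_{x∈E} (∫_E r_α(x,y)^p m(dy))^{1/p}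 ≤ C α^{−δ} for all α ≥ α₀. -/
open MeasureTheory ENNReal Set Filter

lemma aux_rpow {a b : ℝ≥0∞} (hab : a ≤ b) (hb : b ≠ ⊤) {p : ℝ} (hp : 1 ≤ p) :
    a ^ p ≤ b ^ (p - 1) * a := by
  rcases eq_or_ne a 0 with rfl | ha
  · rw [ENNReal.zero_rpow_of_pos (by linarith)]; simp
  · have hatop : a ≠ ⊤ := ne_top_of_le_ne_top hb hab
    calc a ^ p = a ^ (p - 1 + 1) := by norm_num
      _ = a ^ (p - 1) * a ^ (1:ℝ) := ENNReal.rpow_add _ _ ha hatop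
      _ = a ^ (p - 1) * a := by rw [ENNReal.rpow_one]
      _ ≤ b ^ (p - 1) * a := mul_le_mul_left (ENNReal.rpow_le_rpow hab (by linarith)) a

lemma aux_gamma {s α : ℝ} (hs : -1 < s) (hα : 0 < α) :
    ∫⁻ t in Set.Ioi (0:ℝ), ENNReal.ofReal (Real.exp (-(α * t)) * t ^ s)
      = ENNReal.ofReal (α ^ (-(s + 1)) * Real.Gamma (s + 1)) := by
  rw [← ofReal_integral_eq_lintegral_ofReal]
  · congr 1
    have h := integral_rpow_mul_exp_neg_mul_rpow (p := 1) (q := s) (b := α) one_pos hs hα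
    simp only [Real.rpow_one, neg_mul] at h
    rw [show (∫ t in Set.Ioi (0:ℝ), Real.exp (-(α * t)) * t ^ s)
        = ∫ t in Set.Ioi (0:ℝ), t ^ s * Real.exp (-(α * t)) by
      exact integral_congr_ae (Filter.Eventually.of_forall fun t => mul_comm _ _)]
    rw [h]; norm_num
  · have h := integrableOn_rpow_mul_exp_neg_mul_rpow (s := s) (p := 1) (b := α) hs one_pos hα
    simp only [Real.rpow_one, neg_mul] at h
    exact h.congr_fun (fun t ht => mul_comm _ _) measurableSet_Ioi
  · filter_upwards [ae_restrict_mem measurableSet_Ioi] with t ht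
    exact mul_nonneg (Real.exp_pos _).le (Real.rpow_nonneg (le_of_lt ht) _)

lemma aux_min_int {s α : ℝ} (hs : -1 < s) (hs0 : s ≤ 0) (hα : 1 ≤ α) :
    ∫⁻ t in Set.Ioi (0:ℝ), ENNReal.ofReal (Real.exp (-(α * t)) * (min t 1) ^ s)
      ≤ ENNReal.ofReal ((Real.Gamma (s + 1) + 1) * α ^ (-(s + 1))) := by
  have hα0 : 0 < α := lt_of_lt_of_le one_pos hα
  have hmeas1 : Measurable fun t : ℝ => ENNReal.ofReal (Real.exp (-(α * t)) * t ^ s) := by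
    fun_prop
  calc ∫⁻ t in Set.Ioi (0:ℝ), ENNReal.ofReal (Real.exp (-(α * t)) * (min t 1) ^ s)
      ≤ ∫⁻ t in Set.Ioi (0:ℝ), (ENNReal.ofReal (Real.exp (-(α * t)) * t ^ s)
          + ENNReal.ofReal (Real.exp (-(α * t)) * t ^ (0:ℝ))) := by
        refine lintegral_mono_ae ?_
        filter_upwards [ae_restrict_mem measurableSet_Ioi] with t ht
        rcases le_or_gt t 1 with h1 | h1
        · rw [min_eq_left h1]
          exact le_add_right le_rfl
        · rw [min_eq_right h1.le, Real.one_rpow, Real.rpow_zero]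
          exact le_add_left le_rfl
    _ = ENNReal.ofReal (α ^ (-(s + 1)) * Real.Gamma (s + 1))
          + ENNReal.ofReal (α ^ (-((0:ℝ) + 1)) * Real.Gamma ((0:ℝ) + 1)) := by
        rw [lintegral_add_left hmeas1, aux_gamma hs hα0, aux_gamma (by norm_num) hα0]
    _ ≤ ENNReal.ofReal ((Real.Gamma (s + 1) + 1) * α ^ (-(s + 1))) := by
        have h2 : (0:ℝ) < Real.Gamma (s + 1) := Real.Gamma_pos_of_pos (by linarith)
        rw [← ENNReal.ofReal_add (by positivity) (by positivity)]
        refine ENNReal.ofReal_le_ofReal ?_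
        have h1 : α ^ (-((0:ℝ) + 1)) ≤ α ^ (-(s + 1)) :=
          Real.rpow_le_rpow_of_exponent_le hα (by linarith)
        norm_num [Real.Gamma_one] at h1 ⊢
        nlinarith [Real.rpow_nonneg hα0.le (-(s+1))]

set_option maxHeartbeats 1000000 in
theorem stmt_10 {E : Type*} [MetricSpace E] [MeasurableSpace E] [BorelSpace E]
    (m : Measure E) [IsFiniteMeasure m]
    (hdiam : Metric.diam (Set.univ : Set E) ≤ 1)
    (c₁ c₂ d_f : ℝ) (hc₁ : 0 < c₁) (hc₂ : 0 < c₂) (hdf : 1 ≤ d_f)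
    (hvol : ∀ x : E, ∀ r : ℝ, 0 < r → r ≤ 1 →
      ENNReal.ofReal (c₁ * r ^ d_f) ≤ m (Metric.ball x r) ∧
      m (Metric.ball x r) ≤ ENNReal.ofReal (c₂ * r ^ d_f))
    (P : ℝ → E → E → ℝ≥0∞)
    (hmeas : Measurable (fun q : ℝ × E × E => P q.1 q.2.1 q.2.2))
    (hsymm : ∀ t > (0:ℝ), ∀ x y : E, P t x y = P t y x)
    (hck : ∀ s > (0:ℝ), ∀ t > (0:ℝ), ∀ x y : E,
      P (t + s) x y = ∫⁻ z, P t x z * P s z y ∂m)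
    (hsub : ∀ t > (0:ℝ), ∀ x : E, ∫⁻ y, P t x y ∂m ≤ 1)
    (c₃ c₄ d_w : ℝ) (hc₃ : 0 < c₃) (hc₄ : 0 < c₄) (hdw : 2 ≤ d_w)
    (hker : ∀ x y : E, ∀ t : ℝ, 0 < t → t ≤ 1 →
      P t x y ≤ ENNReal.ofReal (c₃ * t ^ (-(d_f / d_w)) *
        Real.exp (-c₄ * (dist x y ^ d_w / t) ^ (1 / (d_w - 1)))))
    (p δ : ℝ) (hp : 1 ≤ p) (hδ0 : 0 < δ) (hδ1 : δ ≤ 1)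
    (hcond : p * d_w * δ < d_f - p * (d_f - d_w)) :
    ∃ C > (0:ℝ), ∃ α₀ > (0:ℝ), ∀ α ≥ α₀,
      (⨆ x : E, (∫⁻ y, heatResolvent P α x y ^ p ∂m) ^ (1/p))
        ≤ ENNReal.ofReal (C * α ^ (-δ)) := by
  have hdw0 : (0:ℝ) < d_w := by linarith
  have hdf0 : (0:ℝ) < d_f := by linarith
  have hp0 : (0:ℝ) < p := by linarith
  -- measurability helpers
  have hPm : ∀ x y : E, Measurable fun t : ℝ => P t x y := fun x y =>
    hmeas.comp (measurable_id.prodMk (measurable_const : Measurable fun _ : ℝ => (x, y)))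
  have hPm2 : ∀ x : E, Measurable fun q : E × ℝ => P q.2 x q.1 := fun x =>
    hmeas.comp (measurable_snd.prodMk (measurable_const.prodMk measurable_fst))
  -- uniform kernel bound
  have hK1 : ∀ x y : E, ∀ t : ℝ, 0 < t →
      P t x y ≤ ENNReal.ofReal (c₃ * (min t 1) ^ (-(d_f / d_w))) := by
    intro x y t ht
    have hexple : ∀ z w : E, ∀ u : ℝ, 0 < u →
        Real.exp (-c₄ * (dist z w ^ d_w / u) ^ (1 / (d_w - 1))) ≤ 1 := by
      intro z w u hu
      rw [Real.exp_le_one_iff]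
      have h0 : (0:ℝ) ≤ (dist z w ^ d_w / u) ^ (1 / (d_w - 1)) :=
        Real.rpow_nonneg (by positivity) _
      nlinarith
    rcases le_or_gt t 1 with h1 | h1
    · rw [min_eq_left h1]
      refine (hker x y t ht h1).trans (ENNReal.ofReal_le_ofReal ?_)
      have h2 : (0:ℝ) ≤ c₃ * t ^ (-(d_f / d_w)) := by positivity
      calc c₃ * t ^ (-(d_f / d_w)) * Real.exp (-c₄ * (dist x y ^ d_w / t) ^ (1 / (d_w - 1)))
          ≤ c₃ * t ^ (-(d_f / d_w)) * 1 := mul_le_mul_of_nonneg_left (hexple x y t ht) h2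
        _ = c₃ * t ^ (-(d_f / d_w)) := mul_one _
    · rw [min_eq_right h1.le, Real.one_rpow, mul_one]
      have hbase : ∀ z w : E, P 1 z w ≤ ENNReal.ofReal c₃ := by
        intro z w
        refine (hker z w 1 one_pos le_rfl).trans (ENNReal.ofReal_le_ofReal ?_)
        rw [Real.one_rpow, mul_one]
        calc c₃ * Real.exp (-c₄ * (dist z w ^ d_w / 1) ^ (1 / (d_w - 1)))
            ≤ c₃ * 1 := mul_le_mul_of_nonneg_left (hexple z w 1 one_pos) hc₃.le
          _ = c₃ := mul_one _
      have ht1 : (0:ℝ) < t - 1 := by linarith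
      have hckt := hck (t - 1) ht1 1 one_pos x y
      rw [show (1:ℝ) + (t - 1) = t by ring] at hckt
      rw [hckt]
      calc ∫⁻ z, P 1 x z * P (t - 1) z y ∂m
          ≤ ∫⁻ z, ENNReal.ofReal c₃ * P (t - 1) z y ∂m :=
            lintegral_mono fun z => mul_le_mul_left (hbase x z) _
        _ = ENNReal.ofReal c₃ * ∫⁻ z, P (t - 1) z y ∂m :=
            lintegral_const_mul' _ _ ENNReal.ofReal_ne_top
        _ ≤ ENNReal.ofReal c₃ * 1 := by
            refine mul_le_mul_right ?_ _
            rw [show (∫⁻ z, P (t - 1) z y ∂m) = ∫⁻ z, P (t - 1) y z ∂m from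
              lintegral_congr fun z => by rw [hsymm (t - 1) ht1 z y]]
            exact hsub (t - 1) ht1 y
        _ = ENNReal.ofReal c₃ := mul_one _
  -- L^p bound on the kernel
  have hK2 : ∀ x : E, ∀ t : ℝ, 0 < t →
      ∫⁻ y, (P t x y) ^ p ∂m
        ≤ ENNReal.ofReal (c₃ ^ (p - 1) * (min t 1) ^ (-((p - 1) * (d_f / d_w)))) := by
    intro x t ht
    have hmin : (0:ℝ) < min t 1 := lt_min ht one_pos
    have hM : (0:ℝ) < c₃ * (min t 1) ^ (-(d_f / d_w)) := by positivity
    calc ∫⁻ y, (P t x y) ^ p ∂m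
        ≤ ∫⁻ y, ENNReal.ofReal (c₃ * (min t 1) ^ (-(d_f / d_w))) ^ (p - 1) * P t x y ∂m :=
          lintegral_mono fun y => aux_rpow (hK1 x y t ht) ENNReal.ofReal_ne_top hp
      _ = ENNReal.ofReal (c₃ * (min t 1) ^ (-(d_f / d_w))) ^ (p - 1) * ∫⁻ y, P t x y ∂m :=
          lintegral_const_mul' _ _ (by
            exact ENNReal.rpow_ne_top_of_nonneg (by linarith) ENNReal.ofReal_ne_top)
      _ ≤ ENNReal.ofReal (c₃ * (min t 1) ^ (-(d_f / d_w))) ^ (p - 1) * 1 :=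
          mul_le_mul_right (hsub t ht x) _
      _ = ENNReal.ofReal (c₃ ^ (p - 1) * (min t 1) ^ (-((p - 1) * (d_f / d_w)))) := by
          rw [mul_one, ENNReal.ofReal_rpow_of_pos hM]
          congr 1
          rw [Real.mul_rpow hc₃.le (Real.rpow_nonneg hmin.le _), ← Real.rpow_mul hmin.le]
          congr 1
          ring
  -- swap of integrals
  have hswap : ∀ x : E, ∀ g : ℝ → ℝ≥0∞, Measurable g → (∀ t, g t ≠ ⊤) → ∀ r : ℝ,
      (∫⁻ y, (∫⁻ t in Set.Ioi (0:ℝ), g t * (P t x y) ^ r) ∂m)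
        = ∫⁻ t in Set.Ioi (0:ℝ), g t * ∫⁻ y, (P t x y) ^ r ∂m := by
    intro x g hg hgt r
    have hfm : AEMeasurable (Function.uncurry fun (y : E) (t : ℝ) => g t * (P t x y) ^ r)
        (m.prod ((volume : Measure ℝ).restrict (Set.Ioi 0))) := by
      apply Measurable.aemeasurable
      have h1 : Measurable fun q : E × ℝ => g q.2 := hg.comp measurable_snd
      exact h1.mul ((hPm2 x).pow measurable_const)
    rw [lintegral_lintegral_swap hfm]
    exact lintegral_congr fun t => lintegral_const_mul' _ _ (hgt t)
  rcases eq_or_lt_of_le hp with hp1 | hp1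
  · -- case p = 1
    subst hp1
    refine ⟨2, two_pos, 1, one_pos, fun α hα => ?_⟩
    have hα0 : (0:ℝ) < α := lt_of_lt_of_le one_pos hα
    refine iSup_le fun x => ?_
    have hmg : Measurable fun t : ℝ => ENNReal.ofReal (Real.exp (-(α * t))) := by fun_prop
    have hb : (∫⁻ y, heatResolvent P α x y ^ (1:ℝ) ∂m) ≤ ENNReal.ofReal (2 * α ^ (-δ)) := by
      calc ∫⁻ y, heatResolvent P α x y ^ (1:ℝ) ∂m
          = ∫⁻ y, (∫⁻ t in Set.Ioi (0:ℝ),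
              ENNReal.ofReal (Real.exp (-(α * t))) * (P t x y) ^ (1:ℝ)) ∂m := by
            simp [heatResolvent, ENNReal.rpow_one]
        _ = ∫⁻ t in Set.Ioi (0:ℝ), ENNReal.ofReal (Real.exp (-(α * t)))
              * ∫⁻ y, (P t x y) ^ (1:ℝ) ∂m :=
            hswap x _ hmg (fun t => ENNReal.ofReal_ne_top) 1
        _ ≤ ∫⁻ t in Set.Ioi (0:ℝ),
              ENNReal.ofReal (Real.exp (-(α * t)) * (min t 1) ^ (0:ℝ)) := by
            refine setLIntegral_mono (by fun_prop) fun t ht => ?_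
            rw [Real.rpow_zero, mul_one]
            calc ENNReal.ofReal (Real.exp (-(α * t))) * ∫⁻ y, (P t x y) ^ (1:ℝ) ∂m
                ≤ ENNReal.ofReal (Real.exp (-(α * t))) * 1 := by
                  refine mul_le_mul_right ?_ _
                  calc (∫⁻ y, (P t x y) ^ (1:ℝ) ∂m) = ∫⁻ y, P t x y ∂m := by
                        simp [ENNReal.rpow_one]
                    _ ≤ 1 := hsub t ht x
              _ = ENNReal.ofReal (Real.exp (-(α * t))) := mul_one _
        _ ≤ ENNReal.ofReal ((Real.Gamma ((0:ℝ) + 1) + 1) * α ^ (-((0:ℝ) + 1))) :=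
            aux_min_int (by norm_num) le_rfl hα
        _ ≤ ENNReal.ofReal (2 * α ^ (-δ)) := by
            refine ENNReal.ofReal_le_ofReal ?_
            have h01 : α ^ (-(1:ℝ)) ≤ α ^ (-δ) :=
              Real.rpow_le_rpow_of_exponent_le hα (by linarith)
            rw [show ((0:ℝ) + 1) = 1 by norm_num, Real.Gamma_one]
            linarith [h01]
    calc (∫⁻ y, heatResolvent P α x y ^ (1:ℝ) ∂m) ^ (1/(1:ℝ))
        = ∫⁻ y, heatResolvent P α x y ^ (1:ℝ) ∂m := by norm_num
      _ ≤ ENNReal.ofReal (2 * α ^ (-δ)) := hb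
  · -- case 1 < p
    set q : ℝ := Real.conjExponent p with hqdef
    have hpq : p.HolderConjugate q := Real.HolderConjugate.conjExponent hp1
    have hq1 : 1 < q := hpq.symm.lt
    have hq0 : (0:ℝ) < q := hpq.symm.pos
    have hqp : q * (p - 1) = p := by rw [mul_comm]; exact hpq.sub_one_mul_conj
    set β : ℝ := (p - 1) * (d_f / d_w) with hβdef
    have hβ0 : 0 ≤ β := by
      have : (0:ℝ) ≤ d_f / d_w := by positivity
      nlinarith
    have hβdw : β * d_w = (p - 1) * d_f := by rw [hβdef, mul_assoc, div_mul_cancel₀ _ hdw0.ne']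
    have hkey : (p - 1) * d_f < p * d_w := by nlinarith [mul_pos (mul_pos hp0 hdw0) hδ0]
    have hβp : β < p := by nlinarith
    set γ : ℝ := min (β / p) (max 0 ((β + p - 2) / (2 * p))) with hγdef
    have hγ0 : 0 ≤ γ := le_min (by positivity) (le_max_left _ _)
    have hγβ : p * γ ≤ β := by
      have h := mul_le_mul_of_nonneg_left
        (min_le_left (β / p) (max 0 ((β + p - 2) / (2 * p)))) hp0.le
      rwa [mul_div_cancel₀ _ hp0.ne'] at h
    have hlt : (β - 1) / p < γ := by
      refine lt_min ?_ ?_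
      · rw [div_lt_div_iff₀ hp0 hp0]; nlinarith
      · rcases le_or_gt (β + p - 2) 0 with hb | hb
        · exact lt_of_lt_of_le (div_neg_of_neg_of_pos (by nlinarith) hp0) (le_max_left _ _)
        · refine lt_of_lt_of_le ?_ (le_max_right _ _)
          rw [div_lt_div_iff₀ hp0 (by positivity)]
          nlinarith
    have hγ1 : β - p * γ < 1 := by
      have h := (div_lt_iff₀ hp0).mp hlt
      linarith [h, mul_comm γ p]
    have hγq : γ * q < 1 := by
      have hmax : max 0 ((β + p - 2) / (2 * p)) < (p - 1) / p := by
        refine max_lt (div_pos (by linarith) hp0) ?_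
        rw [div_lt_div_iff₀ (by positivity) hp0]
        nlinarith
      have hγlt : γ < (p - 1) / p := lt_of_le_of_lt (min_le_right _ _) hmax
      have h1 : (p - 1) / p * q = 1 := by
        rw [div_mul_eq_mul_div, mul_comm, hqp, div_self hp0.ne']
      calc γ * q < (p - 1) / p * q := by
            exact mul_lt_mul_of_pos_right hγlt hq0
        _ = 1 := h1
    have hs₁ : (-1:ℝ) < -(γ * q) := by nlinarith
    have hs₁0 : -(γ * q) ≤ 0 := by nlinarith [mul_nonneg hγ0 hq0.le]
    have hs₂ : (-1:ℝ) < p * γ - β := by linarith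
    have hs₂0 : p * γ - β ≤ 0 := by linarith
    set K₁ : ℝ := Real.Gamma (-(γ * q) + 1) + 1 with hK₁def
    set K₂ : ℝ := Real.Gamma (p * γ - β + 1) + 1 with hK₂def
    have hK₁pos : 0 < K₁ := by
      have := Real.Gamma_pos_of_pos (show (0:ℝ) < -(γ * q) + 1 by linarith)
      linarith
    have hK₂pos : 0 < K₂ := by
      have := Real.Gamma_pos_of_pos (show (0:ℝ) < p * γ - β + 1 by linarith)
      linarith
    set Ktot : ℝ := K₁ ^ (p - 1) * c₃ ^ (p - 1) * K₂ with hKtotdef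
    have hKtotpos : 0 < Ktot :=
      mul_pos (mul_pos (Real.rpow_pos_of_pos hK₁pos _) (Real.rpow_pos_of_pos hc₃ _)) hK₂pos
    refine ⟨Ktot ^ (1/p), Real.rpow_pos_of_pos hKtotpos _, 1, one_pos, fun α hα => ?_⟩
    have hα0 : (0:ℝ) < α := lt_of_lt_of_le one_pos hα
    refine iSup_le fun x => ?_
    set A : ℝ≥0∞ := ∫⁻ t in Set.Ioi (0:ℝ),
      ENNReal.ofReal (Real.exp (-(α * t)) * (min t 1) ^ (-(γ * q))) with hAdef
    have hA : A ≤ ENNReal.ofReal (K₁ * α ^ (-(-(γ * q) + 1))) := aux_min_int hs₁ hs₁0 hα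
    have hAne : A ≠ ⊤ := ne_top_of_le_ne_top ENNReal.ofReal_ne_top hA
    set G : E → ℝ≥0∞ := fun y => ∫⁻ t in Set.Ioi (0:ℝ),
      ENNReal.ofReal (Real.exp (-(α * t)) * (min t 1) ^ (p * γ)) * (P t x y) ^ p with hGdef
    -- Hölder step
    have hHold : ∀ y : E, heatResolvent P α x y ≤ A ^ (1/q) * (G y) ^ (1/p) := by
      intro y
      set f : ℝ → ℝ≥0∞ := fun t =>
        ENNReal.ofReal (Real.exp (-(α * t) / q) * (min t 1) ^ (-γ)) with hfdef
      set g : ℝ → ℝ≥0∞ := fun t =>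
        ENNReal.ofReal (Real.exp (-(α * t) / p) * (min t 1) ^ γ) * P t x y with hgdef
      have hfm : Measurable f := by fun_prop
      have hgm : Measurable g := by
        apply Measurable.mul ?_ (hPm x y)
        fun_prop
      have key := ENNReal.lintegral_mul_le_Lp_mul_Lq
        ((volume : Measure ℝ).restrict (Set.Ioi 0)) hpq.symm
        hfm.aemeasurable hgm.aemeasurable
      have e1 : (∫⁻ t in Set.Ioi (0:ℝ), (f * g) t) = heatResolvent P α x y := by
        rw [heatResolvent]
        refine setLIntegral_congr_fun measurableSet_Ioi
          (fun t ht => ?_)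
        have hmin : (0:ℝ) < min t 1 := lt_min ht one_pos
        have hexp : Real.exp (-(α * t) / q) * Real.exp (-(α * t) / p)
            = Real.exp (-(α * t)) := by
          rw [← Real.exp_add]
          congr 1
          have h := hpq.inv_add_inv_eq_one
          calc -(α * t) / q + -(α * t) / p = -(α * t) * (p⁻¹ + q⁻¹) := by ring
            _ = -(α * t) := by rw [h, mul_one]
        have hrw : (min t 1) ^ (-γ) * (min t 1) ^ γ = 1 := by
          rw [← Real.rpow_add hmin, neg_add_cancel, Real.rpow_zero]
        show f t * g t = _
        rw [hfdef, hgdef]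
        simp only []
        rw [← mul_assoc, ← ENNReal.ofReal_mul (by positivity)]
        congr 2
        calc Real.exp (-(α * t) / q) * (min t 1) ^ (-γ)
              * (Real.exp (-(α * t) / p) * (min t 1) ^ γ)
            = (Real.exp (-(α * t) / q) * Real.exp (-(α * t) / p))
              * ((min t 1) ^ (-γ) * (min t 1) ^ γ) := by ring
          _ = Real.exp (-(α * t)) := by rw [hexp, hrw, mul_one]
      have e2 : (∫⁻ t in Set.Ioi (0:ℝ), f t ^ q) = A := by
        rw [hAdef]
        refine setLIntegral_congr_fun measurableSet_Ioi
          (fun t ht => ?_)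
        have hmin : (0:ℝ) < min t 1 := lt_min ht one_pos
        rw [hfdef]
        simp only []
        rw [ENNReal.ofReal_rpow_of_nonneg (by positivity) hq0.le]
        congr 1
        rw [Real.mul_rpow (Real.exp_pos _).le (Real.rpow_nonneg hmin.le _),
          ← Real.exp_mul, ← Real.rpow_mul hmin.le]
        rw [div_mul_cancel₀ _ hq0.ne']
        congr 1
        ring
      have e3 : (∫⁻ t in Set.Ioi (0:ℝ), g t ^ p) = G y := by
        rw [hGdef]
        refine setLIntegral_congr_fun measurableSet_Ioi
          (fun t ht => ?_)
        have hmin : (0:ℝ) < min t 1 := lt_min ht one_pos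
        rw [hgdef]
        simp only []
        rw [ENNReal.mul_rpow_of_nonneg _ _ hp0.le,
          ENNReal.ofReal_rpow_of_nonneg (by positivity) hp0.le]
        congr 2
        rw [Real.mul_rpow (Real.exp_pos _).le (Real.rpow_nonneg hmin.le _),
          ← Real.exp_mul, ← Real.rpow_mul hmin.le]
        rw [div_mul_cancel₀ _ hp0.ne']
        congr 1
        ring
      rw [e1, e2, e3] at key
      exact key
    -- main estimate
    have hqexp : 1/q * p = p - 1 := by
      rw [hqdef, Real.conjExponent, one_div_div, div_mul_cancel₀ _ hp0.ne']
    have hmgG : Measurable fun t : ℝ =>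
        ENNReal.ofReal (Real.exp (-(α * t)) * (min t 1) ^ (p * γ)) := by fun_prop
    have hmain : (∫⁻ y, heatResolvent P α x y ^ p ∂m)
        ≤ ENNReal.ofReal (Ktot * α ^ (β - p)) := by
      calc ∫⁻ y, heatResolvent P α x y ^ p ∂m
          ≤ ∫⁻ y, A ^ (p - 1) * G y ∂m := by
            refine lintegral_mono fun y => ?_
            calc heatResolvent P α x y ^ p
                ≤ (A ^ (1/q) * (G y) ^ (1/p)) ^ p :=
                  ENNReal.rpow_le_rpow (hHold y) hp0.le
              _ = (A ^ (1/q)) ^ p * ((G y) ^ (1/p)) ^ p :=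
                  ENNReal.mul_rpow_of_nonneg _ _ hp0.le
              _ = A ^ (p - 1) * G y := by
                  rw [← ENNReal.rpow_mul, ← ENNReal.rpow_mul, hqexp,
                    one_div_mul_cancel hp0.ne', ENNReal.rpow_one]
        _ = A ^ (p - 1) * ∫⁻ y, G y ∂m :=
            lintegral_const_mul' _ _ (ENNReal.rpow_ne_top_of_nonneg (by linarith) hAne)
        _ = A ^ (p - 1) * ∫⁻ t in Set.Ioi (0:ℝ),
              ENNReal.ofReal (Real.exp (-(α * t)) * (min t 1) ^ (p * γ))
                * ∫⁻ y, (P t x y) ^ p ∂m := by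
            rw [hGdef, hswap x _ hmgG (fun t => ENNReal.ofReal_ne_top) p]
        _ ≤ A ^ (p - 1) * ∫⁻ t in Set.Ioi (0:ℝ), ENNReal.ofReal (c₃ ^ (p - 1))
              * ENNReal.ofReal (Real.exp (-(α * t)) * (min t 1) ^ (p * γ - β)) := by
            refine mul_le_mul_right (setLIntegral_mono (by fun_prop) fun t ht => ?_) _
            have hmin : (0:ℝ) < min t 1 := lt_min ht one_pos
            calc ENNReal.ofReal (Real.exp (-(α * t)) * (min t 1) ^ (p * γ))
                  * ∫⁻ y, (P t x y) ^ p ∂m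
                ≤ ENNReal.ofReal (Real.exp (-(α * t)) * (min t 1) ^ (p * γ))
                  * ENNReal.ofReal (c₃ ^ (p - 1) * (min t 1) ^ (-((p - 1) * (d_f / d_w)))) :=
                  mul_le_mul_right (hK2 x t ht) _
              _ = ENNReal.ofReal (c₃ ^ (p - 1))
                  * ENNReal.ofReal (Real.exp (-(α * t)) * (min t 1) ^ (p * γ - β)) := by
                  rw [← ENNReal.ofReal_mul (by positivity),
                    ← ENNReal.ofReal_mul (by positivity)]
                  congr 1
                  have h1 : (min t 1) ^ (p * γ) * (min t 1) ^ (-((p - 1) * (d_f / d_w)))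
                      = (min t 1) ^ (p * γ - β) := by
                    rw [← Real.rpow_add hmin, hβdef]
                    ring_nf
                  calc Real.exp (-(α * t)) * (min t 1) ^ (p * γ)
                        * (c₃ ^ (p - 1) * (min t 1) ^ (-((p - 1) * (d_f / d_w))))
                      = c₃ ^ (p - 1) * (Real.exp (-(α * t)) * ((min t 1) ^ (p * γ)
                        * (min t 1) ^ (-((p - 1) * (d_f / d_w))))) := by ring
                    _ = c₃ ^ (p - 1) * (Real.exp (-(α * t)) * (min t 1) ^ (p * γ - β)) := by
                        rw [h1]
        _ = A ^ (p - 1) * (ENNReal.ofReal (c₃ ^ (p - 1)) * ∫⁻ t in Set.Ioi (0:ℝ),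
              ENNReal.ofReal (Real.exp (-(α * t)) * (min t 1) ^ (p * γ - β))) := by
            rw [lintegral_const_mul' _ _ ENNReal.ofReal_ne_top]
        _ ≤ ENNReal.ofReal (K₁ * α ^ (-(-(γ * q) + 1))) ^ (p - 1)
              * (ENNReal.ofReal (c₃ ^ (p - 1))
                * ENNReal.ofReal (K₂ * α ^ (-(p * γ - β + 1)))) := by
            exact mul_le_mul (ENNReal.rpow_le_rpow hA (by linarith))
              (mul_le_mul_right (aux_min_int hs₂ hs₂0 hα) _) (by simp) (by simp)
        _ = ENNReal.ofReal ((K₁ * α ^ (-(-(γ * q) + 1))) ^ (p - 1)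
              * (c₃ ^ (p - 1) * (K₂ * α ^ (-(p * γ - β + 1))))) := by
            rw [ENNReal.ofReal_rpow_of_pos (by positivity),
              ← ENNReal.ofReal_mul (by positivity), ← ENNReal.ofReal_mul (by positivity)]
        _ = ENNReal.ofReal (Ktot * α ^ (β - p)) := by
            congr 1
            have hb1 : (K₁ * α ^ (-(-(γ * q) + 1))) ^ (p - 1)
                = K₁ ^ (p - 1) * α ^ ((γ * q - 1) * (p - 1)) := by
              rw [Real.mul_rpow hK₁pos.le (Real.rpow_nonneg hα0.le _),
                ← Real.rpow_mul hα0.le]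
              congr 2
              ring
            have hsum : α ^ ((γ * q - 1) * (p - 1)) * α ^ (-(p * γ - β + 1))
                = α ^ (β - p) := by
              rw [← Real.rpow_add hα0]
              congr 1
              linear_combination γ * hqp
            calc (K₁ * α ^ (-(-(γ * q) + 1))) ^ (p - 1)
                  * (c₃ ^ (p - 1) * (K₂ * α ^ (-(p * γ - β + 1))))
                = K₁ ^ (p - 1) * α ^ ((γ * q - 1) * (p - 1))
                  * (c₃ ^ (p - 1) * (K₂ * α ^ (-(p * γ - β + 1)))) := by rw [hb1]
              _ = (K₁ ^ (p - 1) * c₃ ^ (p - 1) * K₂)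
                  * (α ^ ((γ * q - 1) * (p - 1)) * α ^ (-(p * γ - β + 1))) := by ring
              _ = Ktot * α ^ (β - p) := by rw [hsum, hKtotdef]
    -- conclude
    calc (∫⁻ y, heatResolvent P α x y ^ p ∂m) ^ (1/p)
        ≤ ENNReal.ofReal (Ktot * α ^ (β - p)) ^ (1/p) :=
          ENNReal.rpow_le_rpow hmain (by positivity)
      _ = ENNReal.ofReal ((Ktot * α ^ (β - p)) ^ (1/p)) :=
          ENNReal.ofReal_rpow_of_pos (by positivity)
      _ ≤ ENNReal.ofReal (Ktot ^ (1/p) * α ^ (-δ)) := by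
          refine ENNReal.ofReal_le_ofReal ?_
          rw [Real.mul_rpow hKtotpos.le (Real.rpow_nonneg hα0.le _),
            ← Real.rpow_mul hα0.le]
          refine mul_le_mul_of_nonneg_left ?_ (Real.rpow_nonneg hKtotpos.le _)
          refine Real.rpow_le_rpow_of_exponent_le hα ?_
          rw [mul_one_div, div_le_iff₀ hp0]
          nlinarith [hβdw, hdw0, hcond]
end

section
/- Let (E,ρ) be a metric space with a Borel measure m such that diam(E) ≤ 1, m(E) < ∞, and there exist constants c₁, c₂ > 0 and d_f ≥ 1 with c₁ r^{d_f} ≤ m(B(x,r)) ≤ c₂ r^{d_f} for all x ∈ E and r ∈ (0,1], where B(x,r) is the open ball of center x and radius r. Let p_t(x,y) be a symmetric sub-Markovian heat kernel on (E,m) and suppose there exist constants c₃ > 0 and d_w ≥ 2 such that p_t(x,y) ≤ c₃ min{ t^{−d_f/d_w}, t/ρ(x,y)^{d_f + d_w} } for all x,y ∈ E and t ∈ (0,1] (jump-type upper estimate). If p ∈ [1,∞) and δ ∈ (0,1] satisfy p·d_w·δ < d_f − p(d_f − d_w), then m belongs to the L^p-Kato class with order δ, i.e. there exist C, α₀ >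 0 such that sup_{x∈E} (∫_E r_α(x,y)^p m(dy))^{1/p} ≤ C α^{−δ} for all α ≥ α₀. -/
open MeasureTheory ENNReal Set Filter

lemma lem_gamma {α c : ℝ} (hα : 0 < α) (hc : -1 < c) :
    ∫⁻ t in Set.Ioi (0:ℝ), ENNReal.ofReal (Real.exp (-(α * t))) * ENNReal.ofReal t ^ c
      = ENNReal.ofReal (α ^ (-(c+1)) * Real.Gamma (c+1)) := by
  have hint : IntegrableOn (fun t : ℝ => t ^ c * Real.exp (-α * t)) (Set.Ioi 0) := by
    simpa [Real.rpow_one] using integrableOn_rpow_mul_exp_neg_mul_rpow hc one_pos hα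
  have hval : ∫ t in Set.Ioi (0:ℝ), t ^ c * Real.exp (-α * t)
      = α ^ (-(c+1)) * Real.Gamma (c+1) := by
    have := integral_rpow_mul_exp_neg_mul_rpow (one_pos) hc hα
    simpa [Real.rpow_one] using this
  rw [← hval, MeasureTheory.ofReal_integral_eq_lintegral_ofReal hint
    ((ae_restrict_iff' measurableSet_Ioi).2 (.of_forall fun t ht => by
      have h0 : 0 < t := ht; positivity))]
  refine setLIntegral_congr_fun measurableSet_Ioi (fun t ht => ?_)
  rw [ENNReal.ofReal_rpow_of_pos ht, ← ENNReal.ofReal_mul (Real.exp_nonneg _), mul_comm, neg_mul]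

theorem stmt_11 {E : Type*} [MetricSpace E] [MeasurableSpace E] [BorelSpace E]
    (m : Measure E) [IsFiniteMeasure m]
    (hdiam : Metric.diam (Set.univ : Set E) ≤ 1)
    (c₁ c₂ d_f : ℝ) (hc₁ : 0 < c₁) (hc₂ : 0 < c₂) (hdf : 1 ≤ d_f)
    (hvol : ∀ x : E, ∀ r : ℝ, 0 < r → r ≤ 1 →
      ENNReal.ofReal (c₁ * r ^ d_f) ≤ m (Metric.ball x r) ∧
      m (Metric.ball x r) ≤ ENNReal.ofReal (c₂ * r ^ d_f))
    (P : ℝ → E → E → ℝ≥0∞)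
    (hmeas : Measurable (fun q : ℝ × E × E => P q.1 q.2.1 q.2.2))
    (hsymm : ∀ t > (0:ℝ), ∀ x y : E, P t x y = P t y x)
    (hck : ∀ s > (0:ℝ), ∀ t > (0:ℝ), ∀ x y : E,
      P (t + s) x y = ∫⁻ z, P t x z * P s z y ∂m)
    (hsub : ∀ t > (0:ℝ), ∀ x : E, ∫⁻ y, P t x y ∂m ≤ 1)
    (c₃ d_w : ℝ) (hc₃ : 0 < c₃) (hdw : 2 ≤ d_w)
    (hker : ∀ x y : E, ∀ t : ℝ, 0 < t → t ≤ 1 →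
      P t x y ≤ ENNReal.ofReal c₃ *
        min (ENNReal.ofReal t ^ (-(d_f / d_w)))
          (ENNReal.ofReal t / ENNReal.ofReal (dist x y) ^ (d_f + d_w)))
    (p δ : ℝ) (hp : 1 ≤ p) (hδ0 : 0 < δ) (hδ1 : δ ≤ 1)
    (hcond : p * d_w * δ < d_f - p * (d_f - d_w)) :
    ∃ C > (0:ℝ), ∃ α₀ > (0:ℝ), ∀ α ≥ α₀,
      (⨆ x : E, (∫⁻ y, heatResolvent P α x y ^ p ∂m) ^ (1/p))
        ≤ ENNReal.ofReal (C * α ^ (-δ)) := by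
  set ν : ℝ := d_f / d_w with hν_def
  have hdw0 : (0:ℝ) < d_w := by linarith
  have hν : 0 < ν := div_pos (by linarith) hdw0
  -- small time sup bound
  have hsup1 : ∀ x y : E, ∀ t : ℝ, 0 < t → t ≤ 1 →
      P t x y ≤ ENNReal.ofReal (c₃ * t ^ (-ν)) := by
    intro x y t ht ht1
    refine (hker x y t ht ht1).trans ?_
    rw [ENNReal.ofReal_mul hc₃.le, ← ENNReal.ofReal_rpow_of_pos ht]
    exact mul_le_mul_right (min_le_left _ _) _
  set M : ℝ := c₃ * (1/2 : ℝ) ^ (-ν) with hM_def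
  have hM0 : 0 < M := by positivity
  have hc₃M : c₃ ≤ M := by
    have : (1:ℝ) ≤ (1/2 : ℝ) ^ (-ν) := by
      exact Real.one_le_rpow_of_pos_of_le_one_of_nonpos (by norm_num)
        (by norm_num) (by linarith)
    nlinarith
  -- large time sup bound
  have hsupM : ∀ t : ℝ, 1 ≤ t → ∀ x y : E, P t x y ≤ ENNReal.ofReal M := by
    intro t ht x y
    have hs : 0 < t - 1/2 := by linarith
    have heq : P t x y = ∫⁻ z, P (1/2) x z * P (t - 1/2) z y ∂m := by
      have := hck (t - 1/2) hs (1/2) one_half_pos x y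
      rwa [show (1:ℝ)/2 + (t - 1/2) = t by ring] at this
    rw [heq]
    calc ∫⁻ z, P (1/2) x z * P (t - 1/2) z y ∂m
        ≤ ∫⁻ z, ENNReal.ofReal M * P (t - 1/2) z y ∂m := by
          refine lintegral_mono fun z => mul_le_mul_left ?_ _
          exact hsup1 x z (1/2) one_half_pos (by norm_num)
      _ = ENNReal.ofReal M * ∫⁻ z, P (t - 1/2) z y ∂m :=
          lintegral_const_mul' _ _ ENNReal.ofReal_ne_top
      _ ≤ ENNReal.ofReal M * 1 := by
          gcongr
          calc ∫⁻ z, P (t - 1/2) z y ∂m = ∫⁻ z, P (t - 1/2) y z ∂m := by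
                refine lintegral_congr fun z => ?_
                rw [hsymm _ hs z y]
            _ ≤ 1 := hsub _ hs y
      _ = ENNReal.ofReal M := mul_one _
  set β : ℝ := (p - 1) * ν with hβ_def
  have hβ0 : 0 ≤ β := mul_nonneg (by linarith) hν.le
  have hβdw : β * d_w = (p - 1) * d_f := by
    rw [hβ_def, hν_def]; field_simp
  have hβp : β + p * δ < p := by
    have h4 : (β + p * δ) * d_w < p * d_w := by nlinarith [hβdw, hcond]
    exact lt_of_mul_lt_mul_right (by linarith [h4]) hdw0.le
  have hβltp : β < p := by nlinarith [hβp, mul_pos (show (0:ℝ) < p by linarith) hδ0]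
  set K : ℝ := M ^ (p - 1) with hK_def
  have hK0 : 0 < K := Real.rpow_pos_of_pos hM0 _
  have hpow : ∀ x : ℝ≥0∞, x ^ p = x ^ (p - 1) * x := by
    intro x
    conv_lhs => rw [show p = (p - 1) + 1 by ring]
    rw [ENNReal.rpow_add_of_nonneg _ _ (by linarith) zero_le_one, ENNReal.rpow_one]
  have hLp : ∀ x : E, ∀ t : ℝ, 0 < t →
      ∫⁻ y, (P t x y) ^ p ∂m ≤ ENNReal.ofReal K * (ENNReal.ofReal t ^ (-β) + 1) := by
    intro x t ht
    rcases le_or_gt t 1 with h1 | h1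
    · have key : ∀ y, (P t x y) ^ p ≤ ENNReal.ofReal ((c₃ * t ^ (-ν)) ^ (p-1)) * P t x y := by
        intro y
        rw [hpow]
        refine mul_le_mul_left ?_ _
        calc (P t x y) ^ (p-1) ≤ (ENNReal.ofReal (c₃ * t ^ (-ν))) ^ (p-1) :=
              ENNReal.rpow_le_rpow (hsup1 x y t ht h1) (by linarith)
          _ = ENNReal.ofReal ((c₃ * t ^ (-ν)) ^ (p-1)) :=
              ENNReal.ofReal_rpow_of_pos (by positivity)
      calc ∫⁻ y, (P t x y) ^ p ∂m
          ≤ ∫⁻ y, ENNReal.ofReal ((c₃ * t ^ (-ν)) ^ (p-1)) * P t x y ∂m := lintegral_mono key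
        _ = ENNReal.ofReal ((c₃ * t ^ (-ν)) ^ (p-1)) * ∫⁻ y, P t x y ∂m :=
            lintegral_const_mul' _ _ ENNReal.ofReal_ne_top
        _ ≤ ENNReal.ofReal ((c₃ * t ^ (-ν)) ^ (p-1)) * 1 := by gcongr; exact hsub t ht x
        _ ≤ ENNReal.ofReal K * (ENNReal.ofReal t ^ (-β) + 1) := by
            rw [mul_one, Real.mul_rpow hc₃.le (by positivity), ← Real.rpow_mul ht.le,
              show -ν * (p-1) = -β by rw [hβ_def]; ring,
              ENNReal.ofReal_mul (by positivity), ENNReal.ofReal_rpow_of_pos ht]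
            exact mul_le_mul' (ENNReal.ofReal_le_ofReal
              (Real.rpow_le_rpow hc₃.le hc₃M (by linarith))) le_self_add
    · have key : ∀ y, (P t x y) ^ p ≤ ENNReal.ofReal K * P t x y := by
        intro y
        rw [hpow]
        refine mul_le_mul_left ?_ _
        calc (P t x y) ^ (p-1) ≤ (ENNReal.ofReal M) ^ (p-1) :=
              ENNReal.rpow_le_rpow (hsupM t h1.le x y) (by linarith)
          _ = ENNReal.ofReal K := ENNReal.ofReal_rpow_of_pos hM0
      calc ∫⁻ y, (P t x y) ^ p ∂m
          ≤ ∫⁻ y, ENNReal.ofReal K * P t x y ∂m := lintegral_mono key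
        _ = ENNReal.ofReal K * ∫⁻ y, P t x y ∂m :=
            lintegral_const_mul' _ _ ENNReal.ofReal_ne_top
        _ ≤ ENNReal.ofReal K * 1 := by gcongr; exact hsub t ht x
        _ ≤ ENNReal.ofReal K * (ENNReal.ofReal t ^ (-β) + 1) := by gcongr; exact le_add_self
  -- measurability helpers
  have hPtm : ∀ x y : E, Measurable fun t : ℝ => P t x y := by
    intro x y
    have h : Measurable fun t : ℝ => ((t, (x, y)) : ℝ × E × E) :=
      measurable_id.prodMk measurable_const
    exact hmeas.comp h
  have hPm2 : ∀ x : E, Measurable fun z : E × ℝ => P z.2 x z.1 := by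
    intro x
    have h : Measurable fun z : E × ℝ => ((z.2, (x, z.1)) : ℝ × E × E) :=
      measurable_snd.prodMk (measurable_const.prodMk measurable_fst)
    exact hmeas.comp h
  have hp0 : (0:ℝ) < p := by linarith
  rcases eq_or_lt_of_le hp with hp1 | hp1
  · -- case p = 1
    refine ⟨1, one_pos, 1, one_pos, fun α hα => ?_⟩
    have hα0 : (0:ℝ) < α := lt_of_lt_of_le one_pos hα
    rw [← hp1]
    simp only [ENNReal.rpow_one]
    rw [show (1:ℝ)/1 = 1 by norm_num]
    simp only [ENNReal.rpow_one]
    refine iSup_le fun x => ?_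
    calc ∫⁻ y, heatResolvent P α x y ∂m
        = ∫⁻ t in Set.Ioi (0:ℝ), ∫⁻ y, ENNReal.ofReal (Real.exp (-(α*t))) * P t x y ∂m := by
          simp only [heatResolvent]
          refine lintegral_lintegral_swap ?_
          exact (((Real.measurable_exp.comp
            (measurable_const.mul measurable_snd).neg).ennreal_ofReal).mul (hPm2 x)).aemeasurable
      _ ≤ ∫⁻ t in Set.Ioi (0:ℝ), ENNReal.ofReal (Real.exp (-(α*t))) * ENNReal.ofReal t ^ (0:ℝ) := by
          refine lintegral_mono_ae (((ae_restrict_iff' measurableSet_Ioi).2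
            (.of_forall fun t ht => ?_)))
          rw [lintegral_const_mul' _ _ ENNReal.ofReal_ne_top, ENNReal.rpow_zero]
          calc ENNReal.ofReal (Real.exp (-(α*t))) * ∫⁻ y, P t x y ∂m
              ≤ ENNReal.ofReal (Real.exp (-(α*t))) * 1 := mul_le_mul_right (hsub t ht x) _
            _ = ENNReal.ofReal (Real.exp (-(α*t))) * 1 := rfl
      _ = ENNReal.ofReal (α ^ (-((0:ℝ)+1)) * Real.Gamma ((0:ℝ)+1)) := lem_gamma hα0 (by norm_num)
      _ ≤ ENNReal.ofReal (1 * α ^ (-δ)) := by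
          refine ENNReal.ofReal_le_ofReal ?_
          rw [zero_add, Real.Gamma_one, mul_one, one_mul]
          exact Real.rpow_le_rpow_of_exponent_le hα (by linarith)
  · -- case 1 < p
    set q : ℝ := p / (p-1) with hq_def
    have hps : (0:ℝ) < p - 1 := by linarith
    have hpq : p.HolderConjugate q := Real.holderConjugate_iff.mpr ⟨hp1, by rw [hq_def, inv_div]; field_simp; ring⟩
    have hq0 : (0:ℝ) < q := hpq.symm.pos
    have hqp : q * (p-1) = p := by rw [hq_def]; field_simp
    set a : ℝ := (β + p - 2) / (2*p) with ha_def
    have hap : a * p = (β + p - 2) / 2 := by rw [ha_def]; field_simp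
    have haq : a * q * (p - 1) = a * p := by rw [mul_assoc, hqp]
    have haq1 : a * q < 1 := by
      have h2 : a * q * (p-1) < 1 * (p-1) := by rw [haq, hap]; linarith only [hβltp]
      exact lt_of_mul_lt_mul_right (by linarith) hps.le
    have hc1 : (-1:ℝ) < -(a*q) := by linarith only [haq1]
    have hc2 : (-1:ℝ) < a*p - β := by rw [hap]; linarith only [hβltp]
    have hc3 : (-1:ℝ) < a*p := by rw [hap]; linarith only [hβ0, hp0]
    have hΓ1 : 0 < Real.Gamma (-(a*q) + 1) := Real.Gamma_pos_of_pos (by linarith)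
    have hΓ2 : 0 < Real.Gamma ((a*p - β) + 1) := Real.Gamma_pos_of_pos (by linarith)
    have hΓ3 : 0 < Real.Gamma (a*p + 1) := Real.Gamma_pos_of_pos (by linarith)
    set Γ₁ := Real.Gamma (-(a*q) + 1)
    set Γ₂ := Real.Gamma ((a*p - β) + 1)
    set Γ₃ := Real.Gamma (a*p + 1)
    set C₀ : ℝ := Γ₁ ^ (p/q) * K * (Γ₂ + Γ₃) with hC₀_def
    have hC₀ : 0 < C₀ := by positivity
    refine ⟨C₀ ^ (1/p), Real.rpow_pos_of_pos hC₀ _, 1, one_pos, fun α hα => ?_⟩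
    have hα0 : (0:ℝ) < α := lt_of_lt_of_le one_pos hα
    refine iSup_le fun x => ?_
    have hG1pos : 0 < α ^ (-(-(a*q)+1)) * Γ₁ := by positivity
    -- Hölder step
    have hHold : ∀ y : E, heatResolvent P α x y ^ p
        ≤ ENNReal.ofReal ((α ^ (-(-(a*q)+1)) * Γ₁) ^ (p/q)) *
          ∫⁻ t in Set.Ioi (0:ℝ),
            ENNReal.ofReal (Real.exp (-(α*t)) * t ^ (a*p)) * P t x y ^ p := by
      intro y
      set f : ℝ → ℝ≥0∞ := fun t =>
        ENNReal.ofReal (Real.exp (-(α*t)/p)) * (ENNReal.ofReal t ^ a * P t x y) with hf_def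
      set g : ℝ → ℝ≥0∞ := fun t =>
        ENNReal.ofReal (Real.exp (-(α*t)/q)) * ENNReal.ofReal t ^ (-a) with hg_def
      have hfm : AEMeasurable f (volume.restrict (Set.Ioi 0)) :=
        ((((Real.measurable_exp.comp
          ((measurable_const.mul measurable_id).neg.div_const p)).ennreal_ofReal).mul
          ((measurable_id.ennreal_ofReal.pow_const a).mul (hPtm x y)))).aemeasurable
      have hgm : AEMeasurable g (volume.restrict (Set.Ioi 0)) :=
        ((((Real.measurable_exp.comp
          ((measurable_const.mul measurable_id).neg.div_const q)).ennreal_ofReal).mul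
          (measurable_id.ennreal_ofReal.pow_const (-a)))).aemeasurable
      have h1 : heatResolvent P α x y = ∫⁻ t in Set.Ioi (0:ℝ), (f * g) t := by
        simp only [heatResolvent]
        refine setLIntegral_congr_fun measurableSet_Ioi (fun t ht => ?_)
        have ht0 : (0:ℝ) < t := ht
        have harg : -(α*t)/p + -(α*t)/q = -(α*t) := by
          calc -(α*t)/p + -(α*t)/q = -(α*t) * (p⁻¹ + q⁻¹) := by ring
            _ = -(α*t) := by rw [hpq.inv_add_inv_eq_one, mul_one]
        calc ENNReal.ofReal (Real.exp (-(α*t))) * P t x y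
            = (ENNReal.ofReal (Real.exp (-(α*t)/p)) * ENNReal.ofReal (Real.exp (-(α*t)/q))) *
              ((ENNReal.ofReal t ^ a * ENNReal.ofReal t ^ (-a)) * P t x y) := by
              rw [← ENNReal.ofReal_mul (Real.exp_nonneg _), ← Real.exp_add, harg,
                ← ENNReal.rpow_add a (-a) (ENNReal.ofReal_pos.2 ht0).ne' ENNReal.ofReal_ne_top,
                add_neg_cancel, ENNReal.rpow_zero, one_mul]
          _ = (f * g) t := by simp only [hf_def, hg_def, Pi.mul_apply]; ring
      have h2 : (∫⁻ t in Set.Ioi (0:ℝ), f t ^ p)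
          = ∫⁻ t in Set.Ioi (0:ℝ),
              ENNReal.ofReal (Real.exp (-(α*t)) * t ^ (a*p)) * P t x y ^ p := by
        refine setLIntegral_congr_fun measurableSet_Ioi (fun t ht => ?_)
        have ht0 : (0:ℝ) < t := ht
        rw [hf_def]
        rw [ENNReal.mul_rpow_of_nonneg _ _ hp0.le, ENNReal.mul_rpow_of_nonneg _ _ hp0.le,
          ENNReal.ofReal_rpow_of_pos (Real.exp_pos _), ← Real.exp_mul,
          div_mul_cancel₀ _ hp0.ne', ← ENNReal.rpow_mul,
          ENNReal.ofReal_rpow_of_pos ht0,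
          ENNReal.ofReal_mul (Real.exp_nonneg _), mul_assoc]
      have h3 : (∫⁻ t in Set.Ioi (0:ℝ), g t ^ q)
          = ENNReal.ofReal (α ^ (-(-(a*q)+1)) * Γ₁) := by
        rw [← lem_gamma hα0 hc1]
        refine setLIntegral_congr_fun measurableSet_Ioi (fun t ht => ?_)
        have ht0 : (0:ℝ) < t := ht
        rw [hg_def]
        rw [ENNReal.mul_rpow_of_nonneg _ _ hq0.le,
          ENNReal.ofReal_rpow_of_pos (Real.exp_pos _), ← Real.exp_mul,
          div_mul_cancel₀ _ hq0.ne', ← ENNReal.rpow_mul, neg_mul]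
      have holder := ENNReal.lintegral_mul_le_Lp_mul_Lq
        (volume.restrict (Set.Ioi (0:ℝ))) hpq hfm hgm
      calc heatResolvent P α x y ^ p
          ≤ ((∫⁻ t in Set.Ioi (0:ℝ), f t ^ p) ^ (1/p) *
             (∫⁻ t in Set.Ioi (0:ℝ), g t ^ q) ^ (1/q)) ^ p := by
            rw [h1]
            exact ENNReal.rpow_le_rpow holder hp0.le
        _ = (∫⁻ t in Set.Ioi (0:ℝ), g t ^ q) ^ (p/q) * ∫⁻ t in Set.Ioi (0:ℝ), f t ^ p := by
            rw [ENNReal.mul_rpow_of_nonneg _ _ hp0.le, ← ENNReal.rpow_mul, ← ENNReal.rpow_mul,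
              one_div_mul_cancel hp0.ne', ENNReal.rpow_one,
              show 1/q*p = p/q by ring, mul_comm]
        _ = ENNReal.ofReal ((α ^ (-(-(a*q)+1)) * Γ₁) ^ (p/q)) *
            ∫⁻ t in Set.Ioi (0:ℝ),
              ENNReal.ofReal (Real.exp (-(α*t)) * t ^ (a*p)) * P t x y ^ p := by
            rw [h2, h3, ← ENNReal.ofReal_rpow_of_pos hG1pos]
    -- integrate over y, swap, apply hLp, lem_gamma
    have hmain : ∫⁻ y, heatResolvent P α x y ^ p ∂m
        ≤ ENNReal.ofReal ((α ^ (-(-(a*q)+1)) * Γ₁) ^ (p/q)) *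
          (ENNReal.ofReal K *
            (ENNReal.ofReal (α ^ (-((a*p-β)+1)) * Γ₂) +
             ENNReal.ofReal (α ^ (-(a*p+1)) * Γ₃))) := by
      have hum : Measurable (Function.uncurry fun (y : E) (t : ℝ) =>
          ENNReal.ofReal (Real.exp (-(α*t)) * t ^ (a*p)) * P t x y ^ p) := by
        have h2 : Measurable fun t : ℝ => Real.exp (-(α*t)) * t ^ (a*p) :=
          (Real.measurable_exp.comp (measurable_const.mul measurable_id).neg).mul
            (measurable_id.pow_const _)
        exact ((h2.comp measurable_snd).ennreal_ofReal).mul ((hPm2 x).pow_const p)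
      calc ∫⁻ y, heatResolvent P α x y ^ p ∂m
          ≤ ∫⁻ y, (ENNReal.ofReal ((α ^ (-(-(a*q)+1)) * Γ₁) ^ (p/q)) *
              ∫⁻ t in Set.Ioi (0:ℝ),
                ENNReal.ofReal (Real.exp (-(α*t)) * t ^ (a*p)) * P t x y ^ p) ∂m :=
            lintegral_mono hHold
        _ = ENNReal.ofReal ((α ^ (-(-(a*q)+1)) * Γ₁) ^ (p/q)) *
            ∫⁻ y, (∫⁻ t in Set.Ioi (0:ℝ),
              ENNReal.ofReal (Real.exp (-(α*t)) * t ^ (a*p)) * P t x y ^ p) ∂m :=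
            lintegral_const_mul' _ _ ENNReal.ofReal_ne_top
        _ = ENNReal.ofReal ((α ^ (-(-(a*q)+1)) * Γ₁) ^ (p/q)) *
            ∫⁻ t in Set.Ioi (0:ℝ), (∫⁻ y,
              ENNReal.ofReal (Real.exp (-(α*t)) * t ^ (a*p)) * P t x y ^ p ∂m) := by
            rw [lintegral_lintegral_swap hum.aemeasurable]
        _ ≤ ENNReal.ofReal ((α ^ (-(-(a*q)+1)) * Γ₁) ^ (p/q)) *
            ∫⁻ t in Set.Ioi (0:ℝ),
              ENNReal.ofReal (Real.exp (-(α*t)) * t ^ (a*p)) *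
                (ENNReal.ofReal K * (ENNReal.ofReal t ^ (-β) + 1)) := by
            refine mul_le_mul_right (lintegral_mono_ae ((ae_restrict_iff' measurableSet_Ioi).2
              (.of_forall fun t ht => ?_))) _
            rw [lintegral_const_mul' _ _ ENNReal.ofReal_ne_top]
            exact mul_le_mul_right (hLp x t ht) _
        _ = ENNReal.ofReal ((α ^ (-(-(a*q)+1)) * Γ₁) ^ (p/q)) *
            (ENNReal.ofReal K *
              (ENNReal.ofReal (α ^ (-((a*p-β)+1)) * Γ₂) +
               ENNReal.ofReal (α ^ (-(a*p+1)) * Γ₃))) := by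
            congr 1
            calc ∫⁻ t in Set.Ioi (0:ℝ),
                  ENNReal.ofReal (Real.exp (-(α*t)) * t ^ (a*p)) *
                    (ENNReal.ofReal K * (ENNReal.ofReal t ^ (-β) + 1))
                = ∫⁻ t in Set.Ioi (0:ℝ),
                    (ENNReal.ofReal K *
                      (ENNReal.ofReal (Real.exp (-(α*t))) * ENNReal.ofReal t ^ (a*p - β)) +
                     ENNReal.ofReal K *
                      (ENNReal.ofReal (Real.exp (-(α*t))) * ENNReal.ofReal t ^ (a*p))) := by
                  refine setLIntegral_congr_fun measurableSet_Ioi (fun t ht => ?_)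
                  have ht0 : (0:ℝ) < t := ht
                  rw [ENNReal.ofReal_mul (Real.exp_nonneg _), ← ENNReal.ofReal_rpow_of_pos ht0,
                    show a*p - β = a*p + -β by ring,
                    ENNReal.rpow_add (a*p) (-β) (ENNReal.ofReal_pos.2 ht0).ne'
                      ENNReal.ofReal_ne_top]
                  ring
              _ = ENNReal.ofReal K *
                    (ENNReal.ofReal (α ^ (-((a*p-β)+1)) * Γ₂) +
                     ENNReal.ofReal (α ^ (-(a*p+1)) * Γ₃)) := by
                  rw [lintegral_add_left]
                  · rw [lintegral_const_mul' _ _ ENNReal.ofReal_ne_top,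
                      lintegral_const_mul' _ _ ENNReal.ofReal_ne_top,
                      lem_gamma hα0 hc2, lem_gamma hα0 hc3, mul_add]
                  · exact (measurable_const.mul (((Real.measurable_exp.comp
                      (measurable_const.mul measurable_id).neg).ennreal_ofReal).mul
                      (measurable_id.ennreal_ofReal.pow_const _)))
    -- real-number endgame
    have hupq : (-(-(a*q)+1)) * (p/q) = a*p - (p-1) := by
      rw [hpq.div_conj_eq_sub_one]
      linear_combination haq
    have hX1 : α ^ (-(-(a*q)+1) * (p/q)) * α ^ (-((a*p-β)+1)) = α ^ (β - p) := by
      rw [← Real.rpow_add hα0]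
      congr 1
      linear_combination hupq
    have hX2 : α ^ (-(-(a*q)+1) * (p/q)) * α ^ (-(a*p+1)) = α ^ (-p) := by
      rw [← Real.rpow_add hα0]
      congr 1
      linear_combination hupq
    have hreal : (α ^ (-(-(a*q)+1)) * Γ₁) ^ (p/q) *
        (K * (α ^ (-((a*p-β)+1)) * Γ₂ + α ^ (-(a*p+1)) * Γ₃)) ≤ C₀ * α ^ (-(δ*p)) := by
      have hexp : (α ^ (-(-(a*q)+1))) ^ (p/q) = α ^ (-(-(a*q)+1) * (p/q)) :=
        (Real.rpow_mul hα0.le _ _).symm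
      calc (α ^ (-(-(a*q)+1)) * Γ₁) ^ (p/q) *
            (K * (α ^ (-((a*p-β)+1)) * Γ₂ + α ^ (-(a*p+1)) * Γ₃))
          = Γ₁ ^ (p/q) * (K * (Γ₂ * (α ^ (-(-(a*q)+1) * (p/q)) * α ^ (-((a*p-β)+1))) +
              Γ₃ * (α ^ (-(-(a*q)+1) * (p/q)) * α ^ (-(a*p+1))))) := by
            rw [Real.mul_rpow (by positivity) hΓ1.le, hexp]; ring
        _ = Γ₁ ^ (p/q) * (K * (Γ₂ * α ^ (β - p) + Γ₃ * α ^ (-p))) := by rw [hX1, hX2]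
        _ ≤ Γ₁ ^ (p/q) * (K * (Γ₂ * α ^ (-(δ*p)) + Γ₃ * α ^ (-(δ*p)))) := by
            have e1 : α ^ (β - p) ≤ α ^ (-(δ*p)) :=
              Real.rpow_le_rpow_of_exponent_le hα (by linarith only [hβp])
            have e2 : α ^ (-p) ≤ α ^ (-(δ*p)) :=
              Real.rpow_le_rpow_of_exponent_le hα
                (by linarith only [mul_nonneg (sub_nonneg.2 hδ1) hp0.le])
            have h1 : (0:ℝ) ≤ Γ₁ ^ (p/q) := by positivity
            have h2 : (0:ℝ) ≤ K := hK0.le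
            gcongr
        _ = C₀ * α ^ (-(δ*p)) := by rw [hC₀_def]; ring
    calc (∫⁻ y, heatResolvent P α x y ^ p ∂m) ^ (1/p)
        ≤ (ENNReal.ofReal (C₀ * α ^ (-(δ*p)))) ^ (1/p) := by
          refine ENNReal.rpow_le_rpow ?_ (by positivity)
          refine hmain.trans ?_
          rw [← ENNReal.ofReal_add (by positivity) (by positivity),
            ← ENNReal.ofReal_mul hK0.le, ← ENNReal.ofReal_mul (by positivity)]
          exact ENNReal.ofReal_le_ofReal hreal
      _ = ENNReal.ofReal ((C₀ * α ^ (-(δ*p))) ^ (1/p)) :=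
          ENNReal.ofReal_rpow_of_pos (by positivity)
      _ = ENNReal.ofReal (C₀ ^ (1/p) * α ^ (-δ)) := by
          rw [Real.mul_rpow hC₀.le (by positivity), ← Real.rpow_mul hα0.le,
            show -(δ*p) * (1/p) = -δ by field_simp]
end

section
/- Let d ≥ 1 be an integer and p ∈ [1,∞). Then sup_{x∈ℝ^d} ∫_{ℝ^d} r_1(x,y)^p dy < ∞ if and only if d − p(d−2) > 0, where r_1(x,y) = (2π)^{−d/2} ∫_0^∞ t^{−d/2} exp(−(t + |x−y|²/(2t))) dt. -/
open MeasureTheory ENNReal Set Filter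

/-- The Gaussian (Brownian) heat kernel on `ℝ^d`. -/
noncomputable def gaussianKernel (d : ℕ) (t : ℝ)
    (x y : EuclideanSpace ℝ (Fin d)) : ℝ≥0∞ :=
  ENNReal.ofReal ((2 * Real.pi * t) ^ (-(d:ℝ) / 2) *
    Real.exp (-(dist x y ^ 2) / (2 * t)))

/-- The α-order resolvent kernel of the Gaussian heat kernel on `ℝ^d`. -/
noncomputable def gaussianResolvent (d : ℕ) (α : ℝ)
    (x y : EuclideanSpace ℝ (Fin d)) : ℝ≥0∞ :=
  ∫⁻ t in Set.Ioi (0:ℝ), ENNReal.ofReal (Real.exp (-(α * t))) * gaussianKernel d t x y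

/-! ### Auxiliary real-variable lemmas -/

lemma aux_exp_rpow {a u : ℝ} (ha : 0 < a) (hu : 0 < u) :
    Real.exp (-u) ≤ Real.exp (a * Real.log (2*a) - a) * u ^ (-a) := by
  rw [Real.rpow_def_of_pos hu, ← Real.exp_add]
  apply Real.exp_le_exp.mpr
  have h := Real.log_le_sub_one_of_pos (show 0 < u / (2*a) by positivity)
  rw [Real.log_div (ne_of_gt hu) (by positivity)] at h
  have h2 : a * (u/(2*a)) = u/2 := by field_simp
  nlinarith [mul_le_mul_of_nonneg_left h ha.le]

lemma aux_T (s : ℝ) (hs : -1 < s) :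
    ∫⁻ t in Ioi (0:ℝ), ENNReal.ofReal (t ^ s * Real.exp (-(t/2))) < ⊤ := by
  apply IntegrableOn.setLIntegral_lt_top
  have h := integrableOn_rpow_mul_exp_neg_mul_rpow hs one_pos (by norm_num : (0:ℝ) < 1/2)
  apply h.congr_fun ?_ measurableSet_Ioi
  intro x hx
  simp only [Real.rpow_one]
  ring_nf

/-! ### Layer-cake estimates for `‖y‖ ^ (-q)` on the unit ball -/

lemma finite_ball_rpow (d : ℕ) {q : ℝ} (h0 : 0 < q) (hq : q < d) :
    ∫⁻ y : EuclideanSpace ℝ (Fin d) in Metric.ball 0 1,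
      ENNReal.ofReal (‖y‖ ^ (-q)) < ⊤ := by
  set μ := volume.restrict (Metric.ball (0 : EuclideanSpace ℝ (Fin d)) 1) with hμ
  rw [lintegral_eq_lintegral_meas_le μ
    (Eventually.of_forall fun y => Real.rpow_nonneg (norm_nonneg y) _)
    (by fun_prop : Measurable fun y : EuclideanSpace ℝ (Fin d) => ‖y‖ ^ (-q)).aemeasurable]
  have key : ∀ t : ℝ, 1 < t →
      μ {a : EuclideanSpace ℝ (Fin d) | t ≤ ‖a‖ ^ (-q)}
        ≤ ENNReal.ofReal (t ^ (-((d:ℝ)/q)))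
            * volume (Metric.ball (0:EuclideanSpace ℝ (Fin d)) 1) := by
    intro t ht
    have ht0 : (0:ℝ) < t := lt_trans one_pos ht
    have hsub : {a : EuclideanSpace ℝ (Fin d) | t ≤ ‖a‖ ^ (-q)}
        ⊆ Metric.closedBall 0 (t ^ (-q⁻¹)) := by
      intro a ha
      simp only [mem_setOf_eq] at ha
      have hna : 0 < ‖a‖ := by
        rcases (norm_nonneg a).lt_or_eq with h | h
        · exact h
        · exfalso
          rw [← h, Real.zero_rpow (by simpa using h0.ne')] at ha
          linarith
      have := Real.rpow_le_rpow_of_nonpos ht0 ha (by rw [neg_nonpos]; positivity : -q⁻¹ ≤ 0)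
      rw [← Real.rpow_mul hna.le] at this
      rw [show -q * -q⁻¹ = 1 by field_simp, Real.rpow_one] at this
      simpa [Metric.mem_closedBall, dist_zero_right] using this
    calc μ {a : EuclideanSpace ℝ (Fin d) | t ≤ ‖a‖ ^ (-q)}
        ≤ volume (Metric.closedBall (0:EuclideanSpace ℝ (Fin d)) (t ^ (-q⁻¹))) :=
          le_trans (le_trans (measure_mono hsub) (Measure.restrict_le_self _)) le_rfl
      _ = ENNReal.ofReal ((t ^ (-q⁻¹)) ^ Module.finrank ℝ (EuclideanSpace ℝ (Fin d)))
            * volume (Metric.ball (0:EuclideanSpace ℝ (Fin d)) 1) :=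
          Measure.addHaar_closedBall _ _ (Real.rpow_nonneg ht0.le _)
      _ = ENNReal.ofReal (t ^ (-((d:ℝ)/q)))
            * volume (Metric.ball (0:EuclideanSpace ℝ (Fin d)) 1) := by
          rw [finrank_euclideanSpace_fin, ← Real.rpow_natCast (t ^ (-q⁻¹)) d,
            ← Real.rpow_mul ht0.le]
          norm_num
          ring_nf
  calc ∫⁻ t in Ioi (0:ℝ), μ {a | t ≤ ‖a‖ ^ (-q)}
      ≤ ∫⁻ t in Ioc (0:ℝ) 1 ∪ Ioi 1, μ {a | t ≤ ‖a‖ ^ (-q)} :=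
        lintegral_mono_set Ioi_subset_Ioc_union_Ioi
    _ ≤ (∫⁻ t in Ioc (0:ℝ) 1, μ {a | t ≤ ‖a‖ ^ (-q)}) + ∫⁻ t in Ioi 1, μ {a | t ≤ ‖a‖ ^ (-q)} :=
        lintegral_union_le _ _ _
    _ < ⊤ := by
        apply ENNReal.add_lt_top.2
        constructor
        · calc ∫⁻ t in Ioc (0:ℝ) 1, μ {a | t ≤ ‖a‖ ^ (-q)}
              ≤ ∫⁻ _ in Ioc (0:ℝ) 1, volume (Metric.ball (0:EuclideanSpace ℝ (Fin d)) 1) :=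
                setLIntegral_mono' measurableSet_Ioc fun t _ => by
                  simpa [hμ, Measure.restrict_apply_univ] using
                    (measure_mono (subset_univ _) : μ _ ≤ μ univ)
            _ = volume (Metric.ball (0:EuclideanSpace ℝ (Fin d)) 1) * volume (Ioc (0:ℝ) 1) := by
                rw [setLIntegral_const]
            _ < ⊤ := by
                apply ENNReal.mul_lt_top measure_ball_lt_top
                simp [Real.volume_Ioc]
        · calc ∫⁻ t in Ioi (1:ℝ), μ {a | t ≤ ‖a‖ ^ (-q)}
              ≤ ∫⁻ t in Ioi (1:ℝ), ENNReal.ofReal (t ^ (-((d:ℝ)/q)))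
                  * volume (Metric.ball (0:EuclideanSpace ℝ (Fin d)) 1) :=
                setLIntegral_mono' measurableSet_Ioi fun t ht => key t ht
            _ = (∫⁻ t in Ioi (1:ℝ), ENNReal.ofReal (t ^ (-((d:ℝ)/q))))
                  * volume (Metric.ball (0:EuclideanSpace ℝ (Fin d)) 1) :=
                lintegral_mul_const' _ _ measure_ball_lt_top.ne
            _ < ⊤ := by
                apply ENNReal.mul_lt_top ?_ measure_ball_lt_top
                apply IntegrableOn.setLIntegral_lt_top
                apply integrableOn_Ioi_rpow_of_lt ?_ one_pos
                rw [neg_lt_neg_iff]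
                rw [lt_div_iff₀ h0]
                linarith

lemma infinite_ball_rpow (d : ℕ) (hd : 1 ≤ d) {q : ℝ} (hq : (d:ℝ) ≤ q) :
    ∫⁻ y : EuclideanSpace ℝ (Fin d) in Metric.ball 0 1,
      ENNReal.ofReal (‖y‖ ^ (-q)) = ⊤ := by
  haveI : Nonempty (Fin d) := ⟨⟨0, hd⟩⟩
  haveI : Nontrivial (EuclideanSpace ℝ (Fin d)) := inferInstance
  have h0 : (0:ℝ) < q := lt_of_lt_of_le (by exact_mod_cast hd) hq
  set μ := volume.restrict (Metric.ball (0 : EuclideanSpace ℝ (Fin d)) 1) with hμ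
  rw [lintegral_eq_lintegral_meas_le μ
    (Eventually.of_forall fun y => Real.rpow_nonneg (norm_nonneg y) _)
    (by fun_prop : Measurable fun y : EuclideanSpace ℝ (Fin d) => ‖y‖ ^ (-q)).aemeasurable]
  rw [eq_top_iff]
  have key : ∀ t : ℝ, 1 < t →
      ENNReal.ofReal (t ^ (-((d:ℝ)/q))) * volume (Metric.ball (0:EuclideanSpace ℝ (Fin d)) 1)
        ≤ μ {a : EuclideanSpace ℝ (Fin d) | t ≤ ‖a‖ ^ (-q)} := by
    intro t ht
    have ht0 : (0:ℝ) < t := lt_trans one_pos ht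
    have hrad : (0:ℝ) < t ^ (-q⁻¹) := Real.rpow_pos_of_pos ht0 _
    have hrad1 : t ^ (-q⁻¹) < 1 :=
      Real.rpow_lt_one_of_one_lt_of_neg ht (by rw [neg_lt_zero]; positivity)
    have hsub : Metric.closedBall (0:EuclideanSpace ℝ (Fin d)) (t ^ (-q⁻¹)) \ {0}
        ⊆ {a : EuclideanSpace ℝ (Fin d) | t ≤ ‖a‖ ^ (-q)} ∩ Metric.ball 0 1 := by
      rintro a ⟨hab, ha0⟩
      rw [Metric.mem_closedBall, dist_zero_right] at hab
      have hna : 0 < ‖a‖ := norm_pos_iff.2 (by simpa using ha0)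
      constructor
      · have := Real.rpow_le_rpow_of_nonpos hna hab (by rw [neg_nonpos]; positivity : -q ≤ 0)
        rw [← Real.rpow_mul ht0.le, show -q⁻¹ * -q = 1 by field_simp, Real.rpow_one] at this
        exact this
      · rw [Metric.mem_ball, dist_zero_right]
        exact lt_of_le_of_lt hab hrad1
    have hmeas : MeasurableSet {a : EuclideanSpace ℝ (Fin d) | t ≤ ‖a‖ ^ (-q)} :=
      measurableSet_le measurable_const (by fun_prop)
    calc ENNReal.ofReal (t ^ (-((d:ℝ)/q))) * volume (Metric.ball (0:EuclideanSpace ℝ (Fin d)) 1)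
        = volume (Metric.closedBall (0:EuclideanSpace ℝ (Fin d)) (t ^ (-q⁻¹))) := by
          rw [Measure.addHaar_closedBall _ _ hrad.le, finrank_euclideanSpace_fin,
            ← Real.rpow_natCast (t ^ (-q⁻¹)) d, ← Real.rpow_mul ht0.le]
          norm_num
          ring_nf
      _ = volume (Metric.closedBall (0:EuclideanSpace ℝ (Fin d)) (t ^ (-q⁻¹)) \ {0}) :=
          (measure_diff_null (measure_singleton _)).symm
      _ ≤ volume ({a : EuclideanSpace ℝ (Fin d) | t ≤ ‖a‖ ^ (-q)} ∩ Metric.ball 0 1) :=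
          measure_mono hsub
      _ = μ {a : EuclideanSpace ℝ (Fin d) | t ≤ ‖a‖ ^ (-q)} := by
          rw [hμ, Measure.restrict_apply hmeas]
  calc (⊤ : ℝ≥0∞)
      = (∫⁻ t in Ioi (1:ℝ), ENNReal.ofReal (t ^ (-((d:ℝ)/q))))
          * volume (Metric.ball (0:EuclideanSpace ℝ (Fin d)) 1) := by
        refine (ENNReal.mul_eq_top.2 (Or.inr ⟨?_, ?_⟩)).symm
        · by_contra hfin
          have hint : IntegrableOn (fun t : ℝ => t ^ (-((d:ℝ)/q))) (Ioi 1) := by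
            constructor
            · exact Measurable.aestronglyMeasurable (by fun_prop)
            · rw [hasFiniteIntegral_iff_ofReal ?_]
              · exact lt_top_iff_ne_top.2 hfin
              · filter_upwards [ae_restrict_mem measurableSet_Ioi] with t ht
                exact Real.rpow_nonneg (by linarith [mem_Ioi.mp ht]) _
          rw [integrableOn_Ioi_rpow_iff one_pos] at hint
          have : (d:ℝ)/q ≤ 1 := (div_le_one h0).2 hq
          linarith
        · exact (Metric.measure_ball_pos volume 0 one_pos).ne'
    _ ≤ ∫⁻ t in Ioi (1:ℝ), μ {a | t ≤ ‖a‖ ^ (-q)} := by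
        rw [← lintegral_mul_const' _ _ measure_ball_lt_top.ne]
        exact setLIntegral_mono' measurableSet_Ioi fun t ht => key t ht
    _ ≤ ∫⁻ t in Ioi (0:ℝ), μ {a | t ≤ ‖a‖ ^ (-q)} :=
        lintegral_mono_set (Ioi_subset_Ioi zero_le_one)

/-! ### Integrability of the exponential tail -/

lemma finite_exp_int (d : ℕ) {c : ℝ} (hc : 0 < c) :
    ∫⁻ y : EuclideanSpace ℝ (Fin d), ENNReal.ofReal (Real.exp (-(c * ‖y‖))) < ⊤ := by
  set a : ℝ := (d:ℝ) + 1 with ha_def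
  have ha : 0 < a := by positivity
  set C : ℝ := Real.exp c * Real.exp (a * Real.log (2*a) - a) * c ^ (-a) with hC
  have hbound : ∀ y : EuclideanSpace ℝ (Fin d),
      Real.exp (-(c * ‖y‖)) ≤ C * (1 + ‖y‖) ^ (-a) := by
    intro y
    have h1 : (0:ℝ) < c * (1 + ‖y‖) := by positivity
    have h2 := aux_exp_rpow ha h1
    have h3 : Real.exp (-(c * ‖y‖)) = Real.exp c * Real.exp (-(c * (1 + ‖y‖))) := by
      rw [← Real.exp_add]
      congr 1
      ring
    rw [h3, hC]
    have h4 : (c * (1 + ‖y‖)) ^ (-a) = c ^ (-a) * (1 + ‖y‖) ^ (-a) :=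
      Real.mul_rpow hc.le (by positivity)
    calc Real.exp c * Real.exp (-(c * (1 + ‖y‖)))
        ≤ Real.exp c * (Real.exp (a * Real.log (2*a) - a) * (c ^ (-a) * (1 + ‖y‖) ^ (-a))) := by
          rw [← h4]
          exact mul_le_mul_of_nonneg_left h2 (Real.exp_nonneg _)
      _ = Real.exp c * Real.exp (a * Real.log (2*a) - a) * c ^ (-a) * (1 + ‖y‖) ^ (-a) := by
          ring
  calc ∫⁻ y : EuclideanSpace ℝ (Fin d), ENNReal.ofReal (Real.exp (-(c * ‖y‖)))
      ≤ ∫⁻ y : EuclideanSpace ℝ (Fin d), ENNReal.ofReal C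
          * ENNReal.ofReal ((1 + ‖y‖) ^ (-a)) := by
        apply lintegral_mono
        intro y
        simp only []
        rw [← ENNReal.ofReal_mul (by positivity : (0:ℝ) ≤ C)]
        exact ENNReal.ofReal_le_ofReal (hbound y)
    _ = ENNReal.ofReal C * ∫⁻ y : EuclideanSpace ℝ (Fin d),
          ENNReal.ofReal ((1 + ‖y‖) ^ (-a)) := lintegral_const_mul' _ _ ENNReal.ofReal_ne_top
    _ < ⊤ := by
        apply ENNReal.mul_lt_top ENNReal.ofReal_lt_top
        apply finite_integral_one_add_norm
        rw [finrank_euclideanSpace_fin, ha_def]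
        linarith

/-! ### The resolvent as a function of the radius -/

noncomputable def Gres (d : ℕ) (r : ℝ) : ℝ≥0∞ :=
  ∫⁻ t in Set.Ioi (0:ℝ), ENNReal.ofReal (Real.exp (-(1 * t))) *
    ENNReal.ofReal ((2 * Real.pi * t) ^ (-(d:ℝ) / 2) * Real.exp (-(r ^ 2) / (2 * t)))

lemma kernel_pt_bound (d : ℕ) {a r t : ℝ} (ha : 0 < a) (hr : 0 < r) (ht : 0 < t) :
    Real.exp (-(1*t)) * ((2*Real.pi*t) ^ (-(d:ℝ)/2) * Real.exp (-(r^2)/(2*t)))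
      ≤ ((2*Real.pi) ^ (-(d:ℝ)/2) * Real.exp (a * Real.log (2*a) - a) * 4 ^ a
          * Real.exp (-(r/2)) * r ^ (-(2*a))) * (t ^ (a - (d:ℝ)/2) * Real.exp (-(t/2))) := by
  have hπ : (0:ℝ) < 2*Real.pi := by positivity
  rw [Real.mul_rpow hπ.le ht.le]
  have split : Real.exp (-(1*t)) * Real.exp (-(r^2)/(2*t))
      = (Real.exp (-(t/2)) * Real.exp (-(r^2)/(4*t))) * Real.exp (-(r^2)/(4*t))
          * Real.exp (-(t/2)) := by
    rw [← Real.exp_add, ← Real.exp_add, ← Real.exp_add, ← Real.exp_add]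
    congr 1
    field_simp
    ring
  have e2 : Real.exp (-(t/2)) * Real.exp (-(r^2)/(4*t)) ≤ Real.exp (-(r/2)) := by
    rw [← Real.exp_add]
    apply Real.exp_le_exp.mpr
    have h4t : (0:ℝ) < 4*t := by positivity
    have hu : r^2/(4*t) * (4*t) = r^2 := div_mul_cancel₀ _ h4t.ne'
    rw [neg_div]
    nlinarith [sq_nonneg (t - r), ht, hu, mul_pos ht ht]
  have e3 : Real.exp (-(r^2)/(4*t))
      ≤ Real.exp (a * Real.log (2*a) - a) * (4 ^ a * t ^ a * r ^ (-(2*a))) := by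
    have hu : (0:ℝ) < r^2/(4*t) := by positivity
    have key := aux_exp_rpow ha hu
    rw [neg_div]
    refine key.trans (le_of_eq ?_)
    congr 1
    rw [Real.div_rpow (by positivity) (by positivity)]
    rw [Real.rpow_neg (by positivity : (0:ℝ) ≤ r^2), Real.rpow_neg (by positivity : (0:ℝ) ≤ 4*t)]
    rw [div_eq_mul_inv, inv_inv, Real.mul_rpow (by norm_num) ht.le]
    rw [← Real.rpow_natCast r 2, ← Real.rpow_mul hr.le]
    rw [← Real.rpow_neg hr.le]
    push_cast
    ring_nf
  calc Real.exp (-(1*t)) * ((2*Real.pi) ^ (-(d:ℝ)/2) * t ^ (-(d:ℝ)/2) * Real.exp (-(r^2)/(2*t)))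
      = (2*Real.pi) ^ (-(d:ℝ)/2) * t ^ (-(d:ℝ)/2)
          * ((Real.exp (-(t/2)) * Real.exp (-(r^2)/(4*t))) * Real.exp (-(r^2)/(4*t))
              * Real.exp (-(t/2))) := by
        rw [show Real.exp (-(1*t)) * ((2*Real.pi) ^ (-(d:ℝ)/2) * t ^ (-(d:ℝ)/2)
              * Real.exp (-(r^2)/(2*t)))
            = (2*Real.pi) ^ (-(d:ℝ)/2) * t ^ (-(d:ℝ)/2)
              * (Real.exp (-(1*t)) * Real.exp (-(r^2)/(2*t))) from by ring, split]
    _ ≤ (2*Real.pi) ^ (-(d:ℝ)/2) * t ^ (-(d:ℝ)/2)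
          * (Real.exp (-(r/2)) * (Real.exp (a * Real.log (2*a) - a)
              * (4 ^ a * t ^ a * r ^ (-(2*a)))) * Real.exp (-(t/2))) := by
        have h1 : (0:ℝ) ≤ (2*Real.pi) ^ (-(d:ℝ)/2) * t ^ (-(d:ℝ)/2) := by positivity
        gcongr
    _ = ((2*Real.pi) ^ (-(d:ℝ)/2) * Real.exp (a * Real.log (2*a) - a) * 4 ^ a
          * Real.exp (-(r/2)) * r ^ (-(2*a))) * (t ^ (a - (d:ℝ)/2) * Real.exp (-(t/2))) := by
        rw [show a - (d:ℝ)/2 = -(d:ℝ)/2 + a from by ring, Real.rpow_add ht]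
        ring

lemma Gres_le (d : ℕ) {a : ℝ} (ha : 0 < a) (has : -1 < a - (d:ℝ)/2) :
    ∃ K : ℝ, 0 < K ∧ ∀ r : ℝ, 0 < r →
      Gres d r ≤ ENNReal.ofReal (K * Real.exp (-(r/2)) * r ^ (-(2*a))) := by
  set T := ∫⁻ t in Ioi (0:ℝ), ENNReal.ofReal (t ^ (a - (d:ℝ)/2) * Real.exp (-(t/2))) with hT_def
  have hT : T < ⊤ := aux_T _ has
  set M := (2*Real.pi) ^ (-(d:ℝ)/2) * Real.exp (a * Real.log (2*a) - a) * 4 ^ a with hM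
  have hM0 : 0 < M := by positivity
  have hTR : (0:ℝ) ≤ T.toReal := ENNReal.toReal_nonneg
  refine ⟨M * (T.toReal + 1), by positivity, fun r hr => ?_⟩
  have step1 : Gres d r ≤ ∫⁻ t in Ioi (0:ℝ),
      ENNReal.ofReal ((M * Real.exp (-(r/2)) * r ^ (-(2*a)))
        * (t ^ (a-(d:ℝ)/2) * Real.exp (-(t/2)))) := by
    apply setLIntegral_mono' measurableSet_Ioi
    intro t htp
    rw [← ENNReal.ofReal_mul (Real.exp_nonneg _)]
    exact ENNReal.ofReal_le_ofReal (kernel_pt_bound d ha hr (mem_Ioi.mp htp))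
  have step2 : (∫⁻ t in Ioi (0:ℝ),
      ENNReal.ofReal ((M * Real.exp (-(r/2)) * r ^ (-(2*a)))
        * (t ^ (a-(d:ℝ)/2) * Real.exp (-(t/2)))))
      = ENNReal.ofReal (M * Real.exp (-(r/2)) * r ^ (-(2*a))) * T := by
    rw [hT_def, ← lintegral_const_mul' _ _ ENNReal.ofReal_ne_top]
    exact lintegral_congr fun t => by rw [ENNReal.ofReal_mul (by positivity)]
  have step3 : T ≤ ENNReal.ofReal (T.toReal + 1) :=
    le_trans (le_of_eq (ENNReal.ofReal_toReal hT.ne).symm)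
      (ENNReal.ofReal_le_ofReal (by linarith))
  calc Gres d r ≤ _ := step1
    _ = _ := step2
    _ ≤ ENNReal.ofReal (M * Real.exp (-(r/2)) * r ^ (-(2*a)))
          * ENNReal.ofReal (T.toReal + 1) := mul_le_mul_right step3 _
    _ = ENNReal.ofReal (M * (T.toReal + 1) * Real.exp (-(r/2)) * r ^ (-(2*a))) := by
        rw [← ENNReal.ofReal_mul (by positivity)]
        congr 1
        ring

lemma Gres_ge (d : ℕ) {r : ℝ} (hr : 0 < r) (hr1 : r ≤ 1) :
    ENNReal.ofReal (Real.exp (-(5/2)) * (4*Real.pi) ^ (-(d:ℝ)/2) * r ^ ((2:ℝ) - d))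
      ≤ Gres d r := by
  have hr2 : (0:ℝ) < r^2 := by positivity
  have hsub : Ioc (r^2) (2*r^2) ⊆ Ioi (0:ℝ) := fun t ht => lt_trans hr2 ht.1
  have step0 : ∫⁻ t in Ioc (r^2) (2*r^2), ENNReal.ofReal (Real.exp (-(1 * t))) *
      ENNReal.ofReal ((2 * Real.pi * t) ^ (-(d:ℝ) / 2) * Real.exp (-(r ^ 2) / (2 * t)))
      ≤ Gres d r := lintegral_mono_set hsub
  refine le_trans ?_ step0
  have key : ∀ t ∈ Ioc (r^2) (2*r^2),
      ENNReal.ofReal (Real.exp (-2) * ((2*Real.pi*(2*r^2)) ^ (-(d:ℝ)/2) * Real.exp (-(1/2))))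
        ≤ ENNReal.ofReal (Real.exp (-(1 * t))) *
          ENNReal.ofReal ((2 * Real.pi * t) ^ (-(d:ℝ) / 2) * Real.exp (-(r ^ 2) / (2 * t))) := by
    intro t ht
    have ht0 : 0 < t := lt_trans hr2 ht.1
    rw [← ENNReal.ofReal_mul (Real.exp_nonneg _)]
    apply ENNReal.ofReal_le_ofReal
    have h1 : Real.exp (-2) ≤ Real.exp (-(1*t)) := by
      apply Real.exp_le_exp.mpr
      nlinarith [ht.2, hr1, hr.le]
    have h2 : (2*Real.pi*(2*r^2)) ^ (-(d:ℝ)/2) ≤ (2*Real.pi*t) ^ (-(d:ℝ)/2) := by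
      apply Real.rpow_le_rpow_of_nonpos (by positivity)
      · nlinarith [ht.2, Real.pi_pos]
      · rw [neg_div, neg_nonpos]
        positivity
    have h3 : Real.exp (-(1/2)) ≤ Real.exp (-(r^2) / (2*t)) := by
      apply Real.exp_le_exp.mpr
      rw [neg_div, neg_le_neg_iff, div_le_div_iff₀ (by positivity) (by norm_num)]
      nlinarith [ht.1]
    exact mul_le_mul h1 (mul_le_mul h2 h3 (Real.exp_nonneg _) (by positivity))
      (by positivity) (Real.exp_nonneg _)
  refine le_trans (le_of_eq ?_) (setLIntegral_mono' measurableSet_Ioc key)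
  rw [setLIntegral_const, Real.volume_Ioc]
  rw [show 2*r^2 - r^2 = r^2 from by ring]
  rw [← ENNReal.ofReal_mul (by positivity)]
  congr 1
  have e1 : (2*Real.pi*(2*r^2)) ^ (-(d:ℝ)/2)
      = (4*Real.pi) ^ (-(d:ℝ)/2) * (r^2) ^ (-(d:ℝ)/2) := by
    rw [show 2*Real.pi*(2*r^2) = (4*Real.pi) * r^2 from by ring,
      Real.mul_rpow (by positivity) (by positivity)]
  symm
  rw [e1]
  have e2 : (r^2 : ℝ) ^ (-(d:ℝ)/2) * r^2 = r ^ ((2:ℝ) - d) := by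
    rw [← Real.rpow_natCast r 2, ← Real.rpow_mul hr.le, ← Real.rpow_add hr]
    congr 1
    push_cast
    ring
  calc Real.exp (-2) * ((4*Real.pi) ^ (-(d:ℝ)/2) * (r^2) ^ (-(d:ℝ)/2) * Real.exp (-(1/2))) * r^2
      = (Real.exp (-2) * Real.exp (-(1/2))) * (4*Real.pi) ^ (-(d:ℝ)/2)
          * ((r^2) ^ (-(d:ℝ)/2) * r^2) := by ring
    _ = Real.exp (-(5/2)) * (4*Real.pi) ^ (-(d:ℝ)/2) * r ^ ((2:ℝ) - d) := by
        rw [← Real.exp_add, e2]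
        norm_num

/-! ### The two main halves -/

lemma main_fin (d : ℕ) (hd : 1 ≤ d) {p : ℝ} (hp : 1 ≤ p)
    (hcond : 0 < (d:ℝ) - p * ((d:ℝ) - 2)) :
    (∫⁻ y : EuclideanSpace ℝ (Fin d), Gres d ‖y‖ ^ p) < ⊤ := by
  have hp0 : (0:ℝ) < p := lt_of_lt_of_le one_pos hp
  have hd1 : (1:ℝ) ≤ d := by exact_mod_cast hd
  have hd0 : (0:ℝ) < d := by linarith
  set m : ℝ := max 0 ((d:ℝ)/2 - 1) with hm_def
  set a : ℝ := (m + (d:ℝ)/(2*p))/2 with ha_def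
  have hm0 : 0 ≤ m := le_max_left _ _
  have hme : (d:ℝ)/2 - 1 ≤ m := le_max_right _ _
  have hdp : 0 < (d:ℝ)/(2*p) := by positivity
  have hmax : m < (d:ℝ)/(2*p) := by
    rw [hm_def, max_lt_iff]
    constructor
    · exact hdp
    · rw [lt_div_iff₀ (by positivity)]
      nlinarith
  have ha : 0 < a := by rw [ha_def]; linarith
  have has : -1 < a - (d:ℝ)/2 := by rw [ha_def]; linarith
  have haq : 2*a*p < (d:ℝ) := by
    have ha' : a < (d:ℝ)/(2*p) := by rw [ha_def]; linarith
    have h2 := mul_lt_mul_of_pos_right ha' (by positivity : (0:ℝ) < 2*p)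
    rw [div_mul_cancel₀ _ (by positivity : (2*p) ≠ 0)] at h2
    nlinarith
  obtain ⟨K, hK, hG⟩ := Gres_le d ha has
  haveI : Nonempty (Fin d) := ⟨⟨0, hd⟩⟩
  haveI : Nontrivial (EuclideanSpace ℝ (Fin d)) := inferInstance
  have hae : ∀ᵐ y : EuclideanSpace ℝ (Fin d) ∂volume, Gres d ‖y‖ ^ p ≤
      ENNReal.ofReal ((K ^ p * Real.exp (-(p/2 * ‖y‖))) * ‖y‖ ^ (-(2*a*p))) := by
    have h0 : volume ({(0:EuclideanSpace ℝ (Fin d))} : Set _) = 0 := measure_singleton _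
    filter_upwards [compl_mem_ae_iff.mpr h0] with y hy
    have hn : 0 < ‖y‖ := norm_pos_iff.2 (by simpa using hy)
    calc Gres d ‖y‖ ^ p
        ≤ (ENNReal.ofReal (K * Real.exp (-(‖y‖/2)) * ‖y‖ ^ (-(2*a)))) ^ p :=
          ENNReal.rpow_le_rpow (hG _ hn) hp0.le
      _ = ENNReal.ofReal ((K * Real.exp (-(‖y‖/2)) * ‖y‖ ^ (-(2*a))) ^ p) :=
          ENNReal.ofReal_rpow_of_nonneg (by positivity) hp0.le
      _ = ENNReal.ofReal ((K ^ p * Real.exp (-(p/2 * ‖y‖))) * ‖y‖ ^ (-(2*a*p))) := by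
          congr 1
          rw [Real.mul_rpow (by positivity) (Real.rpow_nonneg hn.le _),
            Real.mul_rpow hK.le (Real.exp_nonneg _),
            ← Real.exp_mul, ← Real.rpow_mul hn.le]
          rw [show -(‖y‖/2) * p = -(p/2 * ‖y‖) from by ring,
            show -(2*a) * p = -(2*a*p) from by ring]
  refine lt_of_le_of_lt (lintegral_mono_ae hae) ?_
  rw [← lintegral_add_compl (fun y : EuclideanSpace ℝ (Fin d) =>
    ENNReal.ofReal ((K ^ p * Real.exp (-(p/2 * ‖y‖))) * ‖y‖ ^ (-(2*a*p))))
    (measurableSet_ball : MeasurableSet (Metric.ball (0:EuclideanSpace ℝ (Fin d)) 1))]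
  refine ENNReal.add_lt_top.2 ⟨?_, ?_⟩
  · calc ∫⁻ y in Metric.ball (0:EuclideanSpace ℝ (Fin d)) 1,
        ENNReal.ofReal ((K ^ p * Real.exp (-(p/2 * ‖y‖))) * ‖y‖ ^ (-(2*a*p)))
        ≤ ∫⁻ y in Metric.ball (0:EuclideanSpace ℝ (Fin d)) 1,
            ENNReal.ofReal (K ^ p) * ENNReal.ofReal (‖y‖ ^ (-(2*a*p))) := by
          apply setLIntegral_mono' measurableSet_ball
          intro y _
          rw [← ENNReal.ofReal_mul (by positivity)]
          apply ENNReal.ofReal_le_ofReal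
          have hexp : Real.exp (-(p/2 * ‖y‖)) ≤ 1 := by
            apply Real.exp_le_one_iff.mpr
            rw [neg_nonpos]
            positivity
          calc K ^ p * Real.exp (-(p/2 * ‖y‖)) * ‖y‖ ^ (-(2*a*p))
              ≤ K ^ p * 1 * ‖y‖ ^ (-(2*a*p)) := by
                gcongr
            _ = K ^ p * ‖y‖ ^ (-(2*a*p)) := by ring
      _ = ENNReal.ofReal (K ^ p) * ∫⁻ y in Metric.ball (0:EuclideanSpace ℝ (Fin d)) 1,
            ENNReal.ofReal (‖y‖ ^ (-(2*a*p))) := lintegral_const_mul' _ _ ENNReal.ofReal_ne_top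
      _ < ⊤ := ENNReal.mul_lt_top ENNReal.ofReal_lt_top
          (finite_ball_rpow d (by positivity) haq)
  · calc ∫⁻ y in (Metric.ball (0:EuclideanSpace ℝ (Fin d)) 1)ᶜ,
        ENNReal.ofReal ((K ^ p * Real.exp (-(p/2 * ‖y‖))) * ‖y‖ ^ (-(2*a*p)))
        ≤ ∫⁻ y in (Metric.ball (0:EuclideanSpace ℝ (Fin d)) 1)ᶜ,
            ENNReal.ofReal (K ^ p) * ENNReal.ofReal (Real.exp (-(p/2 * ‖y‖))) := by
          apply setLIntegral_mono' measurableSet_ball.compl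
          intro y hy
          rw [← ENNReal.ofReal_mul (by positivity)]
          apply ENNReal.ofReal_le_ofReal
          have h1 : 1 ≤ ‖y‖ := by
            have := hy
            simp only [mem_compl_iff, Metric.mem_ball, dist_zero_right, not_lt] at this
            exact this
          have hrp : ‖y‖ ^ (-(2*a*p)) ≤ 1 :=
            Real.rpow_le_one_of_one_le_of_nonpos h1 (by rw [neg_nonpos]; positivity)
          calc K ^ p * Real.exp (-(p/2 * ‖y‖)) * ‖y‖ ^ (-(2*a*p))
              ≤ (K ^ p * Real.exp (-(p/2 * ‖y‖))) * 1 := by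
                gcongr
            _ = K ^ p * Real.exp (-(p/2 * ‖y‖)) := by ring
      _ ≤ ENNReal.ofReal (K ^ p) * ∫⁻ y : EuclideanSpace ℝ (Fin d),
            ENNReal.ofReal (Real.exp (-(p/2 * ‖y‖))) := by
          rw [lintegral_const_mul' _ _ ENNReal.ofReal_ne_top]
          exact mul_le_mul_right (setLIntegral_le_lintegral _ _) _
      _ < ⊤ := ENNReal.mul_lt_top ENNReal.ofReal_lt_top (finite_exp_int d (by positivity))

lemma main_inf (d : ℕ) (hd : 1 ≤ d) {p : ℝ} (hp : 1 ≤ p)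
    (hq : (d:ℝ) ≤ p * ((d:ℝ) - 2)) :
    (∫⁻ y : EuclideanSpace ℝ (Fin d), Gres d ‖y‖ ^ p) = ⊤ := by
  have hp0 : (0:ℝ) < p := lt_of_lt_of_le one_pos hp
  haveI : Nonempty (Fin d) := ⟨⟨0, hd⟩⟩
  haveI : Nontrivial (EuclideanSpace ℝ (Fin d)) := inferInstance
  set c : ℝ := Real.exp (-(5/2)) * (4*Real.pi) ^ (-(d:ℝ)/2) with hc_def
  have hc0 : 0 < c := by rw [hc_def]; positivity
  rw [eq_top_iff]
  calc (⊤:ℝ≥0∞) = ENNReal.ofReal (c^p) * ∫⁻ y in Metric.ball (0:EuclideanSpace ℝ (Fin d)) 1,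
        ENNReal.ofReal (‖y‖ ^ (-(p*((d:ℝ)-2)))) := by
        rw [infinite_ball_rpow d hd hq, ENNReal.mul_top]
        exact (ENNReal.ofReal_pos.2 (by positivity)).ne'
    _ = ∫⁻ y in Metric.ball (0:EuclideanSpace ℝ (Fin d)) 1,
          ENNReal.ofReal (c^p) * ENNReal.ofReal (‖y‖ ^ (-(p*((d:ℝ)-2)))) :=
        (lintegral_const_mul' _ _ ENNReal.ofReal_ne_top).symm
    _ ≤ ∫⁻ y in Metric.ball (0:EuclideanSpace ℝ (Fin d)) 1, Gres d ‖y‖ ^ p := by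
        apply lintegral_mono_ae
        have h0 : volume ({(0:EuclideanSpace ℝ (Fin d))} : Set _) = 0 := measure_singleton _
        filter_upwards [ae_restrict_mem measurableSet_ball,
          ae_restrict_of_ae (compl_mem_ae_iff.mpr h0)] with y hy1 hy2
        have hn : 0 < ‖y‖ := norm_pos_iff.2 (by simpa using hy2)
        have hlt : ‖y‖ < 1 := by
          simpa [Metric.mem_ball, dist_zero_right] using hy1
        have heq : ENNReal.ofReal (c^p) * ENNReal.ofReal (‖y‖ ^ (-(p*((d:ℝ)-2))))
            = (ENNReal.ofReal (c * ‖y‖ ^ ((2:ℝ) - d))) ^ p := by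
          rw [ENNReal.ofReal_rpow_of_nonneg (by positivity) hp0.le]
          rw [← ENNReal.ofReal_mul (by positivity)]
          congr 1
          rw [Real.mul_rpow hc0.le (Real.rpow_nonneg hn.le _), ← Real.rpow_mul hn.le]
          rw [show ((2:ℝ) - d) * p = -(p*((d:ℝ)-2)) from by ring]
        rw [heq]
        exact ENNReal.rpow_le_rpow (Gres_ge d hn hlt.le) hp0.le
    _ ≤ ∫⁻ y : EuclideanSpace ℝ (Fin d), Gres d ‖y‖ ^ p :=
        setLIntegral_le_lintegral _ _

theorem stmt_12 (d : ℕ) (hd : 1 ≤ d) (p : ℝ) (hp : 1 ≤ p) :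
    (⨆ x : EuclideanSpace ℝ (Fin d),
        ∫⁻ y, gaussianResolvent d 1 x y ^ p ∂(volume)) < ⊤
      ↔ 0 < (d:ℝ) - p * ((d:ℝ) - 2) := by
  have hrw : ∀ x : EuclideanSpace ℝ (Fin d),
      (∫⁻ y, gaussianResolvent d 1 x y ^ p ∂(volume))
        = ∫⁻ y : EuclideanSpace ℝ (Fin d), Gres d ‖y‖ ^ p := by
    intro x
    have h1 : ∀ y : EuclideanSpace ℝ (Fin d),
        gaussianResolvent d 1 x y = Gres d ‖y - x‖ := by
      intro y
      show Gres d (dist x y) = Gres d ‖y - x‖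
      rw [dist_comm, dist_eq_norm]
    simp_rw [h1]
    exact lintegral_sub_right_eq_self
      (fun z : EuclideanSpace ℝ (Fin d) => Gres d ‖z‖ ^ p) x
  rw [show (⨆ x : EuclideanSpace ℝ (Fin d),
      ∫⁻ y, gaussianResolvent d 1 x y ^ p ∂(volume))
      = ∫⁻ y : EuclideanSpace ℝ (Fin d), Gres d ‖y‖ ^ p from by
    simp_rw [hrw]; exact iSup_const]
  constructor
  · intro hfin
    by_contra hcond
    push_neg at hcond
    have hq : (d:ℝ) ≤ p * ((d:ℝ) - 2) := by linarith
    rw [main_inf d hd hp hq] at hfin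
    exact absurd hfin (lt_irrefl ⊤)
  · intro hcond
    exact main_fin d hd hp hcond
end
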